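/- arXiv:0902.2274 — 7 statements merged into one kernel-verified Lean document; each statement's English description precedes it below -/
import Mathlib

section
/- Fix an integer a ≥ 2 and an integer m ≥ 1. The set of right 0-pyramids of size m and the set of positive (a·m, m)-strings have the same cardinality. -/
/-- A pyramid made of horizontal pieces of length `a`. -/
def IsPyramid (a : ℕ) (P : Finset (ℤ × ℕ)) : Prop :=
  ((0 : ℤ), (0 : ℕ)) ∈ P ∧
  (∀ p ∈ P, p.2 = 0 → p = ((0 : ℤ), (0 : ℕ))) ∧
  (∀ p ∈ P, ∀ q ∈ P, p.2 = q.2 → p ≠ q → (a : ℤ) ≤ |p.1 - q.1|) ∧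
  (∀ p ∈ P, 1 ≤ p.2 → ∃ q ∈ P, q.2 = p.2 - 1 ∧ |p.1 - q.1| ≤ (a : ℤ) - 1)

/-- A right `0`-pyramid: a pyramid whose bottom piece is a leftmost piece. -/
def IsRightPyramid (a : ℕ) (P : Finset (ℤ × ℕ)) : Prop :=
  IsPyramid a P ∧ ∀ p ∈ P, 0 ≤ p.1

/-- An `(n, m)`-string: a sequence of `0`s and `1`s of length `n` (modelled as a
function `ℕ → Bool` vanishing from position `n` on) with exactly `m` ones. -/
def IsString (n m : ℕ) (x : ℕ → Bool) : Prop :=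
  (∀ u, n ≤ u → x u = false) ∧
    ((Finset.range n).filter (fun u => x u = true)).card = m

/-- Positivity of a string of length `n` (pieces of length `a`): all partial sums
`t_s = Σ_{u<s} (a·x_u − 1)` with `1 ≤ s ≤ n` are nonnegative. -/
def IsPositive (a n : ℕ) (x : ℕ → Bool) : Prop :=
  ∀ s, 1 ≤ s → s ≤ n →
    0 ≤ ∑ u ∈ Finset.range s, ((a : ℤ) * (if x u then 1 else 0) - 1)

namespace RPS

/-- Height at which a new piece at position `v` lands on the pile `P`. -/
def newH (a : ℕ) (P : Finset (ℤ × ℕ)) (v : ℤ) : ℕ :=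
  P.sup fun p => if |v - p.1| ≤ (a : ℤ) - 1 then p.2 + 1 else 0

/-- Drop pieces (newest-first list of positions) onto the pile. -/
def fall (a : ℕ) : List ℕ → Finset (ℤ × ℕ)
  | [] => ∅
  | v :: r => insert ((v : ℤ), newH a (fall a r) (v : ℤ)) (fall a r)

/-- Valid drop sequences (newest first): adjacent rises bounded, oldest value `0`. -/
def VSeq (a : ℕ) (r : List ℕ) : Prop :=
  r.getLast? = some 0 ∧ List.Chain' (fun u v => u ≤ v + (a - 1)) r

/-- `p` is uncovered in `P` : no overlapping piece strictly above it. -/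
def Uncov (a : ℕ) (P : Finset (ℤ × ℕ)) (p : ℤ × ℕ) : Prop :=
  ∀ q ∈ P, |q.1 - p.1| ≤ (a : ℤ) - 1 → q.2 ≤ p.2

variable {a : ℕ}

lemma VSeq.ne_nil {r : List ℕ} (h : VSeq a r) : r ≠ [] := by
  rintro rfl; simp [VSeq] at h

lemma VSeq.tail {v : ℕ} {r : List ℕ} (h : VSeq a (v :: r)) (hr : r ≠ []) : VSeq a r := by
  obtain ⟨h1, h2⟩ := h
  cases r with
  | nil => exact absurd rfl hr
  | cons w t => exact ⟨by rwa [List.getLast?_cons_cons] at h1, h2.tail⟩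

lemma VSeq.head_le {v w : ℕ} {r : List ℕ} (h : VSeq a (v :: r)) (hw : r.head? = some w) :
    v ≤ w + (a - 1) := by
  obtain ⟨-, h2⟩ := h
  cases r with
  | nil => simp at hw
  | cons u t => rw [List.head?_cons] at hw; obtain rfl := Option.some_injective _ hw
                exact (List.isChain_cons_cons.1 h2).1

lemma newH_ge_of_mem {P : Finset (ℤ × ℕ)} {p : ℤ × ℕ} {v : ℤ}
    (hp : p ∈ P) (hov : |v - p.1| ≤ (a : ℤ) - 1) : p.2 + 1 ≤ newH a P v := by
  have h2 := Finset.le_sup (f := fun p : ℤ × ℕ => if |v - p.1| ≤ (a : ℤ) - 1 then p.2 + 1 else 0) hp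
  rw [newH]
  simp only [if_pos hov] at h2; exact h2

lemma not_new_mem (ha : 1 ≤ a) (P : Finset (ℤ × ℕ)) (v : ℤ) :
    ((v, newH a P v) : ℤ × ℕ) ∉ P := by
  intro hmem
  have : newH a P v + 1 ≤ newH a P v := by
    have h0 : |v - ((v, newH a P v) : ℤ × ℕ).1| ≤ (a : ℤ) - 1 := by
      simp only [sub_self, abs_zero]; omega
    exact newH_ge_of_mem hmem h0
  omega

lemma newH_support {P : Finset (ℤ × ℕ)} {v : ℤ} (h : 1 ≤ newH a P v) :
    ∃ p ∈ P, p.2 = newH a P v - 1 ∧ |v - p.1| ≤ (a : ℤ) - 1 := by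
  have hne : P.Nonempty := by
    rcases P.eq_empty_or_nonempty with rfl | h2
    · simp [newH] at h
    · exact h2
  obtain ⟨p, hp, hval⟩ := Finset.exists_mem_eq_sup P hne
    (fun p : ℤ × ℕ => if |v - p.1| ≤ (a : ℤ) - 1 then p.2 + 1 else 0)
  rw [newH] at h ⊢
  rw [hval] at h ⊢
  by_cases hov : |v - p.1| ≤ (a : ℤ) - 1
  · rw [if_pos hov] at h ⊢
    exact ⟨p, hp, by omega, hov⟩
  · rw [if_neg hov] at h; omega

lemma exists_piece_of_mem : ∀ (r : List ℕ) (u : ℕ), u ∈ r → ∃ h, ((u : ℤ), h) ∈ fall a r := by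
  intro r
  induction r with
  | nil => intro u hu; simp at hu
  | cons v rest ih =>
    intro u hu
    rcases List.mem_cons.1 hu with rfl | hu
    · exact ⟨_, Finset.mem_insert_self _ _⟩
    · obtain ⟨h, hh⟩ := ih u hu
      exact ⟨h, Finset.mem_insert_of_mem hh⟩

/-- Every value arriving on a valid sequence overlaps some earlier value. -/
lemma exists_overlap : ∀ (r : List ℕ), VSeq a r → ∀ w : ℕ,
    (∀ u, r.head? = some u → w ≤ u + (a - 1)) → ∃ u ∈ r, u ≤ w ∧ w ≤ u + (a - 1) := by
  intro r
  induction r with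
  | nil => intro h; exact absurd rfl h.ne_nil
  | cons u rest ih =>
    intro hv w hw
    have hwu : w ≤ u + (a - 1) := hw u rfl
    rcases le_or_gt u w with h1 | h1
    · exact ⟨u, List.mem_cons_self, h1, hwu⟩
    · cases rest with
      | nil =>
        have : u = 0 := by simpa [VSeq] using hv.1
        omega
      | cons w' t =>
        have hrne : (w' :: t) ≠ [] := by simp
        have hchain : u ≤ w' + (a - 1) := hv.head_le (by rw [List.head?_cons])
        obtain ⟨u', hu', h3, h4⟩ := ih (hv.tail hrne) w (by
          intro z hz; rw [List.head?_cons] at hz; obtain rfl := Option.some_injective _ hz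
          omega)
        exact ⟨u', List.mem_cons_of_mem _ hu', h3, h4⟩

lemma newH_pos (ha : 1 ≤ a) {v : ℕ} {rest : List ℕ} (hv : VSeq a (v :: rest))
    (hne : rest ≠ []) : 1 ≤ newH a (fall a rest) (v : ℤ) := by
  obtain ⟨u, hu, h1, h2⟩ := exists_overlap rest (hv.tail hne) v (by
    intro z hz
    exact hv.head_le hz)
  obtain ⟨h, hh⟩ := exists_piece_of_mem (a := a) rest u hu
  have hov : |(v : ℤ) - ((u : ℤ), h).1| ≤ (a : ℤ) - 1 := by
    show |(v : ℤ) - (u : ℤ)| ≤ (a : ℤ) - 1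
    rw [abs_le]
    omega
  have h9 := newH_ge_of_mem hh hov
  omega

end RPS

section Work2
namespace RPS
variable {a : ℕ}

lemma uncov_new (ha : 1 ≤ a) (Q : Finset (ℤ × ℕ)) (v : ℤ) :
    Uncov a (insert (v, newH a Q v) Q) (v, newH a Q v) := by
  intro p hp hov
  rcases Finset.mem_insert.1 hp with rfl | hpQ
  · exact le_refl _
  · have hov' : |v - p.1| ≤ (a : ℤ) - 1 := by
      have : |p.1 - v| ≤ (a : ℤ) - 1 := hov
      rwa [abs_sub_comm] at this
    have h9 := newH_ge_of_mem hpQ hov'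
    show p.2 ≤ newH a Q v
    omega

lemma uncov_unique (Q : Finset (ℤ × ℕ)) {v : ℤ} {p : ℤ × ℕ}
    (hp : p ∈ insert (v, newH a Q v) Q) (hu : Uncov a (insert (v, newH a Q v) Q) p)
    (hpv : p.1 = v) (ha : 1 ≤ a) : p = (v, newH a Q v) := by
  rcases Finset.mem_insert.1 hp with h | hpQ
  · exact h
  · exfalso
    have h1 : p.2 + 1 ≤ newH a Q v := newH_ge_of_mem hpQ (by
      rw [hpv, sub_self, abs_zero]; omega)
    have h2 : newH a Q v ≤ p.2 := hu (v, newH a Q v) (Finset.mem_insert_self _ _) (by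
      show |v - p.1| ≤ (a : ℤ) - 1
      rw [hpv, sub_self, abs_zero]; omega)
    omega

lemma fall_spec (ha : 2 ≤ a) : ∀ (rest : List ℕ) (v : ℕ), VSeq a (v :: rest) →
    IsRightPyramid a (fall a (v :: rest)) ∧ (fall a (v :: rest)).card = rest.length + 1 ∧
      (∀ p ∈ fall a (v :: rest), Uncov a (fall a (v :: rest)) p → (v : ℤ) ≤ p.1) := by
  intro rest
  induction rest with
  | nil =>
    intro v hv
    have hv0 : v = 0 := by simpa [VSeq] using hv.1
    subst hv0
    have hfall : fall a [0] = {((0 : ℤ), (0 : ℕ))} := by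
      simp [fall, newH]
    rw [hfall]
    refine ⟨⟨⟨by simp, ?_, ?_, ?_⟩, ?_⟩, by simp, ?_⟩
    · intro p hp _; simpa using hp
    · intro p hp q hq _ hne
      simp only [Finset.mem_singleton] at hp hq
      exact absurd (hp.trans hq.symm) hne
    · intro p hp h1
      simp only [Finset.mem_singleton] at hp
      subst hp; simp at h1
    · intro p hp; simp only [Finset.mem_singleton] at hp; subst hp; simp
    · intro p hp _; simp only [Finset.mem_singleton] at hp; subst hp; simp
  | cons w rest' ih =>
    intro v hv
    have hne : (w :: rest') ≠ [] := by simp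
    obtain ⟨⟨hbase, hax2, hax3, hax4⟩, hright⟩ := (ih w (hv.tail hne)).1
    have hcard := (ih w (hv.tail hne)).2.1
    have hunc := (ih w (hv.tail hne)).2.2
    set Q := fall a (w :: rest') with hQdef
    set H := newH a Q (v : ℤ) with hHdef
    have hfall : fall a (v :: w :: rest') = insert ((v : ℤ), H) Q := rfl
    have hH : 1 ≤ H := newH_pos (by omega) hv hne
    have hqQ : ((v : ℤ), H) ∉ Q := by rw [hHdef]; exact not_new_mem (by omega) Q _
    rw [hfall]
    refine ⟨⟨⟨Finset.mem_insert_of_mem hbase, ?_, ?_, ?_⟩, ?_⟩, ?_, ?_⟩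
    · -- axiom 2
      intro p hp hp0
      rcases Finset.mem_insert.1 hp with rfl | hpQ
      · exact absurd hp0 (by show H ≠ 0; omega)
      · exact hax2 p hpQ hp0
    · -- axiom 3: spacing
      intro p hp q hq heq hne2
      rcases Finset.mem_insert.1 hp with rfl | hpQ <;>
        rcases Finset.mem_insert.1 hq with rfl | hqQ2
      · exact absurd rfl hne2
      · show (a : ℤ) ≤ |(v : ℤ) - q.1|
        by_contra hcon
        have hov : |(v : ℤ) - q.1| ≤ (a : ℤ) - 1 := by
          have := abs_nonneg ((v : ℤ) - q.1)
          omega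
        have h9 := newH_ge_of_mem hqQ2 hov
        have heq' : H = q.2 := heq
        omega
      · show (a : ℤ) ≤ |p.1 - (v : ℤ)|
        by_contra hcon
        have hov : |(v : ℤ) - p.1| ≤ (a : ℤ) - 1 := by
          rw [abs_sub_comm] at hcon
          have := abs_nonneg ((v : ℤ) - p.1)
          omega
        have h9 := newH_ge_of_mem hpQ hov
        have heq' : p.2 = H := heq
        omega
      · exact hax3 p hpQ q hqQ2 heq hne2
    · -- axiom 4: support
      intro p hp hp1
      rcases Finset.mem_insert.1 hp with rfl | hpQ
      · obtain ⟨s, hs, hs2, hs3⟩ := newH_support (a := a) hH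
        exact ⟨s, Finset.mem_insert_of_mem hs, hs2, hs3⟩
      · obtain ⟨s, hs, hs2, hs3⟩ := hax4 p hpQ hp1
        exact ⟨s, Finset.mem_insert_of_mem hs, hs2, hs3⟩
    · -- right: positions nonneg
      intro p hp
      rcases Finset.mem_insert.1 hp with rfl | hpQ
      · show (0 : ℤ) ≤ (v : ℕ); simp
      · exact hright p hpQ
    · -- card
      rw [Finset.card_insert_of_notMem hqQ, hcard]
      simp
    · -- uncovered invariant
      intro p hp hu
      rcases Finset.mem_insert.1 hp with rfl | hpQ
      · exact le_refl _
      · have huQ : Uncov a Q p := fun q' hq' hov => hu q' (Finset.mem_insert_of_mem hq') hov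
        have hwp : (w : ℤ) ≤ p.1 := hunc p hpQ huQ
        by_contra hcon
        push_neg at hcon
        have hchain : v ≤ w + (a - 1) := hv.head_le (by rw [List.head?_cons])
        have hov : |(v : ℤ) - p.1| ≤ (a : ℤ) - 1 := by
          rw [abs_le]; omega
        have h1 := newH_ge_of_mem hpQ hov
        have h2 : H ≤ p.2 := hu ((v : ℤ), H) (Finset.mem_insert_self _ _) (by
          show |(v : ℤ) - p.1| ≤ (a : ℤ) - 1; exact hov)
        omega

end RPS
end Work2

section Work3
namespace RPS
variable {a : ℕ}

lemma fall_card (ha : 2 ≤ a) {r : List ℕ} (hr : VSeq a r) : (fall a r).card = r.length := by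
  cases r with
  | nil => exact absurd rfl hr.ne_nil
  | cons v rest => simpa using (fall_spec ha rest v hr).2.1

lemma fall_inj (ha : 2 ≤ a) : ∀ (r r' : List ℕ), VSeq a r → VSeq a r' →
    fall a r = fall a r' → r = r' := by
  intro r
  induction r with
  | nil => intro r' hr; exact absurd rfl hr.ne_nil
  | cons v rest ih =>
    intro r' hr hr' heq
    cases r' with
    | nil => exact absurd rfl hr'.ne_nil
    | cons v' rest' =>
      set Q := fall a rest with hQ
      set Q' := fall a rest' with hQ'
      set q : ℤ × ℕ := ((v : ℤ), newH a Q (v : ℤ)) with hq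
      set q' : ℤ × ℕ := ((v' : ℤ), newH a Q' (v' : ℤ)) with hq'
      have hfall : fall a (v :: rest) = insert q Q := rfl
      have hfall' : fall a (v' :: rest') = insert q' Q' := rfl
      have hins : insert q Q = insert q' Q' := by rw [← hfall, ← hfall']; exact heq
      have hq'mem : q' ∈ insert q Q := by rw [hins]; exact Finset.mem_insert_self _ _
      have hqmem : q ∈ insert q' Q' := by rw [← hins]; exact Finset.mem_insert_self _ _
      have huq'' : Uncov a (insert q Q) q' := by
        rw [hins]; exact uncov_new (by omega) Q' (v' : ℤ)
      have huq2 : Uncov a (insert q' Q') q := by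
        rw [← hins]; exact uncov_new (by omega) Q (v : ℤ)
      have hv1 : (v : ℤ) ≤ (v' : ℤ) :=
        (fall_spec ha rest v hr).2.2 q' (by rw [hfall]; exact hq'mem) (by rw [hfall]; exact huq'')
      have hv2 : (v' : ℤ) ≤ (v : ℤ) :=
        (fall_spec ha rest' v' hr').2.2 q (by rw [hfall']; exact hqmem) (by rw [hfall']; exact huq2)
      have hvv : v = v' := by exact_mod_cast le_antisymm hv1 hv2
      subst hvv
      have hq'q : q' = q := uncov_unique Q hq'mem huq'' rfl (by omega : 1 ≤ a)
      have hQQ' : Q = Q' := by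
        have h1 : q ∉ Q := not_new_mem (by omega) Q _
        have h2 : q ∉ Q' := by rw [← hq'q]; exact not_new_mem (by omega) Q' _
        calc Q = (insert q Q).erase q := (Finset.erase_insert h1).symm
        _ = (insert q Q').erase q := by rw [hins, hq'q]
        _ = Q' := Finset.erase_insert h2
      -- now handle tails
      cases rest with
      | nil =>
        cases rest' with
        | nil => rfl
        | cons w' t' =>
          exfalso
          have : Q'.card = t'.length + 1 := by
            rw [hQ']; exact fall_card ha (hr'.tail (by simp))
          rw [← hQQ'] at this
          simp [hQ, fall] at this
      | cons w t =>
        cases rest' with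
        | nil =>
          exfalso
          have : Q.card = t.length + 1 := by
            rw [hQ]; exact fall_card ha (hr.tail (by simp))
          rw [hQQ'] at this
          simp [hQ', fall] at this
        | cons w' t' =>
          have := ih (w' :: t') (hr.tail (by simp)) (hr'.tail (by simp)) (by
            rw [hQQ'])
          rw [this]

lemma fall_surj (ha : 2 ≤ a) : ∀ (m : ℕ) (P : Finset (ℤ × ℕ)), IsRightPyramid a P →
    P.card = m → ∃ r : List ℕ, VSeq a r ∧ r.length = m ∧ fall a r = P := by
  intro m
  induction m using Nat.strong_induction_on with
  | _ m ihm =>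
    intro P hP hcard
    obtain ⟨⟨hbase, hax2, hax3, hax4⟩, hright⟩ := hP
    match m, hcard with
    | 0, hcard =>
      exfalso
      rw [Finset.card_eq_zero.1 hcard] at hbase
      simp at hbase
    | 1, hcard =>
      obtain ⟨x, hx⟩ := Finset.card_eq_one.1 hcard
      have hx0 : x = ((0 : ℤ), (0 : ℕ)) := by
        have h9 := hbase; rw [hx] at h9
        exact (Finset.mem_singleton.1 h9).symm
      refine ⟨[0], ⟨by simp, by simp [List.Chain']⟩, by simp, ?_⟩
      rw [hx, hx0]
      simp [fall, newH]
    | (k + 2), hcard =>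
      -- pick the leftmost uncovered piece p₀
      classical
      have hPne : P.Nonempty := ⟨_, hbase⟩
      obtain ⟨p₁, hp₁, hp₁max⟩ := Finset.exists_max_image P (fun p => p.2) hPne
      have hp₁unc : Uncov a P p₁ := fun q hq _ => hp₁max q hq
      set U := P.filter (fun p => Uncov a P p) with hU
      have hUne : U.Nonempty := ⟨p₁, Finset.mem_filter.2 ⟨hp₁, hp₁unc⟩⟩
      obtain ⟨p₀, hp₀U, hp₀min⟩ := Finset.exists_min_image U (fun p => p.1) hUne
      obtain ⟨hp₀P, hp₀unc⟩ := Finset.mem_filter.1 hp₀U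
      -- the base is covered, so p₀ is not the base
      have hcov0 : ¬ Uncov a P ((0 : ℤ), (0 : ℕ)) := by
        -- there is a piece at height 1 over the base
        have h2 : ∃ p ∈ P, 1 ≤ p.2 := by
          have hgt : 1 < P.card := by omega
          obtain ⟨b, hb, hbne⟩ := Finset.exists_mem_ne hgt ((0 : ℤ), (0 : ℕ))
          refine ⟨b, hb, ?_⟩
          rcases Nat.eq_zero_or_pos b.2 with h | h
          · exact absurd (hax2 b hb h) hbne
          · exact h
        set S := P.filter (fun p => 1 ≤ p.2) with hS
        have hSne : S.Nonempty := by
          obtain ⟨p, hp, h1⟩ := h2; exact ⟨p, Finset.mem_filter.2 ⟨hp, h1⟩⟩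
        obtain ⟨q₁, hq₁S, hq₁min⟩ := Finset.exists_min_image S (fun p => p.2) hSne
        obtain ⟨hq₁P, hq₁pos⟩ := Finset.mem_filter.1 hq₁S
        have hq₁1 : q₁.2 = 1 := by
          by_contra hne1
          obtain ⟨s, hs, hs2, _⟩ := hax4 q₁ hq₁P hq₁pos
          have hs1 : 1 ≤ s.2 := by omega
          have := hq₁min s (Finset.mem_filter.2 ⟨hs, hs1⟩)
          omega
        obtain ⟨s, hs, hs2, hs3⟩ := hax4 q₁ hq₁P hq₁pos
        have hs00 : s = ((0 : ℤ), (0 : ℕ)) := hax2 s hs (by omega)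
        intro hunc
        have := hunc q₁ hq₁P (by
          rw [hs00] at hs3
          simpa [abs_sub_comm] using hs3)
        omega
      have hp₀ne : p₀ ≠ ((0 : ℤ), (0 : ℕ)) := fun h => hcov0 (h ▸ hp₀unc)
      have hp₀h : 1 ≤ p₀.2 := by
        rcases Nat.eq_zero_or_pos p₀.2 with h | h
        · exact absurd (hax2 p₀ hp₀P h) hp₀ne
        · exact h
      -- erase p₀
      set P' := P.erase p₀ with hP'
      have hP'pyr : IsRightPyramid a P' := by
        refine ⟨⟨Finset.mem_erase.2 ⟨fun h => hp₀ne h.symm, hbase⟩, ?_, ?_, ?_⟩, ?_⟩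
        · exact fun p hp h0 => hax2 p (Finset.mem_of_mem_erase hp) h0
        · exact fun p hp q hq h1 h2 =>
            hax3 p (Finset.mem_of_mem_erase hp) q (Finset.mem_of_mem_erase hq) h1 h2
        · intro p hp h1
          obtain ⟨s, hs, hs2, hs3⟩ := hax4 p (Finset.mem_of_mem_erase hp) h1
          refine ⟨s, Finset.mem_erase.2 ⟨?_, hs⟩, hs2, hs3⟩
          rintro rfl
          have h9 := hp₀unc p (Finset.mem_of_mem_erase hp) hs3
          omega
        · exact fun p hp => hright p (Finset.mem_of_mem_erase hp)
      have hcard' : P'.card = k + 1 := by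
        rw [hP', Finset.card_erase_of_mem hp₀P, hcard]
        omega
      obtain ⟨r', hr', hlen', hfall'⟩ := ihm (k + 1) (by omega) P' hP'pyr hcard'
      cases r' with
      | nil => simp at hlen'
      | cons v' rest' =>
        -- the head piece of P'
        set Q' := fall a rest' with hQ'
        set q' : ℤ × ℕ := ((v' : ℤ), newH a Q' (v' : ℤ)) with hq'd
        have hfq : fall a (v' :: rest') = insert q' Q' := rfl
        have hq'P' : q' ∈ P' := by rw [← hfall', hfq]; exact Finset.mem_insert_self _ _
        have hq'unc : Uncov a P' q' := by
          rw [← hfall', hfq]; exact uncov_new (by omega) Q' _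
        -- the chain bound
        have hσ : 0 ≤ p₀.1 := hright p₀ hp₀P
        have hbound : p₀.1 ≤ (v' : ℤ) + (a : ℤ) - 1 := by
          by_contra hcon
          push_neg at hcon
          have hq'uncP : Uncov a P q' := by
            intro z hz hov
            rcases eq_or_ne z p₀ with rfl | hzne
            · exfalso
              have h1 : q'.1 = (v' : ℤ) := rfl
              have h2 := abs_nonneg (z.1 - q'.1)
              rw [h1] at hov
              rw [abs_le] at hov
              omega
            · exact hq'unc z (Finset.mem_erase.2 ⟨hzne, hz⟩) hov
          have hq'U : q' ∈ U := Finset.mem_filter.2 ⟨Finset.mem_of_mem_erase hq'P', hq'uncP⟩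
          have := hp₀min q' hq'U
          have h1 : q'.1 = (v' : ℤ) := rfl
          omega
        -- the new piece over P' at position p₀.1 lands exactly at p₀.2
        have hnewH : newH a P' p₀.1 = p₀.2 := by
          apply le_antisymm
          · apply Finset.sup_le
            intro p hp
            by_cases hov : |p₀.1 - p.1| ≤ (a : ℤ) - 1
            · rw [if_pos hov]
              obtain ⟨hpne, hpP⟩ := Finset.mem_erase.1 hp
              have hle : p.2 ≤ p₀.2 := hp₀unc p hpP (by rwa [abs_sub_comm] at hov)
              rcases eq_or_ne p.2 p₀.2 with heq | hne2
              · exfalso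
                have h8 := hax3 p hpP p₀ hp₀P heq hpne
                rw [abs_sub_comm p.1] at h8
                omega
              · omega
            · rw [if_neg hov]; omega
          · obtain ⟨s, hs, hs2, hs3⟩ := hax4 p₀ hp₀P hp₀h
            have hsne : s ≠ p₀ := by
              intro h; rw [h] at hs2; omega
            have hsP' : s ∈ P' := Finset.mem_erase.2 ⟨hsne, hs⟩
            have := newH_ge_of_mem hsP' hs3
            omega
        -- assemble
        refine ⟨p₀.1.toNat :: v' :: rest', ⟨?_, ?_⟩, ?_, ?_⟩
        · rw [List.getLast?_cons_cons]
          have := hr'.1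
          simpa using this
        · refine List.isChain_cons_cons.2 ⟨?_, hr'.2⟩
          have h9 : (p₀.1.toNat : ℤ) = p₀.1 := Int.toNat_of_nonneg hσ
          omega
        · simp only [List.length_cons] at hlen' ⊢
          omega
        · show insert ((p₀.1.toNat : ℤ), newH a (fall a (v' :: rest')) (p₀.1.toNat : ℤ))
            (fall a (v' :: rest')) = P
          rw [hfall']
          rw [Int.toNat_of_nonneg hσ, hnewH]
          rw [Prod.mk.eta]
          exact Finset.insert_erase hp₀P

end RPS
end Work3

section Work4
namespace RPS
variable {a : ℕ}

/-- positions of ones corresponding to a drop sequence (newest first). -/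
def pos (a : ℕ) : List ℕ → List ℕ
  | [] => []
  | v :: r => (a * r.length - v) :: pos a r

/-- the string associated to a drop sequence. -/
def str (a : ℕ) (r : List ℕ) : ℕ → Bool := fun u => decide (u ∈ pos a r)

lemma sub_one_mul_add (ha : 1 ≤ a) (L : ℕ) : (a - 1) * L + L = a * L := by
  cases a with
  | zero => omega
  | succ n => rw [Nat.succ_sub_one, Nat.succ_mul]

lemma pos_length (r : List ℕ) : (pos a r).length = r.length := by
  induction r with
  | nil => rfl
  | cons v rest ih => simp [pos, ih]

lemma vseq_head_bound : ∀ (rest : List ℕ) (v : ℕ), VSeq a (v :: rest) →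
    v ≤ (a - 1) * rest.length := by
  intro rest
  induction rest with
  | nil =>
    intro v hv
    have : v = 0 := by simpa [VSeq] using hv.1
    omega
  | cons w t ih =>
    intro v hv
    have h1 : v ≤ w + (a - 1) := hv.head_le (by rw [List.head?_cons])
    have h2 := ih w (hv.tail (by simp))
    rw [List.length_cons, Nat.mul_succ]
    omega

lemma pos_bound (ha : 1 ≤ a) : ∀ (r : List ℕ), VSeq a r → ∀ p ∈ pos a r, p < a * r.length := by
  intro r
  induction r with
  | nil => intro _ p hp; simp [pos] at hp
  | cons v rest ih =>
    intro hv p hp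
    rw [List.length_cons, Nat.mul_succ]
    rcases List.mem_cons.1 hp with rfl | hp
    · omega
    · cases rest with
      | nil => simp [pos] at hp
      | cons w t =>
        have := ih (hv.tail (by simp)) p hp
        omega

lemma pos_chain (ha : 1 ≤ a) : ∀ (r : List ℕ), VSeq a r →
    List.Chain' (fun p q => q < p) (pos a r) := by
  intro r
  induction r with
  | nil => simp [pos, List.Chain']
  | cons v rest ih =>
    intro hv
    cases rest with
    | nil => simp [pos, List.Chain']
    | cons w t =>
      have htail := ih (hv.tail (by simp))
      have h1 : v ≤ w + (a - 1) := hv.head_le (by rw [List.head?_cons])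
      have h2 : w ≤ (a - 1) * t.length := vseq_head_bound t w (hv.tail (by simp))
      have e1 : a * (t.length + 1) = a * t.length + a := Nat.mul_succ a t.length
      have e2 : (a - 1) * t.length + t.length = a * t.length := sub_one_mul_add ha t.length
      simp only [pos, List.length_cons]
      show List.IsChain _ _; rw [List.isChain_cons_cons]
      constructor
      · omega
      · simpa [pos, List.Chain'] using htail

lemma pos_pairwise (ha : 1 ≤ a) (r : List ℕ) (hr : VSeq a r) :
    List.Pairwise (fun p q => q < p) (pos a r) := by
  rw [← List.isChain_iff_pairwise]
  exact pos_chain ha r hr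

lemma pos_nodup (ha : 1 ≤ a) (r : List ℕ) (hr : VSeq a r) : (pos a r).Nodup :=
  (pos_pairwise ha r hr).imp (fun h => (ne_of_lt h).symm)

lemma str_isString (ha : 1 ≤ a) (r : List ℕ) (hr : VSeq a r) :
    IsString (a * r.length) r.length (str a r) := by
  constructor
  · intro u hu
    have : u ∉ pos a r := fun hmem => by
      have := pos_bound ha r hr u hmem; omega
    simp [str, this]
  · have hset : (Finset.range (a * r.length)).filter (fun u => str a r u = true)
        = (pos a r).toFinset := by
      ext u
      simp only [Finset.mem_filter, Finset.mem_range, List.mem_toFinset, str,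
        decide_eq_true_eq]
      exact ⟨fun h => h.2, fun h => ⟨pos_bound ha r hr u h, h⟩⟩
    rw [hset, List.toFinset_card_of_nodup (pos_nodup ha r hr), pos_length]

lemma sum_formula (x : ℕ → Bool) (s : ℕ) :
    ∑ u ∈ Finset.range s, ((a : ℤ) * (if x u then 1 else 0) - 1)
      = a * ((Finset.range s).filter (fun u => x u = true)).card - s := by
  rw [Finset.sum_sub_distrib, ← Finset.mul_sum, Finset.sum_boole]
  simp

lemma count_lemma (ha : 1 ≤ a) (r : List ℕ) (hr : VSeq a r) (s : ℕ) :
    ((Finset.range s).filter (fun u => str a r u = true)).card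
      = ((pos a r).filter (fun p => decide (p < s))).length := by
  have hset : (Finset.range s).filter (fun u => str a r u = true)
      = ((pos a r).filter (fun p => decide (p < s))).toFinset := by
    ext u
    simp only [Finset.mem_filter, Finset.mem_range, List.mem_toFinset, str,
      decide_eq_true_eq, List.mem_filter]
    tauto
  rw [hset, List.toFinset_card_of_nodup ((pos_nodup ha r hr).filter _)]

lemma pos_count_key (ha : 1 ≤ a) : ∀ (r : List ℕ), VSeq a r → ∀ s : ℕ, s ≤ a * r.length →
    s ≤ a * ((pos a r).filter (fun p => decide (p < s))).length := by
  intro r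
  induction r with
  | nil => intro _ s hs; simp at hs; simp [pos, hs]
  | cons v rest ih =>
    intro hv s hs
    have hbd : v ≤ (a - 1) * rest.length := vseq_head_bound rest v hv
    have e2 : (a - 1) * rest.length + rest.length = a * rest.length :=
      sub_one_mul_add ha rest.length
    have e1 : a * (rest.length + 1) = a * rest.length + a := Nat.mul_succ a rest.length
    simp only [pos]
    by_cases hcase : a * rest.length - v < s
    · rw [List.filter_cons_of_pos (by simpa using hcase)]
      have hall : ∀ p ∈ pos a rest, p < s := by
        intro p hp
        have hpw := pos_pairwise ha (v :: rest) hv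
        simp only [pos] at hpw
        have := List.rel_of_pairwise_cons hpw hp
        omega
      rw [List.filter_eq_self.2 (fun p hp => by simpa using hall p hp)]
      rw [List.length_cons, pos_length]
      rw [List.length_cons] at hs
      omega
    · rw [List.filter_cons_of_neg (by simpa using hcase)]
      cases rest with
      | nil =>
        have hv0 : v = 0 := by simpa [VSeq] using hv.1
        simp at hcase
        omega
      | cons w t =>
        exact ih (hv.tail (by simp)) s (by omega)

lemma str_isPositive (ha : 1 ≤ a) (r : List ℕ) (hr : VSeq a r) :
    IsPositive a (a * r.length) (str a r) := by
  intro s h1 h2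
  rw [sum_formula, count_lemma ha r hr s]
  have := pos_count_key ha r hr s h2
  have hcast : (s : ℤ) ≤ (a : ℤ) * ((pos a r).filter (fun p => decide (p < s))).length := by
    exact_mod_cast this
  omega

/-- two strictly decreasing lists with the same members are equal -/
lemma sorted_mem_eq : ∀ (l l' : List ℕ), List.Pairwise (fun p q => q < p) l →
    List.Pairwise (fun p q => q < p) l' → (∀ u, u ∈ l ↔ u ∈ l') → l = l' := by
  intro l
  induction l with
  | nil =>
    intro l' _ _ hmem
    cases l' with
    | nil => rfl
    | cons y ys => exact absurd ((hmem y).2 (List.mem_cons_self)) (by simp)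
  | cons x xs ih =>
    intro l' hl hl' hmem
    cases l' with
    | nil => exact absurd ((hmem x).1 (List.mem_cons_self)) (by simp)
    | cons y ys =>
      have hxy : x = y := by
        have h1 := (hmem x).1 (List.mem_cons_self)
        have h2 := (hmem y).2 (List.mem_cons_self)
        rcases List.mem_cons.1 h1 with h | h
        · exact h
        · rcases List.mem_cons.1 h2 with h' | h'
          · exact h'.symm
          · have hx := List.rel_of_pairwise_cons hl' h
            have hy := List.rel_of_pairwise_cons hl h'
            omega
      subst hxy
      have htails : ∀ u, u ∈ xs ↔ u ∈ ys := by
        intro u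
        constructor
        · intro hu
          have hux : u < x := List.rel_of_pairwise_cons hl hu
          have := (hmem u).1 (List.mem_cons_of_mem _ hu)
          rcases List.mem_cons.1 this with h | h
          · omega
          · exact h
        · intro hu
          have hux : u < x := List.rel_of_pairwise_cons hl' hu
          have := (hmem u).2 (List.mem_cons_of_mem _ hu)
          rcases List.mem_cons.1 this with h | h
          · omega
          · exact h
      rw [ih ys (List.pairwise_cons.1 hl).2 (List.pairwise_cons.1 hl').2 htails]

end RPS
end Work4

section Work5
namespace RPS
variable {a : ℕ}

lemma pos_inj (ha : 1 ≤ a) : ∀ (r r' : List ℕ), VSeq a r → VSeq a r' →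
    r.length = r'.length → pos a r = pos a r' → r = r' := by
  intro r
  induction r with
  | nil =>
    intro r' _ _ hlen _
    cases r' with
    | nil => rfl
    | cons v' rest' => simp at hlen
  | cons v rest ih =>
    intro r' hr hr' hlen hpos
    cases r' with
    | nil => simp at hlen
    | cons v' rest' =>
      simp only [List.length_cons] at hlen
      have hlen' : rest.length = rest'.length := by omega
      simp only [pos, List.cons.injEq] at hpos
      obtain ⟨hhead, htail⟩ := hpos
      have hb1 : v ≤ (a - 1) * rest.length := vseq_head_bound rest v hr
      have hb2 : v' ≤ (a - 1) * rest'.length := vseq_head_bound rest' v' hr'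
      have e2 : (a - 1) * rest.length + rest.length = a * rest.length :=
        sub_one_mul_add ha rest.length
      rw [← hlen'] at hb2
      rw [show rest'.length = rest.length from hlen'.symm] at hhead
      have hv : v = v' := by omega
      subst hv
      cases rest with
      | nil =>
        cases rest' with
        | nil => rfl
        | cons w' t' => simp at hlen'
      | cons w t =>
        cases rest' with
        | nil => simp at hlen'
        | cons w' t' =>
          rw [ih (w' :: t') (hr.tail (by simp)) (hr'.tail (by simp)) hlen' htail]

lemma str_inj (ha : 1 ≤ a) (r r' : List ℕ) (hr : VSeq a r) (hr' : VSeq a r')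
    (hlen : r.length = r'.length) (heq : str a r = str a r') : r = r' := by
  apply pos_inj ha r r' hr hr' hlen
  apply sorted_mem_eq _ _ (pos_pairwise ha r hr) (pos_pairwise ha r' hr')
  intro u
  have := congrFun heq u
  simp only [str, decide_eq_decide] at this
  exact this

lemma str_surj (ha : 2 ≤ a) (m : ℕ) (hm : 1 ≤ m) : ∀ x : ℕ → Bool,
    IsString (a * m) m x → IsPositive a (a * m) x →
    ∃ r : List ℕ, VSeq a r ∧ r.length = m ∧ str a r = x := by
  induction m, hm using Nat.le_induction with
  | base =>
    intro x hstr hpos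
    have hx0 : x 0 = true := by
      have h9 := hpos 1 le_rfl (by omega)
      rw [Finset.sum_range_one] at h9
      cases hxx : x 0
      · rw [hxx] at h9; simp at h9
      · rfl
    have hones : (Finset.range (a * 1)).filter (fun u => x u = true) = {0} := by
      obtain ⟨z, hz⟩ := Finset.card_eq_one.1 hstr.2
      have h0 : (0 : ℕ) ∈ (Finset.range (a * 1)).filter (fun u => x u = true) := by
        simp only [Finset.mem_filter, Finset.mem_range]
        exact ⟨by omega, hx0⟩
      rw [hz] at h0 ⊢
      rw [Finset.mem_singleton.1 h0]
    refine ⟨[0], ⟨by simp, by simp [List.Chain']⟩, by simp, ?_⟩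
    funext u
    show decide (u ∈ pos a [0]) = x u
    have hp : pos a [0] = [0] := by simp [pos]
    rw [hp]
    rcases Nat.eq_zero_or_pos u with rfl | hu
    · simp [hx0]
    · have hxu : x u = false := by
        rcases Nat.lt_or_ge u (a * 1) with h | h
        · by_contra hne
          have : x u = true := by
            cases hxx : x u
            · exact absurd hxx hne
            · rfl
          have : u ∈ (Finset.range (a * 1)).filter (fun u => x u = true) := by
            simp only [Finset.mem_filter, Finset.mem_range]; exact ⟨h, this⟩
          rw [hones] at this
          simp only [Finset.mem_singleton] at this
          omega
        · exact hstr.1 u h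
      rw [hxu]
      simp only [decide_eq_false_iff_not, List.mem_singleton]
      omega
  | succ m hm ih =>
    intro x hstr hpos
    set O := (Finset.range (a * (m + 1))).filter (fun u => x u = true) with hO
    have hOcard : O.card = m + 1 := hstr.2
    have hOne : O.Nonempty := Finset.card_pos.1 (by omega)
    obtain ⟨p, hpdef⟩ : ∃ p, p = O.max' hOne := ⟨_, rfl⟩
    have hpO : p ∈ O := hpdef ▸ O.max'_mem hOne
    have hpx : x p = true := (Finset.mem_filter.1 hpO).2
    have hpr : p < a * (m + 1) := Finset.mem_range.1 (Finset.mem_filter.1 hpO).1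
    have hmax : ∀ u, x u = true → u ≤ p := by
      intro u hu
      rcases Nat.lt_or_ge u (a * (m + 1)) with h | h
      · rw [hpdef]
        refine O.le_max' u ?_
        rw [hO]
        exact Finset.mem_filter.2 ⟨Finset.mem_range.2 h, hu⟩
      · exact absurd (hstr.1 u h) (by rw [hu]; simp)
    have hlt : (Finset.range p).filter (fun u => x u = true) = O.erase p := by
      rw [hO]
      ext u
      simp only [Finset.mem_filter, Finset.mem_range, Finset.mem_erase]
      constructor
      · rintro ⟨h1, h2⟩
        exact ⟨by omega, by omega, h2⟩
      · rintro ⟨h1, h2, h3⟩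
        have := hmax u h3
        exact ⟨by omega, h3⟩
    have hcount_p : ((Finset.range p).filter (fun u => x u = true)).card = m := by
      rw [hlt, Finset.card_erase_of_mem hpO, hOcard]
      omega
    have hp1 : 1 ≤ p := by
      by_contra hcon
      push_neg at hcon
      interval_cases p
      have hsub : O ⊆ {0} := by
        intro u hu
        rw [hO] at hu
        have := hmax u (Finset.mem_filter.1 hu).2
        simp only [Finset.mem_singleton]
        omega
      have := Finset.card_le_card hsub
      simp at this
      omega
    have hpam : p ≤ a * m := by
      have h9 := hpos p hp1 (by omega)
      rw [sum_formula, hcount_p] at h9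
      have : (p : ℤ) ≤ (a : ℤ) * (m : ℤ) := by omega
      exact_mod_cast this
    -- the truncated string
    set x' : ℕ → Bool := fun u => if u = p then false else x u with hx'
    have hsmall : ∀ u, x u = true → u ≠ p → u < a * m := by
      intro u hu hne
      have hup : u < p := by
        have := hmax u hu
        omega
      rcases Nat.eq_zero_or_pos u with rfl | hu1
      · have : a * 1 ≤ a * m := Nat.mul_le_mul_left a hm
        omega
      · have hsub : (Finset.range u).filter (fun w => x w = true) ⊆ (O.erase p).erase u := by
          intro w hw
          obtain ⟨hw1, hw2⟩ := Finset.mem_filter.1 hw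
          rw [Finset.mem_range] at hw1
          have hwO : w ∈ O := by
            rw [hO]; exact Finset.mem_filter.2 ⟨Finset.mem_range.2 (by omega), hw2⟩
          exact Finset.mem_erase.2 ⟨by omega, Finset.mem_erase.2 ⟨by omega, hwO⟩⟩
        have huO : u ∈ O := by
          rw [hO]; exact Finset.mem_filter.2 ⟨Finset.mem_range.2 (by omega), hu⟩
        have huOe : u ∈ O.erase p := Finset.mem_erase.2 ⟨hne, huO⟩
        have hcsub := Finset.card_le_card hsub
        have hcard2 : ((O.erase p).erase u).card = m - 1 := by
          rw [Finset.card_erase_of_mem huOe, Finset.card_erase_of_mem hpO, hOcard]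
          omega
        have h9 := hpos u hu1 (by omega)
        rw [sum_formula] at h9
        have hc9 : (u : ℤ) ≤ (a : ℤ) * ((Finset.range u).filter (fun w => x w = true)).card := by
          omega
        have hle9 : ((Finset.range u).filter (fun w => x w = true)).card ≤ m - 1 := by omega
        have : (u : ℤ) ≤ (a : ℤ) * (m - 1 : ℕ) := by
          calc (u : ℤ) ≤ (a : ℤ) * ((Finset.range u).filter (fun w => x w = true)).card := hc9
          _ ≤ (a : ℤ) * (m - 1 : ℕ) := by
              apply mul_le_mul_of_nonneg_left _ (by positivity)
              exact_mod_cast hle9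
        have hun : u ≤ a * (m - 1) := by exact_mod_cast this
        have : a * (m - 1) + a = a * m := by
          rw [← Nat.mul_succ]
          congr 1
          omega
        omega
    have hones' : (Finset.range (a * m)).filter (fun u => x' u = true) = O.erase p := by
      rw [hO]
      ext u
      simp only [Finset.mem_filter, Finset.mem_range, Finset.mem_erase, hx']
      constructor
      · rintro ⟨h1, h2⟩
        by_cases hup : u = p
        · simp [hup] at h2
        · rw [if_neg hup] at h2
          have : a * m ≤ a * (m + 1) := Nat.mul_le_mul_left a (by omega)
          exact ⟨hup, by omega, h2⟩
      · rintro ⟨h1, h2, h3⟩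
        rw [if_neg h1]
        exact ⟨hsmall u h3 h1, h3⟩
    have hstr' : IsString (a * m) m x' := by
      constructor
      · intro u hu
        by_cases hup : u = p
        · simp [hx', hup]
        · simp only [hx', if_neg hup]
          cases hxx : x u
          · rfl
          · exact absurd (hsmall u hxx hup) (by omega)
      · rw [hones', Finset.card_erase_of_mem hpO, hOcard]
        omega
    have hpos' : IsPositive a (a * m) x' := by
      intro s h1 h2
      rw [sum_formula]
      by_cases hsp : s ≤ p
      · have hflt : (Finset.range s).filter (fun u => x' u = true)
            = (Finset.range s).filter (fun u => x u = true) := by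
          apply Finset.filter_congr
          intro u hu
          rw [Finset.mem_range] at hu
          have hne : u ≠ p := by omega
          simp [hx', hne]
        rw [hflt]
        have h9 := hpos s h1 (by omega)
        rw [sum_formula] at h9
        exact h9
      · push_neg at hsp
        have hflt : (Finset.range s).filter (fun u => x' u = true) = O.erase p := by
          rw [← hones']
          ext u
          simp only [Finset.mem_filter, Finset.mem_range]
          constructor
          · rintro ⟨h3, h4⟩
            refine ⟨?_, h4⟩
            by_cases hup : u = p
            · simp [hx', hup] at h4
            · simp only [hx', if_neg hup] at h4
              exact hsmall u h4 hup
          · rintro ⟨h3, h4⟩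
            refine ⟨?_, h4⟩
            by_cases hup : u = p
            · simp [hx', hup] at h4
            · simp only [hx', if_neg hup] at h4
              have := hmax u h4
              omega
        rw [hflt, Finset.card_erase_of_mem hpO, hOcard]
        have : (s : ℤ) ≤ (a : ℤ) * m := by exact_mod_cast h2
        have hm1 : ((m + 1 - 1 : ℕ) : ℤ) = (m : ℤ) := by push_cast; omega
        rw [hm1]
        omega
    obtain ⟨r', hvs', hlen', hstr'eq⟩ := ih x' hstr' hpos'
    cases r' with
    | nil => simp at hlen'; omega
    | cons v' rest' =>
      -- facts about the head of pos r'
      have hlenr : rest'.length = m - 1 := by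
        simp only [List.length_cons] at hlen'; omega
      obtain ⟨p', hp'def⟩ : ∃ q, q = a * rest'.length - v' := ⟨_, rfl⟩
      have hposr' : pos a (v' :: rest') = p' :: pos a rest' := by rw [hp'def]; rfl
      have hp'mem : p' ∈ pos a (v' :: rest') := by rw [hposr']; exact List.mem_cons_self
      have hp'one : x' p' = true := by
        rw [← hstr'eq]
        simpa [str] using hp'mem
      have hp'nep : p' ≠ p := by
        intro h
        rw [h] at hp'one
        simp [hx'] at hp'one
      have hp'x : x p' = true := by
        have h9 := hp'one
        simp only [hx'] at h9
        rwa [if_neg hp'nep] at h9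
      have hp'p : p' < p := by
        have h9 := hmax p' hp'x
        omega
      have hv'bd : v' ≤ (a - 1) * rest'.length := vseq_head_bound rest' v' hvs'
      have e2 : (a - 1) * rest'.length + rest'.length = a * rest'.length :=
        sub_one_mul_add (by omega) rest'.length
      have eam : a * rest'.length + a = a * m := by
        have h9 : rest'.length + 1 = m := by omega
        rw [← h9, Nat.mul_succ]
      refine ⟨(a * m - p) :: v' :: rest', ⟨?_, ?_⟩, ?_, ?_⟩
      · rw [List.getLast?_cons_cons]
        exact hvs'.1
      · refine List.isChain_cons_cons.2 ⟨?_, hvs'.2⟩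
        show a * m - p ≤ v' + (a - 1)
        omega
      · simp only [List.length_cons] at hlen' ⊢
        omega
      · -- str equals x
        have hposr : pos a ((a * m - p) :: v' :: rest') = p :: pos a (v' :: rest') := by
          show (a * (v' :: rest').length - (a * m - p)) :: pos a (v' :: rest')
            = p :: pos a (v' :: rest')
          congr 1
          simp only [List.length_cons]
          have h9 : rest'.length + 1 = m := by omega
          rw [h9]
          omega
        funext u
        show decide (u ∈ pos a ((a * m - p) :: v' :: rest')) = x u
        rw [hposr]
        have hmem' : ∀ w, (w ∈ pos a (v' :: rest')) ↔ x' w = true := by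
          intro w
          have h9 := congrFun hstr'eq w
          simp only [str] at h9
          rw [← h9, decide_eq_true_eq]
        have hiff : u ∈ p :: pos a (v' :: rest') ↔ x u = true := by
          constructor
          · intro hmem
            rcases List.mem_cons.1 hmem with rfl | hmem
            · exact hpx
            · have h9 := (hmem' u).1 hmem
              by_cases hup : u = p
              · rw [hup] at h9; simp [hx'] at h9
              · simp only [hx'] at h9
                rwa [if_neg hup] at h9
          · intro hxu
            by_cases hup : u = p
            · rw [hup]; exact List.mem_cons_self
            · refine List.mem_cons_of_mem _ ((hmem' u).2 ?_)
              simp only [hx']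
              rw [if_neg hup]
              exact hxu
        cases hxx : x u
        · have hnm : u ∉ p :: pos a (v' :: rest') := fun hmem => by
            have h9 := hiff.1 hmem
            rw [hxx] at h9
            exact Bool.false_ne_true h9
          simp [hnm]
        · have := hiff.2 hxx
          simp [this]

end RPS
end Work5

namespace RPS
variable {a : ℕ}

lemma fall_pyr (ha : 2 ≤ a) {r : List ℕ} (hv : VSeq a r) : IsRightPyramid a (fall a r) := by
  cases r with
  | nil => exact absurd rfl hv.ne_nil
  | cons v rest => exact (fall_spec ha rest v hv).1

end RPS

/-- Right `0`-pyramids of size `m` are equinumerous with positive `(a·m, m)`-strings. -/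
theorem right_pyramids_eq_positive_strings (a m : ℕ) (ha : 2 ≤ a) (hm : 1 ≤ m) :
    Nat.card {P : Finset (ℤ × ℕ) // IsRightPyramid a P ∧ P.card = m} =
      Nat.card {x : ℕ → Bool // IsString (a * m) m x ∧ IsPositive a (a * m) x} := by
  have ha1 : 1 ≤ a := by omega
  have h1 : Nat.card {r : List ℕ // RPS.VSeq a r ∧ r.length = m}
      = Nat.card {P : Finset (ℤ × ℕ) // IsRightPyramid a P ∧ P.card = m} := by
    apply Nat.card_congr
    apply Equiv.ofBijective
      (fun r => (⟨RPS.fall a r.1, RPS.fall_pyr ha r.2.1,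
        by rw [RPS.fall_card ha r.2.1, r.2.2]⟩ :
          {P : Finset (ℤ × ℕ) // IsRightPyramid a P ∧ P.card = m}))
    constructor
    · intro r r' h
      exact Subtype.ext (RPS.fall_inj ha _ _ r.2.1 r'.2.1 (congrArg Subtype.val h))
    · intro P
      obtain ⟨r, hv, hlen, hfall⟩ := RPS.fall_surj ha m P.1 P.2.1 P.2.2
      exact ⟨⟨r, hv, hlen⟩, Subtype.ext hfall⟩
  have h2 : Nat.card {r : List ℕ // RPS.VSeq a r ∧ r.length = m}
      = Nat.card {x : ℕ → Bool // IsString (a * m) m x ∧ IsPositive a (a * m) x} := by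
    apply Nat.card_congr
    apply Equiv.ofBijective
      (fun r => (⟨RPS.str a r.1,
        by have h := RPS.str_isString ha1 r.1 r.2.1; rw [r.2.2] at h; exact h,
        by have h := RPS.str_isPositive ha1 r.1 r.2.1; rw [r.2.2] at h; exact h⟩ :
          {x : ℕ → Bool // IsString (a * m) m x ∧ IsPositive a (a * m) x}))
    constructor
    · intro r r' h
      exact Subtype.ext (RPS.str_inj ha1 _ _ r.2.1 r'.2.1 (r.2.2.trans r'.2.2.symm)
        (congrArg Subtype.val h))
    · intro x
      obtain ⟨r, hv, hlen, heq⟩ := RPS.str_surj ha m hm x.1 x.2.1 x.2.2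
      exact ⟨⟨r, hv, hlen⟩, Subtype.ext heq⟩
  rw [← h1]
  exact h2
end

section
/- Let m ≥ 1 be an integer. Every (2m, m)-string w = x_1 … x_{2m} with x_1 = 1 can be written in a unique way as a concatenation w = w_1 w_2 ⋯ w_r of nonempty strings (r ≥ 1) such that for each odd index i the block w_i is a positive string, and for each even index i the reversal of w_i is a positive string. -/
/-- A positive string (dimer case `a = 2`): a nonempty string of `0`s and `1`s
with equally many `0`s and `1`s, all of whose partial sums
`t_s = Σ_{u ≤ s} (2·x_u − 1)` are nonnegative. -/
def PosStr (l : List Bool) : Prop :=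
  l ≠ [] ∧ l.count true = l.count false ∧
    ∀ s ≤ l.length,
      0 ≤ ((l.take s).map (fun b => 2 * (if b then (1 : ℤ) else 0) - 1)).sum

namespace StrDec

def f (b : Bool) : ℤ := 2 * (if b then (1 : ℤ) else 0) - 1

def S (l : List Bool) : ℤ := (l.map f).sum

@[simp] lemma f_true : f true = 1 := rfl
@[simp] lemma f_false : f false = -1 := rfl

@[simp] lemma S_nil : S [] = 0 := rfl
@[simp] lemma S_cons (b : Bool) (l : List Bool) : S (b :: l) = f b + S l := by simp [S]
@[simp] lemma S_append (a b : List Bool) : S (a ++ b) = S a + S b := by simp [S]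

lemma S_count (l : List Bool) : S l = (l.count true : ℤ) - (l.count false : ℤ) := by
  induction l with
  | nil => simp
  | cons b t ih => cases b <;> simp [ih, List.count_cons] <;> push_cast <;> ring

lemma count_eq_iff (l : List Bool) : l.count true = l.count false ↔ S l = 0 := by
  rw [S_count]; omega

lemma posStr_iff (l : List Bool) :
    PosStr l ↔ l ≠ [] ∧ S l = 0 ∧ ∀ s ≤ l.length, 0 ≤ S (l.take s) := by
  rw [PosStr, count_eq_iff]; rfl

def NegStr (l : List Bool) : Prop :=
  l ≠ [] ∧ S l = 0 ∧ ∀ s ≤ l.length, S (l.take s) ≤ 0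

lemma posStr_head {l : List Bool} (h : PosStr l) : l.head? = some true := by
  rw [posStr_iff] at h
  obtain ⟨hne, _, h3⟩ := h
  cases l with
  | nil => simp at hne
  | cons b t =>
    have := h3 1 (by simp)
    cases b
    · simp at this
    · rfl

lemma negStr_head {l : List Bool} (h : NegStr l) : l.head? = some false := by
  obtain ⟨hne, _, h3⟩ := h
  cases l with
  | nil => simp at hne
  | cons b t =>
    have := h3 1 (by simp)
    cases b
    · rfl
    · simp at this

lemma S_take_eq (l : List Bool) {s : ℕ} (hs : s ≤ l.length) (h0 : S l = 0) :
    S (l.take s) = - S (l.drop s) := by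
  have := S_append (l.take s) (l.drop s)
  rw [List.take_append_drop] at this
  omega

lemma posStr_reverse_iff (l : List Bool) : PosStr l.reverse ↔ NegStr l := by
  rw [posStr_iff, NegStr]
  have hS : S l.reverse = S l := by simp [S, List.map_reverse, List.sum_reverse]
  constructor
  · rintro ⟨h1, h2, h3⟩
    rw [hS] at h2
    refine ⟨by simpa using h1, h2, fun s hs => ?_⟩
    have := h3 (l.length - s) (by simp)
    rw [List.take_reverse] at this
    have hdd : l.length - (l.length - s) = s := by omega
    rw [hdd] at this
    have : 0 ≤ S (l.drop s) := by simpa [S, List.map_reverse, List.sum_reverse] using this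
    have := S_take_eq l hs h2
    omega
  · rintro ⟨h1, h2, h3⟩
    refine ⟨by simpa using h1, by rw [hS]; exact h2, fun s hs => ?_⟩
    rw [List.take_reverse]
    have h4 : S (l.drop (l.length - s)).reverse = S (l.drop (l.length - s)) := by
      simp [S, List.map_reverse, List.sum_reverse]
    rw [h4]
    have := h3 (l.length - s) (by omega)
    have := S_take_eq l (show l.length - s ≤ l.length by omega) h2
    omega

@[simp] lemma f_not (b : Bool) : f (!b) = - f b := by cases b <;> rfl

lemma S_map_not (l : List Bool) : S (l.map not) = - S l := by
  induction l with
  | nil => simp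
  | cons b t ih => simp [ih]; ring

lemma posStr_map_not {l : List Bool} (h : NegStr l) : PosStr (l.map not) := by
  rw [posStr_iff]
  obtain ⟨h1, h2, h3⟩ := h
  refine ⟨by simpa using h1, by rw [S_map_not]; omega, fun s hs => ?_⟩
  rw [← List.map_take, S_map_not]
  have := h3 s (by simpa using hs)
  omega

lemma negStr_map_not {l : List Bool} (h : PosStr l) : NegStr (l.map not) := by
  rw [posStr_iff] at h
  obtain ⟨h1, h2, h3⟩ := h
  refine ⟨by simpa using h1, by rw [S_map_not]; omega, fun s hs => ?_⟩
  rw [← List.map_take, S_map_not]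
  have := h3 s (by simpa using hs)
  omega

inductive Alt : Bool → List (List Bool) → Prop
  | nil (b : Bool) : Alt b []
  | pos {w : List Bool} {L : List (List Bool)} : PosStr w → Alt false L → Alt true (w :: L)
  | neg {w : List Bool} {L : List (List Bool)} : NegStr w → Alt true L → Alt false (w :: L)

lemma alt_cons_true {w : List Bool} {L : List (List Bool)} :
    Alt true (w :: L) ↔ PosStr w ∧ Alt false L := by
  constructor
  · intro h; cases h with | pos hp ha => exact ⟨hp, ha⟩
  · rintro ⟨hp, ha⟩; exact Alt.pos hp ha

lemma alt_cons_false {w : List Bool} {L : List (List Bool)} :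
    Alt false (w :: L) ↔ NegStr w ∧ Alt true L := by
  constructor
  · intro h; cases h with | neg hp ha => exact ⟨hp, ha⟩
  · rintro ⟨hp, ha⟩; exact Alt.neg hp ha

lemma alt_map_not {b : Bool} {L : List (List Bool)} (h : Alt b L) :
    Alt (!b) (L.map (List.map not)) := by
  induction h with
  | nil b => exact Alt.nil _
  | pos hp _ ih => exact Alt.neg (negStr_map_not hp) ih
  | neg hp _ ih => exact Alt.pos (posStr_map_not hp) ih

lemma alt_flatten_head {b : Bool} {L : List (List Bool)} (h : Alt b L)
    (hne : L.flatten ≠ []) : L.flatten.head? = some b := by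
  induction h with
  | nil b => simp at hne
  | pos hp _ _ =>
    rw [List.flatten_cons, List.head?_append_of_ne_nil _ (posStr_iff _ |>.mp hp).1]
    exact posStr_head hp
  | neg hp _ _ =>
    rw [List.flatten_cons, List.head?_append_of_ne_nil _ hp.1]
    exact negStr_head hp

end StrDec

namespace StrDec

lemma S_take_succ {l : List Bool} {s : ℕ} (h : s < l.length) :
    S (l.take (s + 1)) = S (l.take s) + f l[s] := by
  have := List.sum_take_succ (l.map f) s (by simpa using h)
  simp only [S, List.map_take] at *
  rw [this]
  congr 1
  simp

lemma pos_block_eq_aux {w₁ w₂ t₁ t₂ : List Bool} (h₁ : PosStr w₁) (h₂ : PosStr w₂)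
    (he : w₁ ++ t₁ = w₂ ++ t₂) (hle : w₁.length ≤ w₂.length)
    (ht₁ : t₁ ≠ [] → t₁.head? = some false) : w₁ = w₂ := by
  rw [posStr_iff] at h₁ h₂
  have hlen : w₁.length + t₁.length = w₂.length + t₂.length := by
    have := congrArg List.length he; simpa using this
  rcases Nat.lt_or_ge w₁.length w₂.length with hlt | hge
  · exfalso
    have ht₁ne : t₁ ≠ [] := by
      intro h; rw [h] at hlen; simp at hlen; omega
    have hw2k : w₂.take w₁.length = w₁ := by
      have : (w₂ ++ t₂).take w₁.length = (w₁ ++ t₁).take w₁.length := by rw [he]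
      rw [List.take_append_of_le_length (Nat.le_of_lt hlt),
        List.take_left' rfl] at this
      exact this
    have hget : w₂[w₁.length]'hlt = false := by
      have e1 : (w₂ ++ t₂)[w₁.length]'(by simp; omega) = w₂[w₁.length]'hlt :=
        List.getElem_append_left hlt
      have e0 : (w₁ ++ t₁)[w₁.length]'(by simp; omega) = (w₂ ++ t₂)[w₁.length]'(by simp; omega) :=
        List.getElem_of_eq he _
      have e2 : (w₁ ++ t₁)[w₁.length]'(by simp; omega) = t₁[0]'(by
          cases t₁ with | nil => simp at ht₁ne | cons a t => simp) := by
        rw [List.getElem_append_right (Nat.le_refl _)]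
        simp
      have e3 : t₁[0]'(by cases t₁ with | nil => simp at ht₁ne | cons a t => simp) = false := by
        have := ht₁ ht₁ne
        cases t₁ with
        | nil => simp at ht₁ne
        | cons a t => simp at this ⊢; exact this
      rw [← e1, ← e0, e2, e3]
    have := h₂.2.2 (w₁.length + 1) (by omega)
    rw [S_take_succ hlt, hget, hw2k, h₁.2.1] at this
    simp at this
  · have : w₁.length = w₂.length := by omega
    exact List.append_inj_left he this

lemma pos_block_eq {w₁ w₂ t₁ t₂ : List Bool} (h₁ : PosStr w₁) (h₂ : PosStr w₂)
    (he : w₁ ++ t₁ = w₂ ++ t₂)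
    (ht₁ : t₁ ≠ [] → t₁.head? = some false)
    (ht₂ : t₂ ≠ [] → t₂.head? = some false) : w₁ = w₂ := by
  rcases Nat.le_total w₁.length w₂.length with h | h
  · exact pos_block_eq_aux h₁ h₂ he h ht₁
  · exact (pos_block_eq_aux h₂ h₁ he.symm h ht₂).symm

lemma neg_block_eq {w₁ w₂ t₁ t₂ : List Bool} (h₁ : NegStr w₁) (h₂ : NegStr w₂)
    (he : w₁ ++ t₁ = w₂ ++ t₂)
    (ht₁ : t₁ ≠ [] → t₁.head? = some true)
    (ht₂ : t₂ ≠ [] → t₂.head? = some true) : w₁ = w₂ := by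
  have key : w₁.map not = w₂.map not := by
    apply pos_block_eq (posStr_map_not h₁) (posStr_map_not h₂)
    · rw [← List.map_append, ← List.map_append, he]
    · intro h
      have hne : t₁ ≠ [] := by intro hh; rw [hh] at h; simp at h
      have := ht₁ hne
      cases t₁ with
      | nil => simp at hne
      | cons a t => simp at this ⊢; simp [this]
    · intro h
      have hne : t₂ ≠ [] := by intro hh; rw [hh] at h; simp at h
      have := ht₂ hne
      cases t₂ with
      | nil => simp at hne
      | cons a t => simp at this ⊢; simp [this]
  have : (w₁.map not).map not = (w₂.map not).map not := by rw [key]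
  simpa [List.map_map, Function.comp_def] using this

end StrDec

namespace StrDec

lemma alt_unique : ∀ (L₁ : List (List Bool)) (b : Bool) (L₂ : List (List Bool)),
    Alt b L₁ → Alt b L₂ → L₁.flatten = L₂.flatten → L₁ = L₂ := by
  intro L₁
  induction L₁ with
  | nil =>
    intro b L₂ _ h2 hf
    cases L₂ with
    | nil => rfl
    | cons w M =>
      exfalso
      have hw : w ≠ [] := by
        cases b with
        | true => cases h2 with | pos hp _ => exact (posStr_iff _ |>.mp hp).1
        | false => cases h2 with | neg hp _ => exact hp.1
      simp at hf
      exact hw hf.1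
  | cons w₁ M₁ ih =>
    intro b L₂ h1 h2 hf
    cases L₂ with
    | nil =>
      exfalso
      have hw : w₁ ≠ [] := by
        cases b with
        | true => cases h1 with | pos hp _ => exact (posStr_iff _ |>.mp hp).1
        | false => cases h1 with | neg hp _ => exact hp.1
      simp at hf; exact hw hf.1
    | cons w₂ M₂ =>
      simp only [List.flatten_cons] at hf
      cases b with
      | true =>
        rw [alt_cons_true] at h1 h2
        have hw : w₁ = w₂ := pos_block_eq h1.1 h2.1 hf
          (fun h => alt_flatten_head h1.2 h) (fun h => alt_flatten_head h2.2 h)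
        subst hw
        rw [ih false M₂ h1.2 h2.2 (List.append_cancel_left hf)]
      | false =>
        rw [alt_cons_false] at h1 h2
        have hw : w₁ = w₂ := neg_block_eq h1.1 h2.1 hf
          (fun h => alt_flatten_head h1.2 h) (fun h => alt_flatten_head h2.2 h)
        subst hw
        rw [ih true M₂ h1.2 h2.2 (List.append_cancel_left hf)]

lemma exists_alt_true : ∀ (n : ℕ) (l : List Bool), l.length = n → S l = 0 →
    l.head? = some true → ∃ L, Alt true L ∧ L.flatten = l := by
  intro n
  induction n using Nat.strong_induction_on with
  | _ n ih =>
    intro l hlen hS hhead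
    by_cases hnn : ∀ s ≤ l.length, 0 ≤ S (l.take s)
    · refine ⟨[l], Alt.pos ?_ (Alt.nil false), by simp⟩
      rw [posStr_iff]
      exact ⟨by rintro rfl; simp at hhead, hS, hnn⟩
    · push_neg at hnn
      have hP : ∃ s, s ≤ l.length ∧ S (l.take s) < 0 := hnn
      have hmin : ∀ u < Nat.find hP, ¬(u ≤ l.length ∧ S (l.take u) < 0) :=
        fun u hu => Nat.find_min hP hu
      obtain ⟨hj1, hj2⟩ := Nat.find_spec hP
      set j := Nat.find hP with hjdef
      have hj0 : j ≠ 0 := by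
        intro h; rw [h] at hj2; simp at hj2
      set k := j - 1 with hk
      have hkj : k < j := by omega
      have hkl : k < l.length := by omega
      have hknn : 0 ≤ S (l.take k) := by
        have := hmin k hkj
        push_neg at this
        have := this (by omega)
        omega
      have hstep := S_take_succ hkl
      have hjk : k + 1 = j := by omega
      rw [hjk] at hstep
      have hgetk : l[k] = false := by
        cases hlk : l[k] with
        | false => rfl
        | true => rw [hlk] at hstep; simp at hstep; omega
      have hSk : S (l.take k) = 0 := by
        rw [hgetk] at hstep; simp at hstep; omega
      have hk0 : k ≠ 0 := by
        intro h
        cases l with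
        | nil => simp at hhead
        | cons b t =>
          simp at hhead
          simp [h, hhead] at hgetk
      have hposW : PosStr (l.take k) := by
        rw [posStr_iff]
        refine ⟨?_, hSk, ?_⟩
        · have : (l.take k).length = k := by
            rw [List.length_take]; omega
          intro hnil
          rw [hnil] at this
          simp at this
          omega
        · intro s hs
          rw [List.length_take] at hs
          rw [List.take_take]
          have hsk : min s k = s := by omega
          rw [hsk]
          have := hmin s (by omega)
          push_neg at this
          have := this (by omega)
          omega
      set r := l.drop k with hr
      have hSr : S r = 0 := by
        rw [hr]
        have := S_append (l.take k) (l.drop k)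
        rw [List.take_append_drop] at this
        omega
      have hrhead : r.head? = some false := by
        rw [hr, List.head?_drop, List.getElem?_eq_getElem hkl, hgetk]
      have hrlen : r.length < n := by
        have h1 : r.length = l.length - k := by rw [hr, List.length_drop]
        omega
      obtain ⟨M', hM'alt, hM'flat⟩ := ih (r.map not).length (by simpa using hrlen)
        (r.map not) rfl (by rw [S_map_not]; omega)
        (by rw [List.head?_map, hrhead]; rfl)
      refine ⟨l.take k :: M'.map (List.map not), Alt.pos hposW ?_, ?_⟩
      · have := alt_map_not hM'alt
        simpa using this
      · have hfl : (M'.map (List.map not)).flatten = (M'.flatten).map not := by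
          simp [List.map_flatten]
        rw [List.flatten_cons, hfl, hM'flat]
        have : List.map not (List.map not r) = r := by
          simp [List.map_map, Function.comp_def]
        rw [this]
        exact List.take_append_drop k l

end StrDec

namespace StrDec

lemma alt_iff_cond : ∀ (L : List (List Bool)) (b : Bool), Alt b L ↔
    ∀ i, (h : i < L.length) →
      if i % 2 = 0 then (if b then PosStr L[i] else NegStr L[i])
      else (if b then NegStr L[i] else PosStr L[i]) := by
  intro L
  induction L with
  | nil =>
    intro b
    constructor
    · intro _ i hi; simp at hi
    · intro _; exact Alt.nil b
  | cons w M ih =>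
    intro b
    have key : ∀ b' : Bool, Alt b' M ↔ ∀ i, (h : i < M.length) →
        if (i+1) % 2 = 0 then (if !b' then PosStr M[i] else NegStr M[i])
        else (if !b' then NegStr M[i] else PosStr M[i]) := by
      intro b'
      rw [ih b']
      apply forall_congr'
      intro i
      apply forall_congr'
      intro hi
      by_cases hp : i % 2 = 0
      · have hp1 : ¬((i+1) % 2 = 0) := by omega
        simp only [hp, hp1, if_true, if_false, ite_true, ite_false]
        cases b' <;> simp
      · have hp1 : (i+1) % 2 = 0 := by omega
        simp only [hp, hp1, if_true, if_false, ite_true, ite_false]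
        cases b' <;> simp
    constructor
    · intro h i hi
      match i, hi with
      | 0, _ =>
        simp only [List.getElem_cons_zero]
        cases b
        · rw [alt_cons_false] at h; simpa using h.1
        · rw [alt_cons_true] at h; simpa using h.1
      | i+1, hi =>
        have hm : i < M.length := by simpa using hi
        cases b
        · rw [alt_cons_false] at h
          have := (key true).mp h.2 i hm
          simpa using this
        · rw [alt_cons_true] at h
          have := (key false).mp h.2 i hm
          simpa using this
    · intro h
      have h0 := h 0 (by simp)
      simp only [List.getElem_cons_zero] at h0
      cases b
      · refine Alt.neg (by simpa using h0) ?_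
        rw [key true]
        intro i hm
        have := h (i+1) (by simp; omega)
        simpa using this
      · refine Alt.pos (by simpa using h0) ?_
        rw [key false]
        intro i hm
        have := h (i+1) (by simp; omega)
        simpa using this

lemma alt_ne_nil {b : Bool} {L : List (List Bool)} (h : Alt b L) :
    ∀ w ∈ L, w ≠ [] := by
  induction h with
  | nil => simp
  | pos hp _ ih =>
    intro w hw
    rcases List.mem_cons.mp hw with h | h
    · subst h; exact (posStr_iff _ |>.mp hp).1
    · exact ih w h
  | neg hp _ ih =>
    intro w hw
    rcases List.mem_cons.mp hw with h | h
    · subst h; exact hp.1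
    · exact ih w h

lemma count_true_add_count_false (l : List Bool) :
    l.count true + l.count false = l.length := by
  induction l with
  | nil => simp
  | cons b t ih => cases b <;> simp [List.count_cons, ih] <;> omega

lemma cond_iff_alt (L : List (List Bool)) :
    (∀ i : Fin L.length,
        if (i : ℕ) % 2 = 0 then PosStr (L.get i) else PosStr (L.get i).reverse)
      ↔ Alt true L := by
  rw [alt_iff_cond L true]
  constructor
  · intro h i hi
    have := h ⟨i, hi⟩
    by_cases hp : i % 2 = 0
    · simpa [hp] using this
    · simp only [hp, if_false, ite_false] at this ⊢
      simp only [List.get_eq_getElem] at this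
      exact (posStr_reverse_iff _).mp this
  · intro h i
    have := h i.1 i.2
    by_cases hp : (i : ℕ) % 2 = 0
    · simpa [hp] using this
    · simp only [hp, if_false, ite_false] at this ⊢
      simp only [List.get_eq_getElem]
      exact (posStr_reverse_iff _).mpr this

end StrDec


/-- Every `(2m, m)`-string starting with `1` can be written uniquely as a
concatenation `w₁ w₂ ⋯ w_r` of nonempty blocks where the odd-numbered blocks
are positive strings and the reversals of the even-numbered blocks are
positive strings. -/
theorem string_decomposition (m : ℕ) (hm : 1 ≤ m) (l : List Bool)
    (hlen : l.length = 2 * m) (hcount : l.count true = m)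
    (hhead : l.head? = some true) :
    ∃! L : List (List Bool),
      L.flatten = l ∧ (∀ w ∈ L, w ≠ []) ∧
      ∀ i : Fin L.length,
        if (i : ℕ) % 2 = 0 then PosStr (L.get i) else PosStr (L.get i).reverse := by
  classical
  have hcf : l.count false = m := by
    have := StrDec.count_true_add_count_false l
    omega
  have hS : StrDec.S l = 0 := by
    rw [← StrDec.count_eq_iff, hcount, hcf]
  obtain ⟨L, hAlt, hFlat⟩ := StrDec.exists_alt_true l.length l rfl hS hhead
  refine ⟨L, ⟨hFlat, StrDec.alt_ne_nil hAlt, (StrDec.cond_iff_alt L).mpr hAlt⟩, ?_⟩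
  rintro L' ⟨hf', _, hcond'⟩
  exact StrDec.alt_unique L' true L ((StrDec.cond_iff_alt L').mp hcond') hAlt
    (hf'.trans hFlat.symm)
end

section
/- Fix an integer a ≥ 2 and an integer m ≥ 1. Then C(a·m − 1, m − 1) = Σ_{r=1}^{m} (a−1)^{r−1} · Σ ∏_{i=1}^{r} A_{m_i}, where the inner sum ranges over all compositions (m_1, …, m_r) of m into r positive integer parts, and A_k = (a·k)! / (k! · ((a−1)·k + 1)!). -/
open Finset

/-! ### Raney / Fuss–Catalan numbers and their convolution identities -/

def Rq (a r n : ℕ) : ℚ :=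
  if r = 0 then (if n = 0 then 1 else 0)
  else (r : ℚ) * ((a * n + (r - 1)).factorial : ℚ) /
    ((n.factorial : ℚ) * (((a - 1) * n + r).factorial : ℚ))

lemma factq_ne (k : ℕ) : ((k.factorial : ℚ)) ≠ 0 := by
  exact_mod_cast k.factorial_ne_zero

lemma Rq_zero_left (a n : ℕ) : Rq a 0 n = if n = 0 then 1 else 0 := by simp [Rq]

lemma Rq_zero_right' (a r : ℕ) : Rq a r 0 = 1 := by
  rcases r with _ | r
  · simp [Rq]
  · simp [Rq, Nat.factorial_succ]
    field_simp
    exact ⟨Nat.cast_add_one_ne_zero r, Nat.factorial_ne_zero r⟩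

set_option maxHeartbeats 1000000 in
lemma pascalRq (a : ℕ) (ha : 1 ≤ a) (r n : ℕ) :
    Rq a (r+1) (n+1) = Rq a r (n+1) + Rq a (r+a) n := by
  obtain ⟨b, rfl⟩ : ∃ b, a = b + 1 := ⟨a - 1, by omega⟩
  rcases r with _ | r
  · have h0 : Rq (b+1) 0 (n+1) = 0 := by simp [Rq]
    rw [h0, zero_add]
    simp only [Rq, zero_add, if_neg (by omega : ¬ (1 = 0)), if_neg (by omega : ¬ (b+1 = 0))]
    have e1 : (b+1) * (n+1) + (1-1) = ((b+1)*n + b) + 1 := by ring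
    have e2 : (b+1-1) * (n+1) + 1 = b*n + (b+1) := by
      have : (b+1-1) = b := by omega
      rw [this]; ring
    have e3 : (b+1)*n + (b+1-1) = (b+1)*n + b := by omega
    have e4 : (b+1-1)*n + (b+1) = b*n + (b+1) := by
      have : (b+1-1) = b := by omega
      rw [this]
    rw [e1, e2, e3, e4, Nat.factorial_succ ((b+1)*n + b), Nat.factorial_succ n]
    push_cast
    field_simp
    ring
  · simp only [Rq, show r+1+(b+1) = r+b+2 by omega, if_neg (by omega : ¬ (r+2 = 0)),
      if_neg (by omega : ¬ (r+1 = 0)), if_neg (by omega : ¬ (r+b+2 = 0))]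
    have hb : (b+1-1) = b := by omega
    rw [hb]
    have e1 : (b+1) * (n+1) + (r+2-1) = ((b+1)*n + (b + r + 1)) + 1 := by
      have : r + 2 - 1 = r + 1 := by omega
      rw [this]; ring
    have e2 : b * (n+1) + (r+2) = (b*n + (b+r+1)) + 1 := by ring
    have e3 : (b+1) * (n+1) + (r+1-1) = (b+1)*n + (b+r+1) := by
      have : r + 1 - 1 = r := by omega
      rw [this]; ring
    have e4 : b * (n+1) + (r+1) = b*n + (b+r+1) := by ring
    have e5 : (b+1) * n + (r+b+2-1) = (b+1)*n + (b+r+1) := by omega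
    have e6 : b * n + (r+b+2) = (b*n + (b+r+1)) + 1 := by omega
    rw [e1, e2, e3, e4, e5, e6, Nat.factorial_succ ((b+1)*n + (b+r+1)),
      Nat.factorial_succ (b*n + (b+r+1)), Nat.factorial_succ n]
    have h1 := factq_ne ((b+1)*n + (b+r+1))
    have h2 := factq_ne (b*n + (b+r+1))
    have h3 := factq_ne n
    push_cast
    field_simp
    ring

lemma convRq (a : ℕ) (ha : 1 ≤ a) (s : ℕ) :
    ∀ n r, ∑ k ∈ range (n+1), Rq a r k * Rq a s (n - k) = Rq a (r+s) n := by
  intro n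
  induction n with
  | zero =>
    intro r
    simp [Rq_zero_right']
  | succ n ihn =>
    intro r
    induction r with
    | zero =>
      rw [Finset.sum_eq_single 0]
      · simp [Rq_zero_left]
      · intro k _ hk
        simp [Rq_zero_left, hk]
      · intro h
        exact absurd (Finset.mem_range.2 (by omega)) h
    | succ r ihr =>
      rw [Finset.sum_range_succ'] at ihr ⊢
      have step : ∀ k ∈ range (n+1),
          Rq a (r+1) (k+1) * Rq a s (n + 1 - (k+1))
            = Rq a r (k+1) * Rq a s (n + 1 - (k+1))
              + Rq a (r+a) k * Rq a s (n - k) := by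
        intro k _
        rw [pascalRq a ha r k, add_mul, Nat.succ_sub_succ]
      rw [Finset.sum_congr rfl step, Finset.sum_add_distrib]
      have h0 : Rq a (r+1) 0 = Rq a r 0 := by rw [Rq_zero_right', Rq_zero_right']
      rw [h0, add_right_comm, ihr, ihn (r+a)]
      have : r + a + s = (r + s) + a := by omega
      rw [this, ← pascalRq a ha (r+s) n, show r+1+s = r+s+1 by omega]

/-! ### The telescoping identity for `C(a(n+1)-1, n)` -/

def Fq (b n r : ℕ) : ℚ :=
  if r ≤ n then
    ((b:ℚ)+1)^r * ((r:ℚ)+1+(((b+1)*(n+1):ℕ):ℚ)) * ((((b+2)*n + (b+1)).factorial : ℚ))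
      / (((n-r).factorial : ℚ) * ((((b+1)*(n+1) + r + 1):ℕ).factorial : ℚ))
  else 0

lemma Fq_step (b n r : ℕ) (h : r ≤ n) :
    ((b:ℚ)+1)^r * Rq (b+2) ((b+2)*(r+1)) (n-r) = Fq b n r - Fq b n (r+1) := by
  obtain ⟨d, rfl⟩ : ∃ d, n = r + d := ⟨n - r, by omega⟩
  rcases d with _ | e
  · rw [show r + 0 - r = 0 from by omega, Rq_zero_right']
    have h2 : Fq b (r+0) (r+1) = 0 := if_neg (by omega)
    rw [h2, sub_zero, Fq, if_pos (by omega : r ≤ r + 0)]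
    rw [show r + 0 - r = 0 from by omega]
    have i1 : (b+1)*(r+0+1) + r + 1 = ((b+2)*(r+0) + (b+1)) + 1 := by ring
    rw [i1, Nat.factorial_succ]
    have h3 := factq_ne ((b+2)*(r+0) + (b+1))
    push_cast
    field_simp
    ring
  · rw [show r + (e+1) - r = e + 1 from by omega]
    have hne : ¬ ((b+2)*(r+1) = 0) := by
      have : (b+2)*(r+1) = (b+2)*r + (b+2) := by ring
      omega
    rw [Rq, if_neg hne]
    have i1 : (b+2)*(e+1) + ((b+2)*(r+1) - 1) = (b+2)*(r+(e+1)) + (b+1) := by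
      have h5 : (b+2)*(r+1) = ((b+2)*r + (b+1)) + 1 := by ring
      have h6 : (b+2)*(e+1) = (b+2)*e + (b+2) := by ring
      have h7 : (b+2)*(r+(e+1)) = (b+2)*r + (b+2)*e + (b+2) := by ring
      omega
    have i2 : (b+2-1)*(e+1) + (b+2)*(r+1) = (b+1)*(r+(e+1)+1) + r + 1 := by
      have h5 : (b+2-1) = b+1 := by omega
      rw [h5]; ring
    rw [i1, i2]
    rw [Fq, if_pos (by omega : r ≤ r + (e+1)), Fq, if_pos (by omega : r + 1 ≤ r + (e+1))]
    rw [show r + (e+1) - r = e + 1 from by omega, show r + (e+1) - (r+1) = e from by omega]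
    have i3 : (b+1)*(r+(e+1)+1) + (r+1) + 1 = ((b+1)*(r+(e+1)+1) + r + 1) + 1 := by omega
    rw [i3, Nat.factorial_succ ((b+1)*(r+(e+1)+1) + r + 1), Nat.factorial_succ e]
    have h3 := factq_ne ((b+2)*(r+(e+1)) + (b+1))
    have h4 := factq_ne ((b+1)*(r+(e+1)+1) + r + 1)
    have h5 := factq_ne e
    push_cast
    field_simp
    ring

lemma mainRq (a : ℕ) (ha : 2 ≤ a) (n : ℕ) :
    ((a*(n+1) - 1).choose n : ℚ)
      = ∑ r ∈ range (n+1), ((a:ℚ)-1)^r * Rq a (a*(r+1)) (n-r) := by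
  obtain ⟨b, rfl⟩ : ∃ b, a = b + 2 := ⟨a-2, by omega⟩
  have key : ∀ r ∈ range (n+1),
      (((b+2:ℕ):ℚ)-1)^r * Rq (b+2) ((b+2)*(r+1)) (n-r) = Fq b n r - Fq b n (r+1) := by
    intro r hr
    have h1 : (((b+2:ℕ):ℚ)-1) = (b:ℚ)+1 := by push_cast; ring
    rw [h1]
    exact Fq_step b n r (by have := mem_range.mp hr; omega)
  rw [Finset.sum_congr rfl key, Finset.sum_range_sub' (Fq b n) (n+1)]
  have h2 : Fq b n (n+1) = 0 := if_neg (by omega)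
  rw [h2, sub_zero, Fq, if_pos (by omega : 0 ≤ n)]
  have hX : (b+2)*(n+1) - 1 = (b+2)*n + (b+1) := by
    have : (b+2)*(n+1) = ((b+2)*n + (b+1)) + 1 := by ring
    omega
  have hle : n ≤ (b+2)*n + (b+1) := by
    have : n ≤ (b+2)*n := Nat.le_mul_of_pos_left n (by omega)
    omega
  have hsub : ((b+2)*n + (b+1)) - n = (b+1)*(n+1) := by
    have h5 : (b+2)*n = (b+1)*n + n := by ring
    have h6 : (b+1)*(n+1) = (b+1)*n + (b+1) := by ring
    omega
  rw [hX, Nat.cast_choose ℚ hle, hsub]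
  have i1 : (b+1)*(n+1) + 0 + 1 = ((b+1)*(n+1)) + 1 := by omega
  rw [i1, Nat.factorial_succ ((b+1)*(n+1))]
  have h3 := factq_ne ((b+2)*n + (b+1))
  have h4 := factq_ne ((b+1)*(n+1))
  have h5 := factq_ne n
  push_cast
  rw [show n - 0 = n from by omega]
  field_simp
  ring

/-! ### The recurrence satisfied by the Raney sums -/

lemma swap_tri (n : ℕ) (F : ℕ → ℕ → ℚ) :
    ∑ k ∈ range n, ∑ r ∈ range (n - k), F k r
      = ∑ r ∈ range n, ∑ k ∈ range (n - r), F k r := by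
  rw [Finset.sum_sigma', Finset.sum_sigma']
  refine Finset.sum_nbij' (i := fun p => ⟨p.2, p.1⟩) (j := fun p => ⟨p.2, p.1⟩)
    ?_ ?_ ?_ ?_ ?_
  · rintro ⟨k, r⟩ hp
    simp only [Finset.mem_sigma, mem_range] at hp ⊢
    omega
  · rintro ⟨r, k⟩ hp
    simp only [Finset.mem_sigma, mem_range] at hp ⊢
    omega
  · rintro ⟨k, r⟩ _; rfl
  · rintro ⟨r, k⟩ _; rfl
  · rintro ⟨k, r⟩ _; rfl

lemma hrec (a : ℕ) (ha : 2 ≤ a) (n : ℕ) :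
    Rq a 1 (n+1) + ((a:ℚ)-1) * ∑ k ∈ range n, Rq a 1 (k+1) *
        (∑ r ∈ range (n-k), ((a:ℚ)-1)^r * Rq a (a*(r+1)) (n-k-1-r))
      = ∑ r ∈ range (n+1), ((a:ℚ)-1)^r * Rq a (a*(r+1)) (n-r) := by
  have ha1 : 1 ≤ a := by omega
  have h1 : Rq a 1 (n+1) = Rq a a n := by
    have := pascalRq a ha1 0 n
    rw [Rq_zero_left] at this
    simpa using this
  have step1 : ∑ k ∈ range n, Rq a 1 (k+1) *
        (∑ r ∈ range (n-k), ((a:ℚ)-1)^r * Rq a (a*(r+1)) (n-k-1-r))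
      = ∑ k ∈ range n, ∑ r ∈ range (n-k),
          ((a:ℚ)-1)^r * (Rq a 1 (k+1) * Rq a (a*(r+1)) (n-k-1-r)) := by
    apply Finset.sum_congr rfl
    intro k _
    rw [Finset.mul_sum]
    apply Finset.sum_congr rfl
    intro r _
    ring
  rw [step1, swap_tri n (fun k r => ((a:ℚ)-1)^r * (Rq a 1 (k+1) * Rq a (a*(r+1)) (n-k-1-r)))]
  have step2 : ∀ r ∈ range n,
      ∑ k ∈ range (n-r), ((a:ℚ)-1)^r * (Rq a 1 (k+1) * Rq a (a*(r+1)) (n-k-1-r))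
        = ((a:ℚ)-1)^r * Rq a (a*(r+2)) (n-r-1) := by
    intro r hr
    have hrn : r < n := mem_range.mp hr
    obtain ⟨p, hp⟩ : ∃ p, n - r = p + 1 := ⟨n - r - 1, by omega⟩
    rw [← Finset.mul_sum, hp]
    have e1 : ∀ k ∈ range (p+1), Rq a 1 (k+1) * Rq a (a*(r+1)) (n-k-1-r)
        = Rq a 1 (k+1) * Rq a (a*(r+1)) (p-k) := by
      intro k hk
      have : n - k - 1 - r = p - k := by omega
      rw [this]
    rw [Finset.sum_congr rfl e1]
    have conv := convRq a ha1 (a*(r+1)) (p+1) 1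
    rw [Finset.sum_range_succ'] at conv
    have e2 : ∀ k ∈ range (p+1), Rq a 1 (k+1) * Rq a (a*(r+1)) (p+1-(k+1))
        = Rq a 1 (k+1) * Rq a (a*(r+1)) (p-k) := by
      intro k _
      rw [Nat.succ_sub_succ]
    rw [Finset.sum_congr rfl e2, Rq_zero_right'] at conv
    have pas := pascalRq a ha1 (a*(r+1)) p
    have hsum : ∑ k ∈ range (p+1), Rq a 1 (k+1) * Rq a (a*(r+1)) (p-k)
        = Rq a (a*(r+1)+a) p := by
      have e3 : 1 + a*(r+1) = a*(r+1) + 1 := by omega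
      rw [e3] at conv
      rw [pas] at conv
      simp only [Nat.sub_zero] at conv
      linarith [conv]
    rw [hsum, show p + 1 - 1 = p from rfl, show a*(r+1)+a = a*(r+2) from by ring]
  rw [Finset.sum_congr rfl step2, h1, Finset.mul_sum]
  rw [Finset.sum_range_succ' (fun r => ((a:ℚ)-1)^r * Rq a (a*(r+1)) (n-r)) n]
  simp only [pow_zero, one_mul, Nat.sub_zero, Nat.mul_one]
  have e4 : ∀ r ∈ range n,
      ((a:ℚ)-1) * (((a:ℚ)-1)^r * Rq a (a*(r+2)) (n-r-1))
        = ((a:ℚ)-1)^(r+1) * Rq a (a*(r+1+1)) (n-(r+1)) := by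
    intro r _
    rw [show n - (r+1) = n - r - 1 from by omega, pow_succ]
    ring
  rw [Finset.sum_congr rfl e4, show a * 1 = a from by ring]
  exact add_comm _ _

/-! ### Splitting a composition into its first block and the rest -/

def consComp {j : ℕ} (k : ℕ) (c : Composition j) : Composition (k+1+j) where
  blocks := (k+1) :: c.blocks
  blocks_pos := by
    intro i hi
    rcases List.mem_cons.mp hi with h | h
    · omega
    · exact c.blocks_pos h
  blocks_sum := by simp [c.blocks_sum]

def castComp {i j : ℕ} (h : i = j) (c : Composition i) : Composition j := h ▸ c

lemma castComp_blocks {i j : ℕ} (h : i = j) (c : Composition i) :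
    (castComp h c).blocks = c.blocks := by subst h; rfl

lemma comp_heq {i j : ℕ} (h : i = j) (c : Composition i) (d : Composition j)
    (hb : c.blocks = d.blocks) : HEq c d := by
  subst h
  exact heq_of_eq (Composition.ext hb)

lemma blocks_ne_nil {m : ℕ} (c : Composition (m+1)) : c.blocks ≠ [] := by
  intro h
  have := c.blocks_sum
  rw [h] at this
  simp at this

lemma head_pos {m : ℕ} (c : Composition (m+1)) :
    0 < c.blocks.head (blocks_ne_nil c) :=
  c.blocks_pos (List.head_mem _)

lemma head_le {m : ℕ} (c : Composition (m+1)) :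
    c.blocks.head (blocks_ne_nil c) ≤ m + 1 := by
  have h := c.blocks_sum
  have h1 := List.cons_head_tail (blocks_ne_nil c)
  have h2 : (c.blocks.head (blocks_ne_nil c) :: c.blocks.tail).sum = m + 1 := by
    rw [h1, h]
  rw [List.sum_cons] at h2
  omega

def tailComp {m : ℕ} (c : Composition (m+1)) :
    Composition (m + 1 - c.blocks.head (blocks_ne_nil c)) where
  blocks := c.blocks.tail
  blocks_pos := fun hi => c.blocks_pos (List.mem_of_mem_tail hi)
  blocks_sum := by
    have h := c.blocks_sum
    have h1 := List.cons_head_tail (blocks_ne_nil c)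
    have h2 : (c.blocks.head (blocks_ne_nil c) :: c.blocks.tail).sum = m + 1 := by
      rw [h1, h]
    rw [List.sum_cons] at h2
    omega

lemma head_of_eq {l₁ l₂ : List ℕ} (h : l₁ = l₂) (h1 : l₁ ≠ []) (h2 : l₂ ≠ []) :
    l₁.head h1 = l₂.head h2 := by subst h; rfl

lemma sum_composition_succ (n : ℕ) (F : List ℕ → ℚ) :
    (∑ c : Composition (n+1), F c.blocks)
      = ∑ k ∈ range (n+1), ∑ c : Composition (n-k), F ((k+1) :: c.blocks) := by
  rw [Finset.sum_sigma' (range (n+1)) (fun k => (univ : Finset (Composition (n-k))))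
      (fun k c => F ((k+1) :: c.blocks))]
  refine Finset.sum_bij'
    (i := fun c _ => (⟨c.blocks.head (blocks_ne_nil c) - 1,
        castComp (by have := head_pos c; omega) (tailComp c)⟩ :
          Σ k : ℕ, Composition (n - k)))
    (j := fun p hp => castComp
        (by have := Finset.mem_sigma.mp hp; have h2 := mem_range.mp (this.1); omega)
        (consComp p.1 p.2))
    ?_ ?_ ?_ ?_ ?_
  · intro c _
    simp only [Finset.mem_sigma, mem_range]
    refine ⟨?_, Finset.mem_univ _⟩
    have := head_le c
    have := head_pos c
    omega
  · intro p hp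
    exact Finset.mem_univ _
  · intro c _
    apply Composition.ext
    rw [castComp_blocks]
    simp only [consComp, castComp_blocks]
    have h1 : c.blocks.head (blocks_ne_nil c) - 1 + 1 = c.blocks.head (blocks_ne_nil c) := by
      have := head_pos c; omega
    rw [h1]
    show c.blocks.head (blocks_ne_nil c) :: c.blocks.tail = c.blocks
    exact List.cons_head_tail _
  · rintro ⟨k, c⟩ hp
    have hk : k < n + 1 := mem_range.mp (Finset.mem_sigma.mp hp).1
    set X := castComp
        (show k+1+(n-k) = n+1 by have := mem_range.mp (Finset.mem_sigma.mp hp).1; omega)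
          (consComp k c) with hX
    have hblocks : X.blocks = (k+1) :: c.blocks := by
      rw [hX, castComp_blocks]; rfl
    have hhead : X.blocks.head (blocks_ne_nil X) = k + 1 :=
      head_of_eq hblocks (blocks_ne_nil X) (List.cons_ne_nil _ _)
    refine Sigma.ext ?_ ?_
    · show X.blocks.head (blocks_ne_nil X) - 1 = k
      omega
    · refine comp_heq ?_ _ _ ?_
      · show n - (X.blocks.head (blocks_ne_nil X) - 1) = n - k
        omega
      · rw [castComp_blocks]
        show X.blocks.tail = c.blocks
        rw [hblocks]
        rfl
  · intro c _
    have h1 : c.blocks.head (blocks_ne_nil c) - 1 + 1 = c.blocks.head (blocks_ne_nil c) := by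
      have := head_pos c; omega
    show F c.blocks = F (_ :: _)
    rw [castComp_blocks, h1]
    show F c.blocks = F (c.blocks.head (blocks_ne_nil c) :: c.blocks.tail)
    rw [List.cons_head_tail]

lemma comp_zero_blocks (c : Composition 0) : c.blocks = [] := by
  rcases h : c.blocks with _ | ⟨x, l⟩
  · rfl
  · exfalso
    have hx : 0 < x := c.blocks_pos (by rw [h]; exact List.mem_cons_self)
    have hs := c.blocks_sum
    rw [h, List.sum_cons] at hs
    omega

lemma sum_comp_zero (F : List ℕ → ℚ) :
    ∑ c : Composition 0, F c.blocks = F [] := by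
  have hu : ∀ c : Composition 0, F c.blocks = F [] := fun c => by rw [comp_zero_blocks c]
  rw [Finset.sum_congr rfl (fun c _ => hu c), Finset.sum_const, Finset.card_univ,
    composition_card]
  norm_num

/-! ### Putting everything together -/

lemma blocks_length_ne_zero {m : ℕ} (c : Composition (m+1)) : c.blocks.length ≠ 0 := by
  intro h
  exact blocks_ne_nil c (List.length_eq_zero_iff.mp h)

lemma Af_Rq (a k : ℕ) :
    ((a * k).factorial : ℚ) / ((k.factorial : ℚ) * (((a - 1) * k + 1).factorial : ℚ))
      = Rq a 1 k := by
  simp [Rq]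

lemma g_eq_h (a : ℕ) (ha : 2 ≤ a) : ∀ n : ℕ,
    (∑ c : Composition (n+1), ((a : ℚ) - 1) ^ (c.length - 1) *
        (c.blocks.map (fun k =>
          ((a * k).factorial : ℚ) /
            ((k.factorial : ℚ) * (((a - 1) * k + 1).factorial : ℚ)))).prod)
      = ∑ r ∈ range (n+1), ((a:ℚ)-1)^r * Rq a (a*(r+1)) (n-r) := by
  intro n
  induction n using Nat.strong_induction_on with
  | _ n ih =>
    rw [show (∑ c : Composition (n+1), ((a : ℚ) - 1) ^ (c.length - 1) *
        (c.blocks.map (fun k =>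
          ((a * k).factorial : ℚ) /
            ((k.factorial : ℚ) * (((a - 1) * k + 1).factorial : ℚ)))).prod)
      = ∑ c : Composition (n+1), (fun l => ((a : ℚ) - 1) ^ (l.length - 1) *
        (l.map (fun k =>
          ((a * k).factorial : ℚ) /
            ((k.factorial : ℚ) * (((a - 1) * k + 1).factorial : ℚ)))).prod) c.blocks
      from rfl]
    rw [sum_composition_succ n (fun l => ((a : ℚ) - 1) ^ (l.length - 1) *
        (l.map (fun k =>
          ((a * k).factorial : ℚ) /
            ((k.factorial : ℚ) * (((a - 1) * k + 1).factorial : ℚ)))).prod)]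
    simp only [List.length_cons, List.map_cons, List.prod_cons, Nat.add_sub_cancel]
    rw [Finset.sum_range_succ]
    rw [show n - n = 0 from by omega]
    rw [sum_comp_zero (fun l => ((a : ℚ) - 1) ^ l.length *
        (((a * (n+1)).factorial : ℚ) /
            (((n+1).factorial : ℚ) * (((a - 1) * (n+1) + 1).factorial : ℚ)) *
          (l.map (fun k =>
          ((a * k).factorial : ℚ) /
            ((k.factorial : ℚ) * (((a - 1) * k + 1).factorial : ℚ)))).prod))]
    simp only [List.length_nil, pow_zero, List.map_nil, List.prod_nil, mul_one, one_mul]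
    have step : ∀ k ∈ range n,
        (∑ c : Composition (n-k), ((a : ℚ) - 1) ^ c.blocks.length *
          (((a * (k+1)).factorial : ℚ) /
              (((k+1).factorial : ℚ) * (((a - 1) * (k+1) + 1).factorial : ℚ)) *
            (c.blocks.map (fun j =>
              ((a * j).factorial : ℚ) /
                ((j.factorial : ℚ) * (((a - 1) * j + 1).factorial : ℚ)))).prod))
          = Rq a 1 (k+1) *
              (((a:ℚ)-1) * ∑ r ∈ range (n-k), ((a:ℚ)-1)^r * Rq a (a*(r+1)) (n-k-1-r)) := by
      intro k hk
      have hkn : k < n := mem_range.mp hk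
      obtain ⟨m, hm⟩ : ∃ m, n - k = m + 1 := ⟨n - k - 1, by omega⟩
      rw [hm]
      have inner : ∀ c : Composition (m+1),
          ((a : ℚ) - 1) ^ c.blocks.length *
            (((a * (k+1)).factorial : ℚ) /
              (((k+1).factorial : ℚ) * (((a - 1) * (k+1) + 1).factorial : ℚ)) *
            (c.blocks.map (fun j =>
              ((a * j).factorial : ℚ) /
                ((j.factorial : ℚ) * (((a - 1) * j + 1).factorial : ℚ)))).prod)
          = (Rq a 1 (k+1) * ((a:ℚ)-1)) *
              (((a : ℚ) - 1) ^ (c.length - 1) *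
                (c.blocks.map (fun j =>
                  ((a * j).factorial : ℚ) /
                    ((j.factorial : ℚ) * (((a - 1) * j + 1).factorial : ℚ)))).prod) := by
        intro c
        rw [Af_Rq]
        have hlen : c.blocks.length = (c.blocks.length - 1) + 1 := by
          have := blocks_length_ne_zero c
          omega
        rw [show ((a : ℚ) - 1) ^ c.blocks.length
            = ((a:ℚ)-1) * ((a : ℚ) - 1) ^ (c.blocks.length - 1) from by
          conv_lhs => rw [hlen]
          rw [pow_succ]; ring]
        show _ = (Rq a 1 (k+1) * ((a:ℚ)-1)) * (((a : ℚ) - 1) ^ (c.blocks.length - 1) * _)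
        ring
      rw [Finset.sum_congr rfl (fun c _ => inner c), ← Finset.mul_sum]
      rw [ih m (by omega)]
      have : ∀ r ∈ range (m+1), ((a:ℚ)-1)^r * Rq a (a*(r+1)) (m-r)
          = ((a:ℚ)-1)^r * Rq a (a*(r+1)) (m+1-1-r) := by
        intro r _
        rw [show m+1-1-r = m-r from by omega]
      rw [Finset.sum_congr rfl this]
      ring
    rw [Finset.sum_congr rfl step]
    rw [← hrec a ha n, Af_Rq]
    have : ∑ k ∈ range n, Rq a 1 (k+1) *
          (((a:ℚ)-1) * ∑ r ∈ range (n-k), ((a:ℚ)-1)^r * Rq a (a*(r+1)) (n-k-1-r))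
        = ((a:ℚ)-1) * ∑ k ∈ range n, Rq a 1 (k+1) *
          (∑ r ∈ range (n-k), ((a:ℚ)-1)^r * Rq a (a*(r+1)) (n-k-1-r)) := by
      rw [Finset.mul_sum]
      apply Finset.sum_congr rfl
      intro k _
      ring
    rw [this]
    ring

/-- `C(a·m − 1, m − 1)` equals `Σ_{r=1}^{m} (a−1)^{r−1} Σ ∏_{i=1}^{r} A_{m_i}`,
the inner sum ranging over compositions `(m_1, …, m_r)` of `m` into `r` positive
parts, where `A_k = (a·k)! / (k! · ((a−1)·k + 1)!)` are the Fuss–Catalan numbers.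
(The double sum is expressed as a single sum over all compositions of `m`.) -/
theorem choose_eq_sum_over_compositions (a m : ℕ) (ha : 2 ≤ a) (hm : 1 ≤ m) :
    ((a * m - 1).choose (m - 1) : ℚ) =
      ∑ c : Composition m, ((a : ℚ) - 1) ^ (c.length - 1) *
        (c.blocks.map (fun k =>
          ((a * k).factorial : ℚ) /
            ((k.factorial : ℚ) * (((a - 1) * k + 1).factorial : ℚ)))).prod := by
  obtain ⟨n, rfl⟩ : ∃ n, m = n + 1 := ⟨m - 1, by omega⟩
  rw [show n + 1 - 1 = n from rfl, g_eq_h a ha n]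
  exact mainRq a ha n
end

section
/- Fix an integer a ≥ 2 and an integer m ≥ 1. Let B_m denote the number of pyramids of size m and let R_k denote the number of right 0-pyramids of size k. Then B_m = Σ_{r=1}^{m} (a−1)^{r−1} · Σ ∏_{i=1}^{r} R_{m_i}, where the inner sum ranges over all compositions (m_1, …, m_r) of m into r positive integer parts. -/
namespace PyramidProof

open Finset

abbrev Pc := ℤ × ℕ

def ov (a : ℕ) (x y : ℤ) : Prop := |x - y| ≤ (a : ℤ) - 1

instance (a : ℕ) (x y : ℤ) : Decidable (ov a x y) := by unfold ov; infer_instance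

lemma ov_symm {a : ℕ} {x y : ℤ} (h : ov a x y) : ov a y x := by
  unfold ov at *; rw [abs_sub_comm]; exact h

lemma ov_iff {a : ℕ} {x y : ℤ} : ov a x y ↔ x - y ≤ (a:ℤ) - 1 ∧ y - x ≤ (a:ℤ) - 1 := by
  unfold ov; exact abs_sub_le_iff

/-- fuel-based level function -/
def lvlF (a : ℕ) (Q S : Finset Pc) : ℕ → ℕ → ℤ → ℕ
  | 0, _, x => (Q.filter (fun q => ov a q.1 x)).sup (fun q => q.2 + 1)
  | (f+1), j, x =>
      max ((Q.filter (fun q => ov a q.1 x)).sup (fun q => q.2 + 1))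
        ((S.filter (fun v => v.2 < j ∧ ov a v.1 x)).sup (fun v => lvlF a Q S f v.2 v.1 + 1))

lemma lvlF_zero_j (a : ℕ) (Q S : Finset Pc) (f : ℕ) (x : ℤ) :
    lvlF a Q S f 0 x = (Q.filter (fun q => ov a q.1 x)).sup (fun q => q.2 + 1) := by
  cases f with
  | zero => rfl
  | succ f =>
    show max _ _ = _
    have : (S.filter (fun v => v.2 < 0 ∧ ov a v.1 x)) = ∅ := by
      apply Finset.filter_false_of_mem; intro v _; simp
    rw [this]
    simp

lemma lvlF_congr (a : ℕ) (Q S : Finset Pc) :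
    ∀ f₁ f₂ j x, j ≤ f₁ → j ≤ f₂ → lvlF a Q S f₁ j x = lvlF a Q S f₂ j x := by
  intro f₁
  induction f₁ with
  | zero =>
    intro f₂ j x h1 h2
    have : j = 0 := Nat.le_zero.mp h1
    subst this
    rw [lvlF_zero_j, lvlF_zero_j]
  | succ f₁ ih =>
    intro f₂ j x h1 h2
    cases f₂ with
    | zero =>
      have : j = 0 := Nat.le_zero.mp h2
      subst this
      rw [lvlF_zero_j, lvlF_zero_j]
    | succ f₂ =>
      show max _ _ = max _ _
      congr 1
      apply Finset.sup_congr rfl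
      intro v hv
      have hv' := Finset.mem_filter.mp hv
      have : v.2 ≤ f₁ := by omega
      have : lvlF a Q S f₁ v.2 v.1 = lvlF a Q S f₂ v.2 v.1 := ih f₂ v.2 v.1 this (by omega)
      rw [this]

def lvl (a : ℕ) (Q S : Finset Pc) (j : ℕ) (x : ℤ) : ℕ := lvlF a Q S j j x

lemma lvl_eq (a : ℕ) (Q S : Finset Pc) (j : ℕ) (x : ℤ) :
    lvl a Q S j x = max ((Q.filter (fun q => ov a q.1 x)).sup (fun q => q.2 + 1))
      ((S.filter (fun v => v.2 < j ∧ ov a v.1 x)).sup (fun v => lvl a Q S v.2 v.1 + 1)) := by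
  cases j with
  | zero =>
    rw [show lvl a Q S 0 x = lvlF a Q S 0 0 x from rfl, lvlF_zero_j]
    have : (S.filter (fun v => v.2 < 0 ∧ ov a v.1 x)) = ∅ := by
      apply Finset.filter_false_of_mem; intro v _; simp
    rw [this]; simp
  | succ j =>
    show max _ _ = max _ _
    congr 1
    apply Finset.sup_congr rfl
    intro v hv
    have hv' := Finset.mem_filter.mp hv
    have : lvlF a Q S j v.2 v.1 = lvlF a Q S v.2 v.2 v.1 := lvlF_congr a Q S j v.2 v.2 v.1 (by omega) le_rfl
    rw [this]; rfl

lemma lvl_ge_q {a : ℕ} {Q S : Finset Pc} {j : ℕ} {x : ℤ} {q : Pc}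
    (hq : q ∈ Q) (hov : ov a q.1 x) : q.2 + 1 ≤ lvl a Q S j x := by
  rw [lvl_eq]
  exact le_max_of_le_left (Finset.le_sup (f := fun q : PyramidProof.Pc => q.2 + 1) (Finset.mem_filter.mpr ⟨hq, hov⟩))

lemma lvl_ge_S {a : ℕ} {Q S : Finset Pc} {j : ℕ} {x : ℤ} {v : Pc}
    (hv : v ∈ S) (hj : v.2 < j) (hov : ov a v.1 x) :
    lvl a Q S v.2 v.1 + 1 ≤ lvl a Q S j x := by
  conv_rhs => rw [lvl_eq]
  exact le_max_of_le_right (Finset.le_sup (f := fun v : PyramidProof.Pc => lvl a Q S v.2 v.1 + 1)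
    (Finset.mem_filter.mpr ⟨hv, hj, hov⟩))

lemma lvl_le {a : ℕ} {Q S : Finset Pc} {j : ℕ} {x : ℤ} {c : ℕ}
    (h1 : ∀ q ∈ Q, ov a q.1 x → q.2 + 1 ≤ c)
    (h2 : ∀ v ∈ S, v.2 < j → ov a v.1 x → lvl a Q S v.2 v.1 + 1 ≤ c) :
    lvl a Q S j x ≤ c := by
  rw [lvl_eq]
  apply max_le
  · apply Finset.sup_le
    intro q hq
    have hq' := Finset.mem_filter.mp hq
    exact h1 q hq'.1 hq'.2
  · apply Finset.sup_le
    intro v hv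
    have hv' := Finset.mem_filter.mp hv
    exact h2 v hv'.1 hv'.2.1 hv'.2.2

lemma lvl_pos_attain {a : ℕ} {Q S : Finset Pc} {j : ℕ} {x : ℤ}
    (h : 0 < lvl a Q S j x) :
    (∃ q ∈ Q, ov a q.1 x ∧ lvl a Q S j x = q.2 + 1) ∨
      (∃ v ∈ S, v.2 < j ∧ ov a v.1 x ∧ lvl a Q S j x = lvl a Q S v.2 v.1 + 1) := by
  rw [lvl_eq] at h ⊢
  rcases max_cases ((Q.filter (fun q => ov a q.1 x)).sup (fun q => q.2 + 1))
    ((S.filter (fun v => v.2 < j ∧ ov a v.1 x)).sup (fun v => lvl a Q S v.2 v.1 + 1)) with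
    ⟨heq, _⟩ | ⟨heq, _⟩
  · left
    rw [heq] at h ⊢
    have hne : (Q.filter (fun q => ov a q.1 x)).Nonempty := by
      by_contra hne
      rw [Finset.not_nonempty_iff_eq_empty.mp hne] at h
      simp at h
    obtain ⟨q, hq, hq2⟩ := Finset.exists_mem_eq_sup _ hne (fun q => q.2 + 1)
    have hq' := Finset.mem_filter.mp hq
    exact ⟨q, hq'.1, hq'.2, hq2⟩
  · right
    rw [heq] at h ⊢
    have hne : (S.filter (fun v => v.2 < j ∧ ov a v.1 x)).Nonempty := by
      by_contra hne
      rw [Finset.not_nonempty_iff_eq_empty.mp hne] at h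
      simp at h
    obtain ⟨v, hv, hv2⟩ := Finset.exists_mem_eq_sup _ hne (fun v => lvl a Q S v.2 v.1 + 1)
    have hv' := Finset.mem_filter.mp hv
    exact ⟨v, hv'.1, hv'.2.1, hv'.2.2, hv2⟩


section PyrBasic

variable {a : ℕ} {P : Finset Pc}

lemma supp' (hP : IsPyramid a P) {p : Pc} (hp : p ∈ P) (h1 : 1 ≤ p.2) :
    ∃ q ∈ P, q.2 + 1 = p.2 ∧ ov a q.1 p.1 := by
  obtain ⟨q, hq, hq2, hq3⟩ := hP.2.2.2 p hp h1
  exact ⟨q, hq, by omega, ov_symm (by exact hq3)⟩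

lemma sep' (hP : IsPyramid a P) {p q : Pc} (hp : p ∈ P) (hq : q ∈ P)
    (h2 : p.2 = q.2) (hne : p ≠ q) : ¬ ov a p.1 q.1 := by
  intro hov
  have h := hP.2.2.1 p hp q hq h2 hne
  have := le_trans h hov
  omega

lemma negmin (hP : IsPyramid a P) {w : Pc} (hw : w ∈ P) (hneg : w.1 < 0) :
    ∃ z ∈ P, z.1 < 0 ∧ 1 - (a:ℤ) ≤ z.1 ∧ z.1 ≤ -1 ∧ 1 ≤ z.2 ∧
      ∀ w' ∈ P, w'.1 < 0 → z.2 ≤ w'.2 ∧ (w'.2 = z.2 → w' = z) := by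
  classical
  set N := P.filter (fun p : Pc => p.1 < 0) with hN
  have hNne : N.Nonempty := ⟨w, Finset.mem_filter.mpr ⟨hw, hneg⟩⟩
  have hHne : (N.image Prod.snd).Nonempty := hNne.image _
  set hstar := (N.image Prod.snd).min' hHne with hhstar
  have hmem := (N.image Prod.snd).min'_mem hHne
  obtain ⟨z, hzN, hz2⟩ := Finset.mem_image.mp hmem
  have hzP : z ∈ P := (Finset.mem_filter.mp hzN).1
  have hzneg : z.1 < 0 := (Finset.mem_filter.mp hzN).2
  have hmin : ∀ w' ∈ P, w'.1 < 0 → hstar ≤ w'.2 := by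
    intro w' hw' hw'neg
    exact Finset.min'_le _ _ (Finset.mem_image_of_mem _ (Finset.mem_filter.mpr ⟨hw', hw'neg⟩))
  have haux : ∀ z' ∈ P, z'.1 < 0 → z'.2 = hstar →
      1 - (a:ℤ) ≤ z'.1 ∧ z'.1 ≤ -1 ∧ 1 ≤ z'.2 := by
    intro z' hz' hz'neg hz'2
    have h1 : 1 ≤ z'.2 := by
      by_contra h
      have : z'.2 = 0 := by omega
      have := hP.2.1 z' hz' this
      rw [this] at hz'neg
      simp at hz'neg
    obtain ⟨q, hq, hq2, hq3⟩ := supp' hP hz' h1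
    have hqpos : 0 ≤ q.1 := by
      by_contra h
      have := hmin q hq (by omega)
      omega
    rw [ov_iff] at hq3
    refine ⟨by omega, by omega, h1⟩
  obtain ⟨hzb1, hzb2, hzb3⟩ := haux z hzP hzneg hz2
  refine ⟨z, hzP, hzneg, hzb1, hzb2, hzb3, ?_⟩
  intro w' hw' hw'neg
  refine ⟨hz2 ▸ hmin w' hw' hw'neg, ?_⟩
  intro hw'2
  by_contra hne
  obtain ⟨hwb1, hwb2, _⟩ := haux w' hw' hw'neg (by omega)
  have hsep := hP.2.2.1 w' hw' z hzP (by omega) hne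
  have hub : |w'.1 - z.1| ≤ (a:ℤ) - 2 := abs_le.mpr ⟨by omega, by omega⟩
  have := le_trans hsep hub
  omega

lemma levels_surj (hP : IsPyramid a P) :
    ∀ n : ℕ, ∀ p ∈ P, p.2 = n → ∀ i ≤ n, ∃ q ∈ P, q.2 = i := by
  intro n
  induction n using Nat.strong_induction_on with
  | _ n ih =>
    intro p hp hpn i hi
    rcases eq_or_lt_of_le hi with h | h
    · exact ⟨p, hp, by omega⟩
    · have h1 : 1 ≤ p.2 := by omega
      obtain ⟨q, hq, hq2, _⟩ := supp' hP hp h1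
      exact ih q.2 (by omega) q hq rfl i (by omega)

lemma height_lt_card (hP : IsPyramid a P) {p : Pc} (hp : p ∈ P) : p.2 < P.card := by
  classical
  have hsub : Finset.range (p.2 + 1) ⊆ P.image Prod.snd := by
    intro i hi
    obtain ⟨q, hq, hq2⟩ := levels_surj hP p.2 p hp rfl i (by
      have := Finset.mem_range.mp hi; omega)
    exact Finset.mem_image.mpr ⟨q, hq, by omega⟩
  calc p.2 + 1 = (Finset.range (p.2+1)).card := by simp
    _ ≤ (P.image Prod.snd).card := Finset.card_le_card hsub
    _ ≤ P.card := Finset.card_image_le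

lemma col_bound (ha : 1 ≤ a) (hP : IsPyramid a P) :
    ∀ n : ℕ, ∀ p ∈ P, p.2 = n → |p.1| ≤ ((a:ℤ) - 1) * n := by
  intro n
  induction n using Nat.strong_induction_on with
  | _ n ih =>
    intro p hp hpn
    cases Nat.eq_zero_or_pos n with
    | inl h0 =>
      have := hP.2.1 p hp (by omega)
      rw [this]
      have : ((a:ℤ) - 1) * n = (a - 1 : ℤ) * (n:ℤ) := rfl
      have h1 : (1:ℤ) ≤ (a:ℤ) := by exact_mod_cast ha
      have h2 : (0:ℤ) ≤ (n:ℤ) := Int.natCast_nonneg n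
      simp only [Prod.fst]
      have : |(0:ℤ)| = 0 := abs_zero
      rw [this]
      exact mul_nonneg (by omega) h2
    | inr h1 =>
      obtain ⟨q, hq, hq2, hq3⟩ := supp' hP hp (by omega)
      have hIH := ih q.2 (by omega) q hq rfl
      have habs : |p.1| - |q.1| ≤ |p.1 - q.1| := abs_sub_abs_le_abs_sub _ _
      have hq3' : |q.1 - p.1| ≤ (a:ℤ) - 1 := hq3
      rw [abs_sub_comm] at hq3'
      have hc : (q.2 : ℤ) = (n : ℤ) - 1 := by omega
      rw [hc] at hIH
      nlinarith [abs_nonneg p.1]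

end PyrBasic

section Assemble

def shiftF (s : ℤ) (P : Finset Pc) : Finset Pc := P.image (fun p => (p.1 + s, p.2))

def liftSet (a : ℕ) (Q : Finset Pc) (s : ℤ) (P' : Finset Pc) : Finset Pc :=
  (shiftF s P').image (fun p => (p.1, lvl a Q (shiftF s P') p.2 p.1))

def assemble (a : ℕ) (Q : Finset Pc) (s : ℤ) (P' : Finset Pc) : Finset Pc :=
  Q ∪ liftSet a Q s P'

def reach (a : ℕ) (P : Finset Pc) (p q : Pc) : Prop :=
  Relation.ReflTransGen (fun x y => y ∈ P ∧ ov a x.1 y.1 ∧ x.2 < y.2) p q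

noncomputable def upSet (a : ℕ) (P : Finset Pc) (z : Pc) : Finset Pc :=
  @Finset.filter _ (fun q => reach a P z q) (Classical.decPred _) P

noncomputable def fallSet (a : ℕ) (U : Finset Pc) (s : ℤ) : Finset Pc :=
  U.image (fun u => (u.1 - s, lvl a ∅ U u.2 u.1))

variable {a : ℕ} {Q P' : Finset Pc} {s : ℤ}

lemma mem_upSet {P : Finset Pc} {z x : Pc} :
    x ∈ upSet a P z ↔ x ∈ P ∧ reach a P z x := by
  unfold upSet
  exact @Finset.mem_filter _ _ (Classical.decPred _) _ _

lemma mem_shiftF {p : Pc} : p ∈ shiftF s P' ↔ ∃ q ∈ P', p = (q.1 + s, q.2) := by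
  unfold shiftF
  rw [Finset.mem_image]
  constructor
  · rintro ⟨q, hq, rfl⟩; exact ⟨q, hq, rfl⟩
  · rintro ⟨q, hq, rfl⟩; exact ⟨q, hq, rfl⟩

lemma S_bot (hP' : IsPyramid a P') : ((s : ℤ), (0 : ℕ)) ∈ shiftF s P' :=
  mem_shiftF.mpr ⟨(0, 0), hP'.1, by simp⟩

lemma S_h0 (hP' : IsPyramid a P') {v : Pc} (hv : v ∈ shiftF s P') (h0 : v.2 = 0) :
    v = ((s : ℤ), (0 : ℕ)) := by
  obtain ⟨q, hq, rfl⟩ := mem_shiftF.mp hv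
  have := hP'.2.1 q hq h0
  rw [this]
  simp

lemma S_sep (hP' : IsPyramid a P') {v w : Pc} (hv : v ∈ shiftF s P') (hw : w ∈ shiftF s P')
    (h2 : v.2 = w.2) (hne : v ≠ w) : ¬ ov a v.1 w.1 := by
  obtain ⟨q, hq, rfl⟩ := mem_shiftF.mp hv
  obtain ⟨r, hr, rfl⟩ := mem_shiftF.mp hw
  have hqr : q ≠ r := by rintro rfl; exact hne rfl
  have := sep' hP' hq hr h2 hqr
  intro hc
  apply this
  unfold ov at hc ⊢
  convert hc using 2
  ring

lemma S_supp (hP' : IsPyramid a P') {v : Pc} (hv : v ∈ shiftF s P') (h1 : 1 ≤ v.2) :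
    ∃ w ∈ shiftF s P', w.2 + 1 = v.2 ∧ ov a w.1 v.1 := by
  obtain ⟨q, hq, rfl⟩ := mem_shiftF.mp hv
  obtain ⟨r, hr, hr2, hr3⟩ := supp' hP' hq h1
  refine ⟨(r.1 + s, r.2), mem_shiftF.mpr ⟨r, hr, rfl⟩, hr2, ?_⟩
  unfold ov at hr3 ⊢
  convert hr3 using 2
  ring

lemma ov_refl (ha : 1 ≤ a) (x : ℤ) : ov a x x := by
  unfold ov; simp; omega

section Ctx

variable (ha : 2 ≤ a) (hQ : IsRightPyramid a Q) (hP' : IsPyramid a P')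
  (hs1 : 1 - (a:ℤ) ≤ s) (hs2 : s ≤ -1)

include ha hQ hP' hs1 hs2

lemma L_pos :
    ∀ v ∈ shiftF s P', 1 ≤ lvl a Q (shiftF s P') v.2 v.1 := by
  intro v hv
  rcases Nat.eq_zero_or_pos v.2 with h0 | h1
  · have hveq := S_h0 hP' hv h0
    have hov : ov a ((0:ℤ),(0:ℕ)).1 v.1 := by
      rw [hveq]; unfold ov; simp; rw [abs_lt]; omega
    have := lvl_ge_q (S := shiftF s P') (j := v.2) (x := v.1) hQ.1.1 hov
    omega
  · obtain ⟨w, hw, hw2, hw3⟩ := S_supp hP' hv h1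
    have := lvl_ge_S (Q := Q) (j := v.2) hw (by omega) hw3
    omega

lemma L_mono {v w : Pc} (hv : v ∈ shiftF s P') (hov : ov a v.1 w.1) (hlt : v.2 < w.2) :
    lvl a Q (shiftF s P') v.2 v.1 < lvl a Q (shiftF s P') w.2 w.1 := by
  have := lvl_ge_S (Q := Q) (j := w.2) (x := w.1) hv hlt hov
  omega

lemma L_mono' {v w : Pc} (hv : v ∈ shiftF s P') (hw : w ∈ shiftF s P')
    (hov : ov a v.1 w.1)
    (hlt : lvl a Q (shiftF s P') v.2 v.1 < lvl a Q (shiftF s P') w.2 w.1) : v.2 < w.2 := by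
  rcases lt_trichotomy v.2 w.2 with h | h | h
  · exact h
  · exfalso
    have hne : v ≠ w := by
      rintro rfl; omega
    exact S_sep hP' hv hw h hne hov
  · exfalso
    have := L_mono ha hQ hP' hs1 hs2 hw (ov_symm hov) h
    omega

lemma lift_injOn :
    Set.InjOn (fun v : Pc => (v.1, lvl a Q (shiftF s P') v.2 v.1)) (shiftF s P') := by
  intro v hv w hw heq
  simp only [Prod.mk.injEq] at heq
  obtain ⟨h1, h2⟩ := heq
  have hov : ov a v.1 w.1 := by rw [h1]; exact ov_refl (by omega) _
  have hvw : v.2 = w.2 := by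
    rcases lt_trichotomy v.2 w.2 with h | h | h
    · have := L_mono ha hQ hP' hs1 hs2 hv hov h; omega
    · exact h
    · have := L_mono ha hQ hP' hs1 hs2 hw (ov_symm hov) h; omega
  by_contra hne
  exact S_sep hP' hv hw hvw (by exact hne) hov

omit ha hQ hP' hs1 hs2 in
lemma mem_liftSet {x : Pc} :
    x ∈ liftSet a Q s P' ↔
      ∃ v ∈ shiftF s P', x = (v.1, lvl a Q (shiftF s P') v.2 v.1) := by
  unfold liftSet
  rw [Finset.mem_image]
  constructor
  · rintro ⟨v, hv, rfl⟩; exact ⟨v, hv, rfl⟩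
  · rintro ⟨v, hv, rfl⟩; exact ⟨v, hv, rfl⟩

omit ha hQ hP' hs1 hs2 in
lemma Q_lift_not_ov {q v : Pc} (hq : q ∈ Q) (hv : v ∈ shiftF s P')
    (hov : ov a q.1 v.1) : q.2 < lvl a Q (shiftF s P') v.2 v.1 := by
  have := lvl_ge_q (S := shiftF s P') (j := v.2) (x := v.1) hq hov
  omega

omit hQ hP' hs1 hs2 in
lemma lift_disjoint : Disjoint Q (liftSet a Q s P') := by
  rw [Finset.disjoint_left]
  intro x hxQ hxL
  obtain ⟨v, hv, rfl⟩ := mem_liftSet.mp hxL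
  have := Q_lift_not_ov (P' := P') (s := s) hxQ hv (ov_refl (a := a) (by omega) v.1)
  simp at this

lemma assemble_pyramid : IsPyramid a (assemble a Q s P') := by
  have hbotQ : ((0:ℤ),(0:ℕ)) ∈ Q := hQ.1.1
  refine ⟨Finset.mem_union_left _ hbotQ, ?_, ?_, ?_⟩
  · intro p hp h0
    rcases Finset.mem_union.mp hp with h | h
    · exact hQ.1.2.1 p h h0
    · exfalso
      obtain ⟨v, hv, rfl⟩ := mem_liftSet.mp h
      have := L_pos ha hQ hP' hs1 hs2 v hv
      simp only [Prod.snd] at h0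
      omega
  · intro p hp q hq h2 hne
    rcases Finset.mem_union.mp hp with hpQ | hpL <;>
      rcases Finset.mem_union.mp hq with hqQ | hqL
    · exact hQ.1.2.2.1 p hpQ q hqQ h2 hne
    · obtain ⟨v, hv, rfl⟩ := mem_liftSet.mp hqL
      by_contra hc
      simp only [Prod.fst, not_le] at hc
      have hov : ov a p.1 v.1 := by
        unfold ov; linarith
      have := Q_lift_not_ov (P' := P') (s := s) hpQ hv hov
      simp only [Prod.snd] at h2
      omega
    · obtain ⟨v, hv, rfl⟩ := mem_liftSet.mp hpL
      by_contra hc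
      simp only [Prod.fst, not_le] at hc
      rw [abs_sub_comm] at hc
      have hov : ov a q.1 v.1 := by
        unfold ov; linarith
      have := Q_lift_not_ov (P' := P') (s := s) hqQ hv hov
      simp only [Prod.snd] at h2
      omega
    · obtain ⟨v, hv, rfl⟩ := mem_liftSet.mp hpL
      obtain ⟨w, hw, rfl⟩ := mem_liftSet.mp hqL
      have hvw : v ≠ w := by
        rintro rfl; exact hne rfl
      have hnov : ¬ ov a v.1 w.1 := by
        intro hov
        simp only [Prod.snd] at h2
        have hveq : v.2 = w.2 := by
          rcases lt_trichotomy v.2 w.2 with h | h | h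
          · have := L_mono ha hQ hP' hs1 hs2 hv hov h; omega
          · exact h
          · have := L_mono ha hQ hP' hs1 hs2 hw (ov_symm hov) h; omega
        exact S_sep hP' hv hw hveq hvw hov
      unfold ov at hnov
      simp only [Prod.fst, not_le] at hnov ⊢
      linarith
  · intro p hp h1
    rcases Finset.mem_union.mp hp with hpQ | hpL
    · obtain ⟨q, hq, hq2, hq3⟩ := hQ.1.2.2.2 p hpQ h1
      exact ⟨q, Finset.mem_union_left _ hq, hq2, hq3⟩
    · obtain ⟨v, hv, rfl⟩ := mem_liftSet.mp hpL
      have hLpos : 0 < lvl a Q (shiftF s P') v.2 v.1 :=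
        L_pos ha hQ hP' hs1 hs2 v hv
      rcases lvl_pos_attain hLpos with ⟨q, hq, hov, heq⟩ | ⟨w, hw, hwlt, hov, heq⟩
      · refine ⟨q, Finset.mem_union_left _ hq, ?_, ?_⟩
        · simp only [Prod.snd]; omega
        · simp only [Prod.fst]
          unfold ov at hov
          rw [abs_sub_comm] at hov
          exact hov
      · refine ⟨(w.1, lvl a Q (shiftF s P') w.2 w.1),
          Finset.mem_union_right _ (mem_liftSet.mpr ⟨w, hw, rfl⟩), ?_, ?_⟩
        · simp only [Prod.snd]; omega
        · simp only [Prod.fst]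
          unfold ov at hov
          rw [abs_sub_comm] at hov
          exact hov

lemma assemble_card : (assemble a Q s P').card = Q.card + P'.card := by
  unfold assemble
  rw [Finset.card_union_of_disjoint (lift_disjoint ha)]
  congr 1
  unfold liftSet
  rw [Finset.card_image_of_injOn (lift_injOn ha hQ hP' hs1 hs2)]
  unfold shiftF
  rw [Finset.card_image_of_injective _ (fun p q h => by
    simp only [Prod.mk.injEq] at h
    exact Prod.ext (by omega) h.2)]

omit ha hQ hs1 hs2 in
lemma bz_mem : ((s : ℤ), lvl a Q (shiftF s P') 0 s) ∈ liftSet a Q s P' :=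
  mem_liftSet.mpr ⟨((s:ℤ), (0:ℕ)), S_bot hP', rfl⟩

lemma assemble_z {z : Pc} (hz : z ∈ assemble a Q s P') (hzn : z.1 < 0)
    (hzb1 : 1 - (a:ℤ) ≤ z.1) (hzb2 : z.1 ≤ -1)
    (hmin : ∀ w ∈ assemble a Q s P', w.1 < 0 → z.2 ≤ w.2) :
    z = ((s : ℤ), lvl a Q (shiftF s P') 0 s) := by
  have hzQ : z ∉ Q := fun h => by have := hQ.2 z h; omega
  have hzL : z ∈ liftSet a Q s P' := by
    rcases Finset.mem_union.mp hz with h | h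
    · exact absurd h hzQ
    · exact h
  obtain ⟨u, hu, rfl⟩ := mem_liftSet.mp hzL
  have hbzA : ((s : ℤ), lvl a Q (shiftF s P') 0 s) ∈ assemble a Q s P' :=
    Finset.mem_union_right _ (bz_mem hP')
  have hle := hmin _ hbzA (by simp only [Prod.fst]; omega)
  rcases Nat.eq_zero_or_pos u.2 with h0 | h1
  · have := S_h0 hP' hu h0
    rw [this]
  · exfalso
    have hov : ov a ((s:ℤ), (0:ℕ)).1 u.1 := by
      simp only [Prod.fst] at hzn hzb1 hzb2 ⊢
      unfold ov
      rw [abs_le]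
      constructor <;> omega
    have := L_mono ha hQ hP' hs1 hs2 (S_bot hP') hov (by simpa using h1)
    simp only [Prod.snd, Prod.fst] at this hle
    omega

lemma assemble_upSet :
    upSet a (assemble a Q s P') ((s : ℤ), lvl a Q (shiftF s P') 0 s) = liftSet a Q s P' := by
  ext x
  rw [mem_upSet]
  constructor
  · rintro ⟨hxA, hreach⟩
    clear hxA
    induction hreach with
    | refl => exact bz_mem hP'
    | tail hyz hstep ih =>
      rename_i b c
      obtain ⟨hcA, hov, hlt⟩ := hstep
      have hbL := ih
      obtain ⟨v, hv, rfl⟩ := mem_liftSet.mp hbL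
      rcases Finset.mem_union.mp hcA with hcQ | hcL
      · exfalso
        have := Q_lift_not_ov (P' := P') (s := s) hcQ hv (ov_symm hov)
        simp only [Prod.snd] at hlt
        omega
      · exact hcL
  · intro hxL
    refine ⟨Finset.mem_union_right _ hxL, ?_⟩
    obtain ⟨v, hv, rfl⟩ := mem_liftSet.mp hxL
    have key : ∀ n : ℕ, ∀ v ∈ shiftF s P', v.2 = n →
        reach a (assemble a Q s P') ((s : ℤ), lvl a Q (shiftF s P') 0 s)
          (v.1, lvl a Q (shiftF s P') v.2 v.1) := by
      intro n
      induction n using Nat.strong_induction_on with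
      | _ n ih =>
        intro v hv hvn
        rcases Nat.eq_zero_or_pos v.2 with h0 | h1
        · have hveq := S_h0 hP' hv h0
          rw [hveq]
          exact Relation.ReflTransGen.refl
        · obtain ⟨w, hw, hw2, hw3⟩ := S_supp hP' hv h1
          have hrw := ih w.2 (by omega) w hw rfl
          refine Relation.ReflTransGen.tail hrw ?_
          refine ⟨Finset.mem_union_right _ (mem_liftSet.mpr ⟨v, hv, rfl⟩), ?_, ?_⟩
          · exact hw3
          · exact L_mono ha hQ hP' hs1 hs2 hw hw3 (by omega)
    exact key v.2 v hv rfl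

omit hQ hP' hs1 hs2 in
lemma assemble_sdiff : assemble a Q s P' \ liftSet a Q s P' = Q := by
  have hd := lift_disjoint (Q := Q) (P' := P') (s := s) ha
  ext x
  rw [Finset.mem_sdiff]
  unfold assemble
  rw [Finset.mem_union]
  constructor
  · rintro ⟨h1 | h1, h2⟩
    · exact h1
    · exact absurd h1 h2
  · intro hx
    exact ⟨Or.inl hx, Finset.disjoint_left.mp hd hx⟩

lemma fall_lift_key : ∀ n : ℕ, ∀ v ∈ shiftF s P', v.2 = n →
    lvl a ∅ (liftSet a Q s P') (lvl a Q (shiftF s P') v.2 v.1) v.1 = v.2 := by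
  intro n
  induction n using Nat.strong_induction_on with
  | _ n ih =>
    intro v hv hvn
    have hle : lvl a ∅ (liftSet a Q s P') (lvl a Q (shiftF s P') v.2 v.1) v.1 ≤ v.2 := by
      apply lvl_le
      · intro q hq
        simp at hq
      · intro wh hwh hwlt hwov
        obtain ⟨w, hw, rfl⟩ := mem_liftSet.mp hwh
        simp only [Prod.fst, Prod.snd] at hwlt hwov ⊢
        have hw2 : w.2 < v.2 := L_mono' ha hQ hP' hs1 hs2 hw hv hwov hwlt
        have hIH := ih w.2 (by omega) w hw rfl
        omega
    have hge : v.2 ≤ lvl a ∅ (liftSet a Q s P') (lvl a Q (shiftF s P') v.2 v.1) v.1 := by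
      rcases Nat.eq_zero_or_pos v.2 with h0 | h1
      · omega
      · obtain ⟨w, hw, hw2, hw3⟩ := S_supp hP' hv h1
        have hmem : (w.1, lvl a Q (shiftF s P') w.2 w.1) ∈ liftSet a Q s P' :=
          mem_liftSet.mpr ⟨w, hw, rfl⟩
        have hlt : (w.1, lvl a Q (shiftF s P') w.2 w.1).2 <
            lvl a Q (shiftF s P') v.2 v.1 := L_mono ha hQ hP' hs1 hs2 hw hw3 (by omega)
        have := lvl_ge_S (Q := (∅ : Finset Pc))
          (j := lvl a Q (shiftF s P') v.2 v.1) (x := v.1) hmem hlt hw3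
        have hIH := ih w.2 (by omega) w hw rfl
        simp only [Prod.fst, Prod.snd] at this
        omega
    omega

lemma fall_lift : fallSet a (liftSet a Q s P') s = P' := by
  have h1 : fallSet a (liftSet a Q s P') s =
      P'.image (fun p : Pc => ((p.1 + s) - s, lvl a ∅ (liftSet a Q s P')
        (lvl a Q (shiftF s P') p.2 (p.1 + s)) (p.1 + s))) := by
    unfold fallSet liftSet shiftF
    rw [Finset.image_image, Finset.image_image]
    rfl
  rw [h1]
  have heq : ∀ p ∈ P', ((p.1 + s) - s, lvl a ∅ (liftSet a Q s P')
      (lvl a Q (shiftF s P') p.2 (p.1 + s)) (p.1 + s)) = id p := by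
    intro p hp
    have hv : ((p.1 + s, p.2) : Pc) ∈ shiftF s P' := mem_shiftF.mpr ⟨p, hp, rfl⟩
    have hkey := fall_lift_key ha hQ hP' hs1 hs2 p.2 (p.1 + s, p.2) hv rfl
    simp only [Prod.fst, Prod.snd] at hkey
    rw [hkey]
    simp
  rw [Finset.image_congr (fun p hp => heq p hp), Finset.image_id]

end Ctx

end Assemble

section Decompose

variable {a : ℕ} {P : Finset Pc} {z : Pc}

lemma reach_mem {x y : Pc} (h : reach a P x y) (hx : x ∈ P) : y ∈ P := by
  induction h with
  | refl => exact hx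
  | tail _ hstep ih => exact hstep.1

lemma reach_height (h : reach a P z u) : u = z ∨ z.2 < u.2 := by
  induction h with
  | refl => exact Or.inl rfl
  | tail _ hstep ih =>
    rename_i b c _
    right
    rcases ih with h | h
    · rw [h] at hstep; exact hstep.2.2
    · exact lt_trans h hstep.2.2

lemma upSet_subset : upSet a P z ⊆ P := by intro x hx; exact (mem_upSet.mp hx).1

lemma mem_upSet_self (hz : z ∈ P) : z ∈ upSet a P z :=
  mem_upSet.mpr ⟨hz, Relation.ReflTransGen.refl⟩

/-- complement of the up-set has supports inside itself -/
lemma qd_supp (hP : IsPyramid a P) {q : Pc} (hq : q ∈ P) (hqU : q ∉ upSet a P z)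
    (h1 : 1 ≤ q.2) : ∃ r ∈ P, r ∉ upSet a P z ∧ r.2 + 1 = q.2 ∧ ov a r.1 q.1 := by
  obtain ⟨r, hr, hr2, hr3⟩ := supp' hP hq h1
  refine ⟨r, hr, ?_, hr2, hr3⟩
  intro hrU
  apply hqU
  obtain ⟨hrP, hreach⟩ := mem_upSet.mp hrU
  exact mem_upSet.mpr ⟨hq, Relation.ReflTransGen.tail hreach ⟨hq, hr3, by omega⟩⟩

section ZCtx

variable (ha : 2 ≤ a) (hP : IsPyramid a P) (hzP : z ∈ P) (hzneg : z.1 < 0)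
  (hzb1 : 1 - (a:ℤ) ≤ z.1) (hzb2 : z.1 ≤ -1) (hz1 : 1 ≤ z.2)
  (hmin : ∀ w' ∈ P, w'.1 < 0 → z.2 ≤ w'.2 ∧ (w'.2 = z.2 → w' = z))

include ha hP hzP hzneg hzb1 hzb2 hz1 hmin

lemma qd_nonneg : ∀ n : ℕ, ∀ q ∈ P, q ∉ upSet a P z → q.2 = n → 0 ≤ q.1 := by
  intro n
  induction n using Nat.strong_induction_on with
  | _ n ih =>
    intro q hq hqU hqn
    by_contra hneg
    push_neg at hneg
    have h1 : 1 ≤ q.2 := by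
      by_contra h
      have h0 : q.2 = 0 := by omega
      have := hP.2.1 q hq h0
      rw [this] at hneg
      simp at hneg
    obtain ⟨r, hr, hrU, hr2, hr3⟩ := qd_supp hP hq hqU h1
    have hrnn : 0 ≤ r.1 := ih r.2 (by omega) r hr hrU rfl
    have hqz : z.2 ≤ q.2 := (hmin q hq hneg).1
    have hqz2 : z.2 ≠ q.2 := by
      intro h
      have := (hmin q hq hneg).2 h.symm
      rw [this] at hqU
      exact hqU (mem_upSet_self hzP)
    have hqb : 1 - (a:ℤ) ≤ q.1 := by
      rw [ov_iff] at hr3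
      omega
    apply hqU
    refine mem_upSet.mpr ⟨hq, Relation.ReflTransGen.single ⟨hq, ?_, by omega⟩⟩
    rw [ov_iff]
    constructor <;> omega

lemma qd_right : IsRightPyramid a (P \ upSet a P z) := by
  have hmem : ∀ {q : Pc}, q ∈ P \ upSet a P z ↔ q ∈ P ∧ q ∉ upSet a P z :=
    fun {q} => Finset.mem_sdiff
  have hbot : ((0:ℤ),(0:ℕ)) ∈ P \ upSet a P z := by
    refine hmem.mpr ⟨hP.1, ?_⟩
    intro hU
    rcases reach_height (mem_upSet.mp hU).2 with h | h
    · rw [← h] at hzneg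
      simp at hzneg
    · simp at h
  refine ⟨⟨hbot, ?_, ?_, ?_⟩, ?_⟩
  · intro p hp h0
    exact hP.2.1 p (hmem.mp hp).1 h0
  · intro p hp q hq h2 hne
    exact hP.2.2.1 p (hmem.mp hp).1 q (hmem.mp hq).1 h2 hne
  · intro p hp h1
    obtain ⟨r, hr, hrU, hr2, hr3⟩ := qd_supp hP (hmem.mp hp).1 (hmem.mp hp).2 h1
    refine ⟨r, hmem.mpr ⟨hr, hrU⟩, by omega, ?_⟩
    unfold ov at hr3
    rw [abs_sub_comm] at hr3
    exact hr3
  · intro p hp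
    exact qd_nonneg ha hP hzP hzneg hzb1 hzb2 hz1 hmin p.2 p (hmem.mp hp).1 (hmem.mp hp).2 rfl

omit ha hP hzP hzneg hzb1 hzb2 hz1 hmin in
lemma U_min {u : Pc} (hu : u ∈ upSet a P z) : u = z ∨ z.2 < u.2 :=
  reach_height (mem_upSet.mp hu).2

lemma N_mono {u v : Pc} (hu : u ∈ upSet a P z) (hov : ov a u.1 v.1) (hlt : u.2 < v.2) :
    lvl a ∅ (upSet a P z) u.2 u.1 < lvl a ∅ (upSet a P z) v.2 v.1 := by
  have := lvl_ge_S (Q := (∅ : Finset Pc)) (j := v.2) (x := v.1) hu hlt hov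
  omega

omit ha hzP hzneg hzb1 hzb2 hz1 hmin in
lemma U_sep {u v : Pc} (hu : u ∈ upSet a P z) (hv : v ∈ upSet a P z)
    (h2 : u.2 = v.2) (hne : u ≠ v) : ¬ ov a u.1 v.1 :=
  sep' hP (upSet_subset hu) (upSet_subset hv) h2 hne

lemma N_mono' {u v : Pc} (hu : u ∈ upSet a P z) (hv : v ∈ upSet a P z)
    (hov : ov a u.1 v.1)
    (hlt : lvl a ∅ (upSet a P z) u.2 u.1 < lvl a ∅ (upSet a P z) v.2 v.1) : u.2 < v.2 := by
  rcases lt_trichotomy u.2 v.2 with h | h | h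
  · exact h
  · exfalso
    have hne : u ≠ v := by rintro rfl; omega
    exact U_sep hP hu hv h hne hov
  · exfalso
    have := N_mono ha hP hzP hzneg hzb1 hzb2 hz1 hmin hv (ov_symm hov) h
    omega

lemma N_z : lvl a ∅ (upSet a P z) z.2 z.1 = 0 := by
  have h := lvl_le (a := a) (Q := (∅ : Finset Pc)) (S := upSet a P z) (j := z.2) (x := z.1) (c := 0)
    (by intro q hq; simp at hq)
    (by
      intro v hv hvlt hov
      exfalso
      rcases U_min hv with h | h
      · rw [h] at hvlt; omega
      · omega)
  omega

lemma N_eq_zero {u : Pc} (hu : u ∈ upSet a P z)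
    (h0 : lvl a ∅ (upSet a P z) u.2 u.1 = 0) : u = z := by
  by_contra hne
  obtain ⟨huP, hreach⟩ := mem_upSet.mp hu
  rcases Relation.ReflTransGen.cases_tail hreach with h | ⟨b, hb, hstep⟩
  · exact hne h
  · have hbU : b ∈ upSet a P z := mem_upSet.mpr ⟨reach_mem hb hzP, hb⟩
    have := lvl_ge_S (Q := (∅ : Finset Pc)) (j := u.2) (x := u.1) hbU hstep.2.2 hstep.2.1
    omega

lemma N_injOn :
    Set.InjOn (fun u : Pc => (u.1 - z.1, lvl a ∅ (upSet a P z) u.2 u.1)) (upSet a P z) := by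
  intro u hu v hv heq
  simp only [Prod.mk.injEq] at heq
  obtain ⟨h1, h2⟩ := heq
  have h1' : u.1 = v.1 := by omega
  have hov : ov a u.1 v.1 := by rw [h1']; exact ov_refl (by omega) _
  have huv : u.2 = v.2 := by
    rcases lt_trichotomy u.2 v.2 with h | h | h
    · have := N_mono ha hP hzP hzneg hzb1 hzb2 hz1 hmin hu hov h; omega
    · exact h
    · have := N_mono ha hP hzP hzneg hzb1 hzb2 hz1 hmin hv (ov_symm hov) h; omega
  exact Prod.ext h1' huv

lemma fall_pyramid : IsPyramid a (fallSet a (upSet a P z) z.1) := by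
  have hmemF : ∀ {x : Pc}, x ∈ fallSet a (upSet a P z) z.1 ↔
      ∃ u ∈ upSet a P z, x = (u.1 - z.1, lvl a ∅ (upSet a P z) u.2 u.1) := by
    intro x
    unfold fallSet
    rw [Finset.mem_image]
    constructor
    · rintro ⟨u, hu, rfl⟩; exact ⟨u, hu, rfl⟩
    · rintro ⟨u, hu, rfl⟩; exact ⟨u, hu, rfl⟩
  refine ⟨?_, ?_, ?_, ?_⟩
  · refine hmemF.mpr ⟨z, mem_upSet_self hzP, ?_⟩
    rw [N_z ha hP hzP hzneg hzb1 hzb2 hz1 hmin]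
    simp
  · intro p hp h0
    obtain ⟨u, hu, rfl⟩ := hmemF.mp hp
    simp only [Prod.snd] at h0
    have := N_eq_zero ha hP hzP hzneg hzb1 hzb2 hz1 hmin hu h0
    rw [this]
    rw [N_z ha hP hzP hzneg hzb1 hzb2 hz1 hmin]
    simp
  · intro p hp q hq h2 hne
    obtain ⟨u, hu, rfl⟩ := hmemF.mp hp
    obtain ⟨v, hv, rfl⟩ := hmemF.mp hq
    have huv : u ≠ v := by rintro rfl; exact hne rfl
    have hnov : ¬ ov a u.1 v.1 := by
      intro hov
      simp only [Prod.snd] at h2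
      have heq2 : u.2 = v.2 := by
        rcases lt_trichotomy u.2 v.2 with h | h | h
        · have := N_mono ha hP hzP hzneg hzb1 hzb2 hz1 hmin hu hov h; omega
        · exact h
        · have := N_mono ha hP hzP hzneg hzb1 hzb2 hz1 hmin hv (ov_symm hov) h; omega
      exact U_sep hP hu hv heq2 huv hov
    unfold ov at hnov
    simp only [Prod.fst, not_le] at hnov ⊢
    have : u.1 - z.1 - (v.1 - z.1) = u.1 - v.1 := by ring
    rw [this]
    linarith
  · intro p hp h1
    obtain ⟨u, hu, rfl⟩ := hmemF.mp hp
    simp only [Prod.snd] at h1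
    rcases lvl_pos_attain (by omega :
        0 < lvl a ∅ (upSet a P z) u.2 u.1) with ⟨q, hq, _, _⟩ | ⟨v, hv, hvlt, hov, heq⟩
    · simp at hq
    · refine ⟨(v.1 - z.1, lvl a ∅ (upSet a P z) v.2 v.1), hmemF.mpr ⟨v, hv, rfl⟩, ?_, ?_⟩
      · simp only [Prod.snd]; omega
      · simp only [Prod.fst]
        unfold ov at hov
        have : u.1 - z.1 - (v.1 - z.1) = u.1 - v.1 := by ring
        rw [this]
        rw [abs_sub_comm]
        exact hov

omit ha hP hzP hzneg hzb1 hzb2 hz1 hmin in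
lemma shiftF_fallSet : shiftF z.1 (fallSet a (upSet a P z) z.1) =
    (upSet a P z).image (fun w : Pc => (w.1, lvl a ∅ (upSet a P z) w.2 w.1)) := by
  unfold shiftF fallSet
  rw [Finset.image_image]
  apply Finset.image_congr
  intro u _
  simp only [Function.comp]
  congr 1
  ring

lemma decompose_key : ∀ n : ℕ, ∀ u ∈ upSet a P z, u.2 = n →
    lvl a (P \ upSet a P z)
      ((upSet a P z).image (fun w : Pc => (w.1, lvl a ∅ (upSet a P z) w.2 w.1)))
      (lvl a ∅ (upSet a P z) u.2 u.1) u.1 = u.2 := by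
  intro n
  induction n using Nat.strong_induction_on with
  | _ n ih =>
    intro u hu hun
    have hmemS' : ∀ {x : Pc}, x ∈ (upSet a P z).image
        (fun w : Pc => (w.1, lvl a ∅ (upSet a P z) w.2 w.1)) ↔
        ∃ w ∈ upSet a P z, x = (w.1, lvl a ∅ (upSet a P z) w.2 w.1) := by
      intro x
      rw [Finset.mem_image]
      constructor
      · rintro ⟨w, hw, rfl⟩; exact ⟨w, hw, rfl⟩
      · rintro ⟨w, hw, rfl⟩; exact ⟨w, hw, rfl⟩
    have hle : lvl a (P \ upSet a P z)
        ((upSet a P z).image (fun w : Pc => (w.1, lvl a ∅ (upSet a P z) w.2 w.1)))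
        (lvl a ∅ (upSet a P z) u.2 u.1) u.1 ≤ u.2 := by
      apply lvl_le
      · intro q hq hqov
        obtain ⟨hqP, hqU⟩ := Finset.mem_sdiff.mp hq
        have hlt : q.2 < u.2 := by
          rcases lt_trichotomy q.2 u.2 with h | h | h
          · exact h
          · exfalso
            have hne : q ≠ u := by rintro rfl; exact hqU hu
            exact sep' hP hqP (upSet_subset hu) h hne hqov
          · exfalso
            apply hqU
            exact mem_upSet.mpr ⟨hqP, Relation.ReflTransGen.tail (mem_upSet.mp hu).2
              ⟨hqP, ov_symm hqov, h⟩⟩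
        omega
      · intro v' hv' hv'lt hv'ov
        obtain ⟨w, hw, rfl⟩ := hmemS'.mp hv'
        simp only [Prod.fst, Prod.snd] at hv'lt hv'ov ⊢
        have hwlt : w.2 < u.2 :=
          N_mono' ha hP hzP hzneg hzb1 hzb2 hz1 hmin hw hu hv'ov hv'lt
        have hIH := ih w.2 (by omega) w hw rfl
        omega
    have hge : u.2 ≤ lvl a (P \ upSet a P z)
        ((upSet a P z).image (fun w : Pc => (w.1, lvl a ∅ (upSet a P z) w.2 w.1)))
        (lvl a ∅ (upSet a P z) u.2 u.1) u.1 := by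
      rcases U_min hu with heq | hlt
      · have hu2 : 1 ≤ u.2 := by rw [heq]; exact hz1
        obtain ⟨r, hr, hr2, hr3⟩ := supp' hP (upSet_subset hu) hu2
        have hrQd : r ∈ P \ upSet a P z := by
          rw [Finset.mem_sdiff]
          refine ⟨hr, ?_⟩
          intro hrU
          rcases U_min hrU with h | h
          · have : r.2 = u.2 := by rw [h, ← heq]
            omega
          · rw [← heq] at h
            omega
        have := lvl_ge_q (S := (upSet a P z).image
            (fun w : Pc => (w.1, lvl a ∅ (upSet a P z) w.2 w.1)))
            (j := lvl a ∅ (upSet a P z) u.2 u.1) (x := u.1) hrQd hr3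
        omega
      · have h1 : 1 ≤ u.2 := by omega
        obtain ⟨r, hr, hr2, hr3⟩ := supp' hP (upSet_subset hu) h1
        by_cases hrU : r ∈ upSet a P z
        · have hmem : (r.1, lvl a ∅ (upSet a P z) r.2 r.1) ∈ (upSet a P z).image
              (fun w : Pc => (w.1, lvl a ∅ (upSet a P z) w.2 w.1)) :=
            hmemS'.mpr ⟨r, hrU, rfl⟩
          have hNlt : (r.1, lvl a ∅ (upSet a P z) r.2 r.1).2 <
              lvl a ∅ (upSet a P z) u.2 u.1 :=
            N_mono ha hP hzP hzneg hzb1 hzb2 hz1 hmin hrU hr3 (by omega)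
          have hbig := lvl_ge_S (Q := P \ upSet a P z)
            (j := lvl a ∅ (upSet a P z) u.2 u.1) (x := u.1) hmem hNlt hr3
          have hIH := ih r.2 (by omega) r hrU rfl
          simp only [Prod.fst, Prod.snd] at hbig
          omega
        · have hrQd : r ∈ P \ upSet a P z := Finset.mem_sdiff.mpr ⟨hr, hrU⟩
          have := lvl_ge_q (S := (upSet a P z).image
              (fun w : Pc => (w.1, lvl a ∅ (upSet a P z) w.2 w.1)))
              (j := lvl a ∅ (upSet a P z) u.2 u.1) (x := u.1) hrQd hr3
          omega
    omega

lemma decompose_assemble :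
    assemble a (P \ upSet a P z) z.1 (fallSet a (upSet a P z) z.1) = P := by
  unfold assemble liftSet
  rw [shiftF_fallSet (z := z)]
  rw [Finset.image_image]
  have himg : ∀ u ∈ upSet a P z,
      ((fun p : Pc => (p.1, lvl a (P \ upSet a P z)
          ((upSet a P z).image (fun w : Pc => (w.1, lvl a ∅ (upSet a P z) w.2 w.1)))
          p.2 p.1)) ∘
        (fun w : Pc => (w.1, lvl a ∅ (upSet a P z) w.2 w.1))) u = id u := by
    intro u hu
    have hk := decompose_key ha hP hzP hzneg hzb1 hzb2 hz1 hmin u.2 u hu rfl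
    simp only [Function.comp_apply, id_eq]
    rw [hk]
  rw [Finset.image_congr (fun u hu => himg u hu), Finset.image_id]
  exact Finset.sdiff_union_self_eq_union.trans
    (Finset.union_eq_left.mpr upSet_subset)

end ZCtx

lemma decompose (ha : 2 ≤ a) (hP : IsPyramid a P) {w : Pc} (hw : w ∈ P) (hwneg : w.1 < 0) :
    ∃ (Qd P' : Finset Pc) (s : ℤ), IsRightPyramid a Qd ∧ IsPyramid a P' ∧
      1 - (a:ℤ) ≤ s ∧ s ≤ -1 ∧ assemble a Qd s P' = P ∧
      Qd.card + P'.card = P.card ∧ 1 ≤ Qd.card := by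
  obtain ⟨z, hzP, hzneg, hzb1, hzb2, hz1, hmin⟩ := negmin hP hw hwneg
  refine ⟨P \ upSet a P z, fallSet a (upSet a P z) z.1, z.1,
    qd_right ha hP hzP hzneg hzb1 hzb2 hz1 hmin,
    fall_pyramid ha hP hzP hzneg hzb1 hzb2 hz1 hmin,
    hzb1, hzb2,
    decompose_assemble ha hP hzP hzneg hzb1 hzb2 hz1 hmin, ?_, ?_⟩
  · have hcf : (fallSet a (upSet a P z) z.1).card = (upSet a P z).card := by
      unfold fallSet
      exact Finset.card_image_of_injOn (N_injOn ha hP hzP hzneg hzb1 hzb2 hz1 hmin)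
    rw [hcf]
    exact Finset.card_sdiff_add_card_eq_card upSet_subset
  · exact Finset.card_pos.mpr ⟨((0:ℤ),(0:ℕ)), (qd_right ha hP hzP hzneg hzb1 hzb2 hz1 hmin).1.1⟩

end Decompose

section Counting

lemma pyr_card_pos {a : ℕ} {P : Finset Pc} (hP : IsPyramid a P) : 1 ≤ P.card :=
  Finset.card_pos.mpr ⟨((0:ℤ),(0:ℕ)), hP.1⟩

lemma finite_pyr (a m : ℕ) (ha : 1 ≤ a) :
    Finite {P : Finset Pc // IsPyramid a P ∧ P.card = m} := by
  classical
  set G : Finset Pc := Finset.Icc (-(((a:ℤ)-1) * m)) (((a:ℤ)-1) * m) ×ˢ Finset.range m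
    with hG
  have hsub : ∀ P : Finset Pc, IsPyramid a P → P.card = m → P ⊆ G := by
    intro P hP hcard p hp
    have hh : p.2 < m := hcard ▸ height_lt_card hP hp
    have hcb := col_bound ha hP p.2 p hp rfl
    rw [hG, Finset.mem_product, Finset.mem_Icc, Finset.mem_range]
    rw [abs_le] at hcb
    have hmono : ((a:ℤ)-1) * p.2 ≤ ((a:ℤ)-1) * m := by
      apply mul_le_mul_of_nonneg_left _ (by omega : (0:ℤ) ≤ (a:ℤ)-1)
      exact_mod_cast le_of_lt hh
    exact ⟨⟨by omega, by omega⟩, hh⟩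
  have : Function.Injective
      (fun x : {P : Finset Pc // IsPyramid a P ∧ P.card = m} =>
        (⟨x.val, Finset.mem_powerset.mpr (hsub x.val x.2.1 x.2.2)⟩ : {S // S ∈ G.powerset})) := by
    intro x y h
    apply Subtype.ext
    simpa using congrArg Subtype.val h
  exact Finite.of_injective _ this

lemma finite_right (a m : ℕ) (ha : 1 ≤ a) :
    Finite {P : Finset Pc // IsRightPyramid a P ∧ P.card = m} := by
  have := finite_pyr a m ha
  exact Finite.of_injective
    (fun x : {P : Finset Pc // IsRightPyramid a P ∧ P.card = m} =>
      (⟨x.val, x.2.1.1, x.2.2⟩ : {P : Finset Pc // IsPyramid a P ∧ P.card = m}))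
    (fun x y h => Subtype.ext (by simpa using congrArg Subtype.val h))

variable (a m : ℕ)

def TT := {t : Finset Pc × Fin (a-1) × Finset Pc //
  IsRightPyramid a t.1 ∧ IsPyramid a t.2.2 ∧ t.1.card + t.2.2.card = m}

def NR := {P : Finset Pc // (IsPyramid a P ∧ P.card = m) ∧ ¬ ∀ p ∈ P, 0 ≤ p.1}

def sOf (d : Fin (a-1)) : ℤ := -((d : ℕ) : ℤ) - 1

variable {a m}

lemma sOf_bounds (ha : 2 ≤ a) (d : Fin (a-1)) : 1 - (a:ℤ) ≤ sOf a d ∧ sOf a d ≤ -1 := by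
  have := d.isLt
  unfold sOf
  constructor <;> omega

def asm (ha : 2 ≤ a) (t : TT a m) : NR a m := by
  refine ⟨assemble a t.val.1 (sOf a t.val.2.1) t.val.2.2, ⟨?_, ?_⟩, ?_⟩
  · exact assemble_pyramid ha t.2.1 t.2.2.1 (sOf_bounds ha t.val.2.1).1 (sOf_bounds ha t.val.2.1).2
  · rw [assemble_card ha t.2.1 t.2.2.1 (sOf_bounds ha t.val.2.1).1 (sOf_bounds ha t.val.2.1).2]
    exact t.2.2.2
  · intro hall
    have hmem : ((sOf a t.val.2.1 : ℤ),
        lvl a t.val.1 (shiftF (sOf a t.val.2.1) t.val.2.2) 0 (sOf a t.val.2.1)) ∈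
        assemble a t.val.1 (sOf a t.val.2.1) t.val.2.2 :=
      Finset.mem_union_right _ (bz_mem t.2.2.1)
    have := hall _ hmem
    have hs2 := (sOf_bounds ha t.val.2.1).2
    simp only [Prod.fst] at this
    omega

lemma asm_inj (ha : 2 ≤ a) : Function.Injective (asm (m := m) ha) := by
  intro t1 t2 h
  obtain ⟨⟨Q1, d1, P1⟩, hQ1, hP1, hc1⟩ := t1
  obtain ⟨⟨Q2, d2, P2⟩, hQ2, hP2, hc2⟩ := t2
  have hA : assemble a Q1 (sOf a d1) P1 = assemble a Q2 (sOf a d2) P2 :=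
    congrArg Subtype.val h
  set s1 := sOf a d1 with hs1def
  set s2 := sOf a d2 with hs2def
  obtain ⟨hb11, hb12⟩ := sOf_bounds ha d1
  obtain ⟨hb21, hb22⟩ := sOf_bounds ha d2
  have hApyr : IsPyramid a (assemble a Q1 s1 P1) := assemble_pyramid ha hQ1 hP1 hb11 hb12
  have hbz1A : ((s1 : ℤ), lvl a Q1 (shiftF s1 P1) 0 s1) ∈ assemble a Q1 s1 P1 :=
    Finset.mem_union_right _ (bz_mem hP1)
  obtain ⟨z, hzP, hzneg, hzb1, hzb2, hz1, hmin⟩ :=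
    negmin hApyr hbz1A (by simp only [Prod.fst]; omega)
  have hmin' : ∀ w ∈ assemble a Q1 s1 P1, w.1 < 0 → z.2 ≤ w.2 :=
    fun w hw hwn => (hmin w hw hwn).1
  have e1 : z = ((s1 : ℤ), lvl a Q1 (shiftF s1 P1) 0 s1) :=
    assemble_z ha hQ1 hP1 hb11 hb12 hzP hzneg hzb1 hzb2 hmin'
  have e2 : z = ((s2 : ℤ), lvl a Q2 (shiftF s2 P2) 0 s2) := by
    apply assemble_z ha hQ2 hP2 hb21 hb22
    · rw [← hA]; exact hzP
    · exact hzneg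
    · exact hzb1
    · exact hzb2
    · rw [← hA]; exact hmin'
  have hseq : s1 = s2 := by
    have := congrArg Prod.fst (e1.symm.trans e2)
    simpa using this
  have hdeq : d1 = d2 := by
    rw [hs1def, hs2def] at hseq
    unfold sOf at hseq
    have : ((d1 : ℕ) : ℤ) = ((d2 : ℕ) : ℤ) := by omega
    exact Fin.ext (by exact_mod_cast this)
  -- lift sets are both the upSet of the same pyramid at the same point
  have hup1 : upSet a (assemble a Q1 s1 P1) ((s1 : ℤ), lvl a Q1 (shiftF s1 P1) 0 s1) =
      liftSet a Q1 s1 P1 := assemble_upSet ha hQ1 hP1 hb11 hb12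
  have hup2 : upSet a (assemble a Q2 s2 P2) ((s2 : ℤ), lvl a Q2 (shiftF s2 P2) 0 s2) =
      liftSet a Q2 s2 P2 := assemble_upSet ha hQ2 hP2 hb21 hb22
  have hlift : liftSet a Q1 s1 P1 = liftSet a Q2 s2 P2 := by
    rw [← hup1, ← hup2, ← hA, ← e1, ← e2]
  have hQeq : Q1 = Q2 := by
    have g1 : assemble a Q1 s1 P1 \ liftSet a Q1 s1 P1 = Q1 := assemble_sdiff ha
    have g2 : assemble a Q2 s2 P2 \ liftSet a Q2 s2 P2 = Q2 := assemble_sdiff ha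
    rw [← g1, ← g2, hA, hlift]
  have hPeq : P1 = P2 := by
    have g1 : fallSet a (liftSet a Q1 s1 P1) s1 = P1 := fall_lift ha hQ1 hP1 hb11 hb12
    have g2 : fallSet a (liftSet a Q2 s2 P2) s2 = P2 := fall_lift ha hQ2 hP2 hb21 hb22
    rw [← g1, ← g2, hlift, hseq]
  apply Subtype.ext
  simp only [Prod.mk.injEq]
  exact ⟨hQeq, hdeq, hPeq⟩

lemma asm_surj (ha : 2 ≤ a) : Function.Surjective (asm (m := m) ha) := by
  rintro ⟨P, ⟨hP, hcard⟩, hnr⟩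
  push_neg at hnr
  obtain ⟨w, hw, hwneg⟩ := hnr
  obtain ⟨Qd, P', s, hQd, hP', hsb1, hsb2, hassm, hcards, hQpos⟩ :=
    decompose ha hP hw (by omega)
  have hd : (-s - 1).toNat < a - 1 := by omega
  have hsof : sOf a ⟨(-s-1).toNat, hd⟩ = s := by
    unfold sOf
    simp only [Fin.val_mk]
    omega
  refine ⟨⟨(Qd, ⟨(-s-1).toNat, hd⟩, P'), hQd, hP', by
    show Qd.card + P'.card = m
    omega⟩, ?_⟩
  apply Subtype.ext
  show assemble a Qd (sOf a ⟨(-s-1).toNat, hd⟩) P' = P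
  rw [hsof]
  exact hassm

noncomputable def mainEquiv (ha : 2 ≤ a) : TT a m ≃ NR a m :=
  Equiv.ofBijective _ ⟨asm_inj ha, asm_surj ha⟩

def sigT := Σ i : ↥(Finset.Ico 1 m),
  ({Q : Finset Pc // IsRightPyramid a Q ∧ Q.card = (i : ℕ)} ×
    (Fin (a-1) × {P : Finset Pc // IsPyramid a P ∧ P.card = m - (i : ℕ)}))

def sigEquiv : TT a m ≃ sigT (a := a) (m := m) where
  toFun t := ⟨⟨t.val.1.card, Finset.mem_Ico.mpr
      ⟨pyr_card_pos t.2.1.1, by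
        have := pyr_card_pos t.2.2.1
        have := t.2.2.2
        omega⟩⟩,
    ⟨t.val.1, t.2.1, rfl⟩, t.val.2.1,
    ⟨t.val.2.2, t.2.2.1, by
      have := t.2.2.2
      show t.val.2.2.card = m - t.val.1.card
      omega⟩⟩
  invFun x := ⟨(x.2.1.val, x.2.2.1, x.2.2.2.val), x.2.1.2.1, x.2.2.2.2.1, by
    have h1 := x.2.1.2.2
    have h2 := x.2.2.2.2.2
    have h3 := Finset.mem_Ico.mp x.1.2
    show x.2.1.val.card + x.2.2.2.val.card = m
    omega⟩
  left_inv t := by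
    apply Subtype.ext
    rfl
  right_inv x := by
    obtain ⟨⟨k, hk⟩, ⟨Q, hQ⟩, d, ⟨Pp, hPp⟩⟩ := x
    have : Q.card = k := hQ.2
    subst this
    rfl

lemma card_step (ha : 2 ≤ a) :
    Nat.card {P : Finset Pc // IsPyramid a P ∧ P.card = m} =
      Nat.card {P : Finset Pc // IsRightPyramid a P ∧ P.card = m} +
      ∑ k ∈ Finset.Ico 1 m,
        (a - 1) * (Nat.card {Q : Finset Pc // IsRightPyramid a Q ∧ Q.card = k} *
          Nat.card {P : Finset Pc // IsPyramid a P ∧ P.card = m - k}) := by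
  classical
  haveI hfp : ∀ k : ℕ, Finite {P : Finset Pc // IsPyramid a P ∧ P.card = k} :=
    fun k => finite_pyr a k (by omega)
  haveI hfr : ∀ k : ℕ, Finite {P : Finset Pc // IsRightPyramid a P ∧ P.card = k} :=
    fun k => finite_right a k (by omega)
  haveI : Finite {P : Finset Pc // IsPyramid a P ∧ P.card = m} := hfp m
  have e0 : {P : Finset Pc // IsPyramid a P ∧ P.card = m} ≃
      {x : {P : Finset Pc // IsPyramid a P ∧ P.card = m} // (∀ p ∈ x.val, 0 ≤ p.1)} ⊕
      {x : {P : Finset Pc // IsPyramid a P ∧ P.card = m} // ¬ (∀ p ∈ x.val, 0 ≤ p.1)} :=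
    (Equiv.sumCompl _).symm
  have e1 : {x : {P : Finset Pc // IsPyramid a P ∧ P.card = m} // (∀ p ∈ x.val, 0 ≤ p.1)} ≃
      {P : Finset Pc // IsRightPyramid a P ∧ P.card = m} :=
    (Equiv.subtypeSubtypeEquivSubtypeInter
        (fun P : Finset Pc => IsPyramid a P ∧ P.card = m)
        (fun P : Finset Pc => ∀ p ∈ P, 0 ≤ p.1)).trans
      (Equiv.subtypeEquivRight (fun P => by
        constructor
        · rintro ⟨⟨h1, h2⟩, h3⟩; exact ⟨⟨h1, h3⟩, h2⟩
        · rintro ⟨⟨h1, h3⟩, h2⟩; exact ⟨⟨h1, h2⟩, h3⟩))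
  have e2 : {x : {P : Finset Pc // IsPyramid a P ∧ P.card = m} // ¬ (∀ p ∈ x.val, 0 ≤ p.1)} ≃
      NR a m := Equiv.subtypeSubtypeEquivSubtypeInter
        (fun P : Finset Pc => IsPyramid a P ∧ P.card = m)
        (fun P : Finset Pc => ¬ ∀ p ∈ P, 0 ≤ p.1)
  have e3 : NR a m ≃ sigT (a := a) (m := m) := (mainEquiv ha).symm.trans sigEquiv
  rw [Nat.card_congr e0]
  haveI : Finite {x : {P : Finset Pc // IsPyramid a P ∧ P.card = m} // (∀ p ∈ x.val, 0 ≤ p.1)} :=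
    Subtype.finite
  haveI : Finite {x : {P : Finset Pc // IsPyramid a P ∧ P.card = m} // ¬ (∀ p ∈ x.val, 0 ≤ p.1)} :=
    Subtype.finite
  rw [Nat.card_sum]
  congr 1
  · exact Nat.card_congr e1
  · rw [Nat.card_congr (e2.trans e3)]
    unfold sigT
    haveI : ∀ i : ↥(Finset.Ico 1 m), Fintype
        ({Q : Finset Pc // IsRightPyramid a Q ∧ Q.card = (i : ℕ)} ×
          (Fin (a-1) × {P : Finset Pc // IsPyramid a P ∧ P.card = m - (i : ℕ)})) :=
      fun i => Fintype.ofFinite _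
    rw [Nat.card_eq_fintype_card]
    rw [Fintype.card_sigma]
    rw [← Finset.sum_coe_sort (Finset.Ico 1 m) (fun k =>
        (a - 1) * (Nat.card {Q : Finset Pc // IsRightPyramid a Q ∧ Q.card = k} *
          Nat.card {P : Finset Pc // IsPyramid a P ∧ P.card = m - k}))]
    apply Finset.sum_congr rfl
    intro i _
    rw [← Nat.card_eq_fintype_card, Nat.card_prod, Nat.card_prod]
    have hfin : Nat.card (Fin (a-1)) = a - 1 := by simp
    rw [hfin]
    ring

end Counting

section CompAlg

lemma comp0_blocks (c : Composition 0) : c.blocks = [] := by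
  cases hc : c.blocks with
  | nil => rfl
  | cons b bs =>
    exfalso
    have hpos : 0 < b := c.blocks_pos (by rw [hc]; exact List.mem_cons_self)
    have hsum := c.blocks_sum
    rw [hc] at hsum
    simp [List.sum_cons] at hsum
    omega

instance : Unique (Composition 0) where
  default := ⟨[], fun {i} h => absurd h List.not_mem_nil, rfl⟩
  uniq c := Composition.ext (comp0_blocks c)

lemma comp_blocks_ne_nil {m : ℕ} (hm : 1 ≤ m) (c : Composition m) : c.blocks ≠ [] := by
  intro h
  have := c.blocks_sum
  rw [h] at this
  simp at this
  omega

def compEquiv (m : ℕ) (hm : 1 ≤ m) :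
    Composition m ≃ Σ k : ↥(Finset.Icc 1 m), Composition (m - (k : ℕ)) where
  toFun c :=
    ⟨⟨c.blocks.headI, by
        have hne := comp_blocks_ne_nil hm c
        have hmem : c.blocks.headI ∈ c.blocks := by
          cases hc : c.blocks with
          | nil => exact absurd hc hne
          | cons b bs => simp
        have h1 : 0 < c.blocks.headI := c.blocks_pos hmem
        have h2 : c.blocks.headI ≤ m := by
          have := List.single_le_sum (fun x (_ : x ∈ c.blocks) => Nat.zero_le x) _ hmem
          rw [c.blocks_sum] at this
          exact this
        exact Finset.mem_Icc.mpr ⟨h1, h2⟩⟩,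
      ⟨c.blocks.tail, fun hi => c.blocks_pos (List.mem_of_mem_tail hi), by
        have hne := comp_blocks_ne_nil hm c
        have hs := c.blocks_sum
        show c.blocks.tail.sum = m - c.blocks.headI
        cases hc : c.blocks with
        | nil => exact absurd hc hne
        | cons b bs =>
          rw [hc] at hs
          simp only [List.sum_cons] at hs
          simp only [List.tail_cons, List.headI]
          omega⟩⟩
  invFun x := ⟨(x.1 : ℕ) :: x.2.blocks, by
      intro i hi
      rcases List.mem_cons.mp hi with h | h
      · have := (Finset.mem_Icc.mp x.1.2).1
        omega
      · exact x.2.blocks_pos h, by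
      simp only [List.sum_cons, x.2.blocks_sum]
      have := (Finset.mem_Icc.mp x.1.2).2
      omega⟩
  left_inv c := by
    apply Composition.ext
    have hne := comp_blocks_ne_nil hm c
    cases hc : c.blocks with
    | nil => exact absurd hc hne
    | cons b bs => simp [hc]
  right_inv x := by
    obtain ⟨⟨k, hk⟩, c⟩ := x
    rfl

variable (a : ℕ)

noncomputable def Rc (k : ℕ) : ℕ := Nat.card {P : Finset (ℤ × ℕ) // IsRightPyramid a P ∧ P.card = k}

noncomputable def Tval (m : ℕ) : ℕ := ∑ c : Composition m, (a - 1) ^ (c.length - 1) *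
  (c.blocks.map (fun k => Nat.card {P : Finset (ℤ × ℕ) // IsRightPyramid a P ∧ P.card = k})).prod

lemma Tval_rec {m : ℕ} (hm : 1 ≤ m) :
    Tval a m = Rc a m + ∑ k ∈ Finset.Ico 1 m, (a - 1) * Rc a k * Tval a (m - k) := by
  classical
  set F : ℕ → ℕ := fun k => ∑ c : Composition (m - k),
    (a - 1) ^ (c.blocks.length) * (Rc a k * (c.blocks.map (Rc a)).prod) with hF
  have step1 : Tval a m = ∑ k ∈ Finset.Icc 1 m, F k := by
    unfold Tval
    rw [← Equiv.sum_comp (compEquiv m hm).symm (fun c : Composition m =>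
      (a - 1) ^ (c.length - 1) * (c.blocks.map (fun k =>
        Nat.card {P : Finset (ℤ × ℕ) // IsRightPyramid a P ∧ P.card = k})).prod)]
    rw [← Finset.univ_sigma_univ, Finset.sum_sigma]
    rw [← Finset.sum_coe_sort (Finset.Icc 1 m) F]
    apply Finset.sum_congr rfl
    intro i _
    apply Finset.sum_congr rfl
    intro c _
    have hsymm : (compEquiv m hm).symm ⟨i, c⟩ =
        ⟨(i : ℕ) :: c.blocks, _, _⟩ := rfl
    rw [hsymm]
    show (a-1) ^ (((i:ℕ) :: c.blocks).length - 1) * (Rc a (i:ℕ) * (c.blocks.map (Rc a)).prod)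
      = (a-1) ^ (c.blocks.length) * (Rc a (i:ℕ) * (c.blocks.map (Rc a)).prod)
    simp
  have Fzero : ∀ (r : ℕ) (j : ℕ), j = 0 →
      (∑ c : Composition j, (a - 1) ^ c.blocks.length *
        (r * (List.map (Rc a) c.blocks).prod)) = r := by
    intro r j hj
    subst hj
    have hterm : ∀ c : Composition 0,
        (a - 1) ^ c.blocks.length * (r * (List.map (Rc a) c.blocks).prod) = r := by
      intro c
      rw [comp0_blocks c]
      simp
    rw [Finset.sum_congr rfl (fun c _ => hterm c)]
    rw [Finset.sum_const, Finset.card_univ]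
    have hcard : Fintype.card (Composition 0) = 1 := Fintype.card_unique
    rw [hcard, one_smul]
  have step2 : F m = Rc a m := by
    rw [hF]
    exact Fzero (Rc a m) (m - m) (Nat.sub_self m)
  have step3 : ∀ k ∈ Finset.Ico 1 m, F k = (a - 1) * Rc a k * Tval a (m - k) := by
    intro k hk
    obtain ⟨hk1, hk2⟩ := Finset.mem_Ico.mp hk
    rw [hF]
    have hmk : 1 ≤ m - k := by omega
    show (∑ c : Composition (m - k),
      (a - 1) ^ c.blocks.length * (Rc a k * (List.map (Rc a) c.blocks).prod)) = _
    unfold Tval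
    rw [Finset.mul_sum]
    apply Finset.sum_congr rfl
    intro c _
    have hlen : 1 ≤ c.blocks.length := by
      have := comp_blocks_ne_nil hmk c
      cases hc : c.blocks with
      | nil => exact absurd hc this
      | cons b bs => simp [hc]
    have hp : c.blocks.length - 1 + 1 = c.blocks.length := by omega
    show (a-1)^(c.blocks.length) * (Rc a k * (c.blocks.map (Rc a)).prod) =
      (a - 1) * Rc a k * ((a - 1) ^ (c.length - 1) * (c.blocks.map (fun j =>
        Nat.card {P : Finset (ℤ × ℕ) // IsRightPyramid a P ∧ P.card = j})).prod)
    have hlen2 : c.length = c.blocks.length := rfl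
    have hfun : (fun j => Nat.card {P : Finset (ℤ × ℕ) // IsRightPyramid a P ∧ P.card = j})
        = Rc a := rfl
    rw [hlen2, hfun]
    have hpow : (a-1) ^ c.blocks.length = (a-1) * (a-1) ^ (c.blocks.length - 1) := by
      conv_lhs => rw [← hp]
      rw [pow_succ]
      ring
    rw [hpow]
    ring
  rw [step1]
  have hsplit : Finset.Icc 1 m = Finset.Ico 1 (m + 1) := by
    rw [Finset.Ico_add_one_right_eq_Icc]
  rw [hsplit, Finset.sum_Ico_succ_top (by omega)]
  rw [step2]
  rw [Finset.sum_congr rfl step3]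
  omega

end CompAlg

lemma main_count (a : ℕ) (ha : 2 ≤ a) :
    ∀ m : ℕ, 1 ≤ m →
      Nat.card {P : Finset Pc // IsPyramid a P ∧ P.card = m} = Tval a m := by
  intro m
  induction m using Nat.strong_induction_on with
  | _ m ih =>
    intro hm
    rw [card_step ha, Tval_rec a hm]
    congr 1
    apply Finset.sum_congr rfl
    intro k hk
    obtain ⟨hk1, hk2⟩ := Finset.mem_Ico.mp hk
    rw [ih (m - k) (by omega) (by omega)]
    show (a-1) * (Rc a k * Tval a (m-k)) = (a-1) * Rc a k * Tval a (m-k)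
    ring

end PyramidProof

/-- The number `B_m` of pyramids of size `m` equals
`Σ_{r=1}^{m} (a−1)^{r−1} Σ ∏_{i=1}^{r} R_{m_i}`, the inner sum ranging over
compositions `(m_1, …, m_r)` of `m` into `r` positive parts, where `R_k` is the
number of right `0`-pyramids of size `k`. (The double sum is expressed as a
single sum over all compositions of `m`.) -/
theorem pyramids_eq_sum_over_compositions (a m : ℕ) (ha : 2 ≤ a) (hm : 1 ≤ m) :
    Nat.card {P : Finset (ℤ × ℕ) // IsPyramid a P ∧ P.card = m} =
      ∑ c : Composition m, (a - 1) ^ (c.length - 1) *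
        (c.blocks.map (fun k =>
          Nat.card {P : Finset (ℤ × ℕ) // IsRightPyramid a P ∧ P.card = k})).prod := by
  exact PyramidProof.main_count a ha m hm
end

section
/- Fix an integer a ≥ 2 and let A be the formal power series over ℚ in one variable t whose constant coefficient is 0 and whose coefficient of t^m is A_m = (a·m)! / (m! · ((a−1)·m + 1)!) for every m ≥ 1. Then A satisfies the identity A = t · (1 + A)^a in the ring of formal power series. -/
/-- Entries of the Fuss–Catalan triangle: `fcd a r n = r/(a·n+r) · C(a·n+r, n)`,
which are the coefficients of the `r`-th power of the Fuss–Catalan generating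
function `B` with `B = 1 + t·B^a`. -/
def fcd (a r n : ℕ) : ℚ :=
  if r = 0 ∧ n = 0 then 1
  else (r : ℚ) * ((a * n + r).choose n : ℚ) / ((a * n + r : ℕ) : ℚ)

lemma fcd_zero_right (a r : ℕ) : fcd a r 0 = 1 := by
  rcases Nat.eq_zero_or_pos r with h | h
  · simp [fcd, h]
  · have h' : r ≠ 0 := h.ne'
    have : (r : ℚ) ≠ 0 := by exact_mod_cast h'
    simp only [fcd, h', false_and, if_false, Nat.mul_zero, Nat.zero_add,
      Nat.choose_zero_right, Nat.cast_one, mul_one]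
    field_simp

lemma fcd_zero_left (a n : ℕ) (hn : n ≠ 0) : fcd a 0 n = 0 := by
  simp [fcd, hn]

/-- Pascal-type recurrence for the Fuss–Catalan triangle. -/
lemma fcd_pascal (a : ℕ) (ha : 2 ≤ a) (r n : ℕ) :
    fcd a (r+1) (n+1) = fcd a r (n+1) + fcd a (r+a) n := by
  have h1 : a*(n+1) + (r+1) = (a*n + a + r) + 1 := by ring
  have h2 : a*(n+1) + r = a*n + a + r := by ring
  have h3 : a*n + (r+a) = a*n + a + r := by ring
  have hna : n ≤ a*n := Nat.le_mul_of_pos_left n (by omega)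
  simp only [fcd, if_neg (show ¬(r+1 = 0 ∧ n+1 = 0) by omega),
    if_neg (show ¬(r = 0 ∧ n+1 = 0) by omega),
    if_neg (show ¬(r+a = 0 ∧ n = 0) by omega), h1, h2, h3]
  generalize hM : a*n + a + r = M
  have hM0 : (M:ℚ) ≠ 0 := by
    have : 0 < M := by omega
    exact_mod_cast this.ne'
  have hM1 : ((M:ℚ)+1) ≠ 0 := by positivity
  have hM1' : ((M+1 : ℕ):ℚ) ≠ 0 := by push_cast; exact hM1
  have pascal : (M+1).choose (n+1) = M.choose n + M.choose (n+1) :=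
    Nat.choose_succ_succ M n
  have hMQ : (M:ℚ) = (a:ℚ)*n + a + r := by
    rw [← hM]; push_cast; ring
  have key : ((n:ℚ)+1) * (M.choose (n+1) : ℚ)
      = ((a:ℚ)*n + a + r - (n:ℚ)) * (M.choose n : ℚ) := by
    have h := Nat.choose_succ_right_eq M n
    have hn' : n ≤ M := by omega
    have h2 := congrArg (Nat.cast : ℕ → ℚ) h
    push_cast [Nat.cast_sub hn'] at h2
    rw [hMQ] at h2
    linear_combination h2
  rw [← add_div, div_eq_div_iff hM1' hM0, pascal]
  push_cast
  rw [hMQ]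
  linear_combination (a:ℚ) * key

/-- Vandermonde-type convolution for the Fuss–Catalan triangle. -/
lemma fcd_conv (a : ℕ) (ha : 2 ≤ a) :
    ∀ n r s, (∑ k ∈ Finset.range (n+1), fcd a r k * fcd a s (n-k)) = fcd a (r+s) n := by
  intro n
  induction n using Nat.strong_induction_on with
  | _ n ih =>
    match n with
    | 0 =>
      intro r s
      simp [fcd_zero_right]
    | m+1 =>
      intro r s
      induction r with
      | zero =>
        rw [Finset.sum_eq_single 0]
        · rw [fcd_zero_right, one_mul, Nat.sub_zero, Nat.zero_add]
        · intro k _ hk0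
          rw [fcd_zero_left a k hk0, zero_mul]
        · intro h
          exact absurd (Finset.mem_range.mpr (Nat.succ_pos _)) h
      | succ r ihr =>
        have e4 : (∑ i ∈ Finset.range (m+1), fcd a r (i+1) * fcd a s (m-i))
            + fcd a s (m+1) = fcd a (r+s) (m+1) := by
          rw [← ihr, Finset.sum_range_succ' (fun k => fcd a r k * fcd a s (m + 1 - k)) (m+1)]
          simp only [Nat.add_sub_add_right, Nat.sub_zero, fcd_zero_right, one_mul]
        rw [Finset.sum_range_succ']
        simp only [Nat.add_sub_add_right, Nat.sub_zero, fcd_pascal a ha, add_mul,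
          Finset.sum_add_distrib, fcd_zero_right, one_mul]
        rw [ih m (Nat.lt_succ_self m) (r+a) s]
        have e5 : fcd a (r+1+s) (m+1) = fcd a (r+s) (m+1) + fcd a (r+s+a) m := by
          have h : r+1+s = (r+s)+1 := by omega
          rw [h, fcd_pascal a ha (r+s) m]
        have h6 : r+a+s = r+s+a := by omega
        rw [e5, h6] at *
        linarith [e4]

/-- The first column of the triangle gives the Fuss–Catalan numbers. -/
lemma fcd_one_eq (a m : ℕ) (ha : 2 ≤ a) :
    fcd a 1 m = ((a * m).factorial : ℚ) /
      ((m.factorial : ℚ) * (((a - 1) * m + 1).factorial : ℚ)) := by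
  have hna : m ≤ a*m := Nat.le_mul_of_pos_left m (by omega)
  have hsub : (a-1)*m = a*m - m := Nat.sub_one_mul a m
  have hm1 : m ≤ a*m + 1 := by omega
  have hsub2 : a*m + 1 - m = (a-1)*m + 1 := by omega
  have hfc := Nat.cast_choose ℚ hm1
  rw [hsub2] at hfc
  have hN : ((a*m + 1 : ℕ) : ℚ) ≠ 0 := by
    have : 0 < a*m+1 := by omega
    exact_mod_cast this.ne'
  have hfac : ((a*m+1).factorial : ℚ) = ((a*m+1 : ℕ) : ℚ) * ((a*m).factorial : ℚ) := by
    rw [Nat.factorial_succ]; push_cast; ring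
  have hne1 : (m.factorial : ℚ) ≠ 0 := by exact_mod_cast (Nat.factorial_ne_zero m)
  have hne2 : (((a-1)*m+1).factorial : ℚ) ≠ 0 := by
    exact_mod_cast (Nat.factorial_ne_zero _)
  rw [fcd, if_neg (by omega)]
  rw [hfc, hfac]
  push_cast
  field_simp

/-- The `a`-th column of the triangle, shifted by one, also gives the
Fuss–Catalan numbers. -/
lemma fcd_top_eq (a n : ℕ) (ha : 2 ≤ a) :
    fcd a a n = ((a * (n+1)).factorial : ℚ) /
      (((n+1).factorial : ℚ) * (((a - 1) * (n+1) + 1).factorial : ℚ)) := by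
  have hna : n+1 ≤ a*(n+1) := Nat.le_mul_of_pos_left (n+1) (by omega)
  have hsub : (a-1)*(n+1) = a*(n+1) - (n+1) := Nat.sub_one_mul a (n+1)
  have hmn : n ≤ a*(n+1) := by omega
  have hsub2 : a*(n+1) - n = (a-1)*(n+1) + 1 := by omega
  have hfc := Nat.cast_choose ℚ hmn
  rw [hsub2] at hfc
  have heq : a*n + a = a*(n+1) := by ring
  have hN : ((a*(n+1) : ℕ) : ℚ) ≠ 0 := by
    have : 0 < a*(n+1) := by omega
    exact_mod_cast this.ne'
  have hfacn : ((n+1).factorial : ℚ) = ((n+1 : ℕ) : ℚ) * (n.factorial : ℚ) := by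
    rw [Nat.factorial_succ]; push_cast; ring
  have hne1 : (n.factorial : ℚ) ≠ 0 := by exact_mod_cast (Nat.factorial_ne_zero n)
  have hne2 : (((a-1)*(n+1)+1).factorial : ℚ) ≠ 0 := by
    exact_mod_cast (Nat.factorial_ne_zero _)
  have hn1 : ((n : ℚ) + 1) ≠ 0 := by positivity
  rw [fcd, if_neg (by omega), heq, hfc, hfacn]
  push_cast
  field_simp

/-- Coefficients of powers of the Fuss–Catalan generating function. -/
lemma coeff_pow_eq (a : ℕ) (ha : 2 ≤ a) (B : PowerSeries ℚ)
    (hB : ∀ k, PowerSeries.coeff k B = fcd a 1 k) :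
    ∀ r n, PowerSeries.coeff n (B ^ r) = fcd a r n := by
  intro r
  induction r with
  | zero =>
    intro n
    rw [pow_zero, PowerSeries.coeff_one]
    rcases Nat.eq_zero_or_pos n with h | h
    · rw [if_pos h, h, fcd_zero_right]
    · rw [if_neg h.ne', fcd_zero_left a n h.ne']
  | succ r ihr =>
    intro n
    rw [pow_succ', PowerSeries.coeff_mul,
      Finset.Nat.sum_antidiagonal_eq_sum_range_succ_mk]
    simp only [hB, ihr]
    rw [fcd_conv a ha n 1 r, Nat.add_comm 1 r]

/-- The generating function `A(t) = Σ_{m≥1} A_m t^m` of the Fuss–Catalan numbers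
`A_m = (a·m)! / (m! · ((a−1)·m + 1)!)` satisfies `A = t·(1 + A)^a`. -/
theorem fussCatalan_genfun_eq (a : ℕ) (ha : 2 ≤ a) (A : PowerSeries ℚ)
    (h0 : PowerSeries.coeff 0 A = 0)
    (hm : ∀ m, 1 ≤ m → PowerSeries.coeff m A =
      ((a * m).factorial : ℚ) /
        ((m.factorial : ℚ) * (((a - 1) * m + 1).factorial : ℚ))) :
    A = PowerSeries.X * (1 + A) ^ a := by
  have hB : ∀ k, PowerSeries.coeff k (1 + A) = fcd a 1 k := by
    intro k
    match k with
    | 0 =>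
      rw [map_add, h0, fcd_zero_right]
      simp
    | k+1 =>
      rw [map_add, PowerSeries.coeff_one, if_neg (Nat.succ_ne_zero k),
        hm (k+1) (Nat.succ_le_succ (Nat.zero_le k)), fcd_one_eq a (k+1) ha]
      simp
  ext n
  match n with
  | 0 =>
    rw [h0]
    simp [PowerSeries.coeff_zero_eq_constantCoeff, map_mul]
  | n+1 =>
    rw [PowerSeries.coeff_succ_X_mul, coeff_pow_eq a ha (1+A) hB a n,
      fcd_top_eq a n ha, hm (n+1) (Nat.succ_le_succ (Nat.zero_le n))]
end

section
/- Fix an integer a ≥ 2. Let A be the formal power series over ℚ with constant coefficient 0 and coefficient A_m = (a·m)! / (m! · ((a−1)·m + 1)!) of t^m for m ≥ 1, and let B be the formal power series with constant coefficient 0 and coefficient C(a·m − 1, m − 1) of t^m for m ≥ 1. Then B · (1 − (a−1) · A) = A in the ring of formal power series. -/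
noncomputable def fc (a x k : ℕ) : ℚ :=
  if k = 0 then 1 else (x : ℚ) / (x + a * k) * ((x + a * k).choose k)

lemma fc_zero (a x : ℕ) : fc a x 0 = 1 := if_pos rfl

lemma fc_eq (a x k : ℕ) (h : (x ≠ 0 ∨ k ≠ 0)) :
    fc a x k = (x : ℚ) / (x + a * k) * ((x + a * k).choose k) := by
  rcases k with _ | k
  · have hx : x ≠ 0 := h.resolve_right (by simp)
    have : ((x : ℚ)) ≠ 0 := Nat.cast_ne_zero.mpr hx
    simp [fc, this]
  · rw [fc, if_neg (Nat.succ_ne_zero k)]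

lemma fc_left_zero (a k : ℕ) (hk : k ≠ 0) : fc a 0 k = 0 := by
  rw [fc_eq a 0 k (Or.inr hk)]; simp

lemma fc_rec (a : ℕ) (ha : 2 ≤ a) (x k : ℕ) :
    fc a (x + 1) (k + 1) = fc a x (k + 1) + fc a (x + a) k := by
  obtain ⟨b, rfl⟩ : ∃ b, a = b + 2 := ⟨a - 2, by omega⟩
  rw [fc_eq _ _ _ (Or.inl (by omega)), fc_eq _ _ _ (Or.inr (by omega)),
      fc_eq _ _ _ (Or.inl (by omega))]
  have e1 : x + 1 + (b + 2) * (k + 1) = (x + (b + 2) * (k + 1)) + 1 := by ring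
  have e2 : x + (b + 2) + (b + 2) * k = x + (b + 2) * (k + 1) := by ring
  rw [e1, e2]
  generalize hNdef : x + (b + 2) * (k + 1) = N
  have exp1 : (b + 2) * (k + 1) = b * k + b + 2 * k + 2 := by ring
  have exp2 : (b + 1) * (k + 1) = b * k + b + k + 1 := by ring
  have hdN : N - k = (x + (b + 1) * (k + 1)) + 1 := by omega
  have hkN : k ≤ N := by omega
  -- ratio identities
  have c1 : (((N + 1).choose (k + 1) : ℚ)) = (N + 1) * (N.choose k) / (k + 1) := by
    have := Nat.add_one_mul_choose_eq N k
    have hq : ((N + 1) * N.choose k : ℚ) = ((N + 1).choose (k + 1)) * (k + 1) := by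
      exact_mod_cast congrArg (Nat.cast (R := ℚ)) this
    field_simp
    linarith [hq]
  have c2 : ((N.choose (k + 1) : ℚ)) = (N.choose k) * ((x : ℚ) + (b + 1) * (k + 1) + 1) / (k + 1) := by
    have := Nat.choose_succ_right_eq N k
    rw [hdN] at this
    have hq : ((N.choose (k + 1)) * (k + 1) : ℚ) = (N.choose k) * ((x : ℚ) + (b + 1) * (k + 1) + 1) := by
      exact_mod_cast congrArg (Nat.cast (R := ℚ)) this
    field_simp
    linarith [hq]
  rw [c1, c2]
  have hNq : (N : ℚ) = (x : ℚ) + (b + 2) * (k + 1) := by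
    exact_mod_cast congrArg (Nat.cast (R := ℚ)) hNdef.symm
  have hN0 : ((N : ℚ)) ≠ 0 := by rw [hNq]; positivity
  have hN1 : ((N : ℚ)) + 1 ≠ 0 := by rw [hNq]; positivity
  have hk1 : ((k : ℚ)) + 1 ≠ 0 := by positivity
  push_cast
  field_simp
  rw [hNq]
  ring

lemma rothe (a : ℕ) (ha : 2 ≤ a) :
    ∀ n x y : ℕ, ∑ k ∈ Finset.range (n + 1), fc a x k * fc a y (n - k) = fc a (x + y) n := by
  intro n
  induction n using Nat.strong_induction_on with
  | _ n ih =>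
    intro x
    induction x with
    | zero =>
      intro y
      rcases n with _ | m
      · simp [fc_zero]
      · rw [Finset.sum_range_succ' (fun k => fc a 0 k * fc a y (m + 1 - k)) (m + 1)]
        have : ∀ k, fc a 0 (k + 1) * fc a y (m + 1 - (k + 1)) = 0 := by
          intro k; rw [fc_left_zero a (k + 1) (Nat.succ_ne_zero k), zero_mul]
        simp only [this, Finset.sum_const_zero, zero_add, fc_zero, one_mul,
          Nat.sub_zero, Nat.zero_add]
    | succ x ihx =>
      intro y
      rcases n with _ | m
      · simp [fc_zero]
      · have step : ∀ k, fc a (x + 1) (k + 1) * fc a y (m + 1 - (k + 1))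
            = fc a x (k + 1) * fc a y (m - k) + fc a (x + a) k * fc a y (m - k) := by
          intro k
          rw [fc_rec a ha, add_mul, Nat.succ_sub_succ]
        rw [Finset.sum_range_succ' (fun k => fc a (x + 1) k * fc a y (m + 1 - k)) (m + 1)]
        simp only [step]
        rw [Finset.sum_add_distrib]
        have h2 : ∑ k ∈ Finset.range (m + 1), fc a (x + a) k * fc a y (m - k)
            = fc a (x + a + y) m := ih m (by omega) (x + a) y
        have h1 : ∑ k ∈ Finset.range (m + 1), fc a x (k + 1) * fc a y (m - k)
            + fc a (x + 1) 0 * fc a y (m + 1 - 0) = fc a (x + y) (m + 1) := by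
          have := ihx y
          rw [Finset.sum_range_succ' (fun k => fc a x k * fc a y (m + 1 - k)) (m + 1)] at this
          simpa [fc_zero, Nat.succ_sub_succ] using this
        rw [h2]
        rw [add_right_comm, h1]
        have := fc_rec a ha (x + y) m
        have e : x + a + y = x + y + a := by ring
        rw [e] at h2 ⊢
        rw [← this]
        congr 1
        omega

lemma twist (a : ℕ) (ha : 2 ≤ a) (n : ℕ) :
    ∑ k ∈ Finset.range (n + 1), (k : ℚ) * (fc a 1 k * fc a 1 (n - k))
      = n / 2 * fc a 2 n := by
  have hr := Finset.sum_range_reflect (fun k => (k : ℚ) * (fc a 1 k * fc a 1 (n - k))) (n + 1)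
  have key : ∑ k ∈ Finset.range (n + 1), (k : ℚ) * (fc a 1 k * fc a 1 (n - k))
      + ∑ k ∈ Finset.range (n + 1), (k : ℚ) * (fc a 1 k * fc a 1 (n - k))
      = (n : ℚ) * fc a 2 n := by
    nth_rewrite 1 [← hr]
    rw [← Finset.sum_add_distrib]
    have hcon : ∀ k ∈ Finset.range (n + 1),
        ((n + 1 - 1 - k : ℕ) : ℚ) * (fc a 1 (n + 1 - 1 - k) * fc a 1 (n - (n + 1 - 1 - k)))
        + (k : ℚ) * (fc a 1 k * fc a 1 (n - k))
        = (n : ℚ) * (fc a 1 k * fc a 1 (n - k)) := by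
      intro k hk
      have hk' : k ≤ n := by simpa [Nat.lt_succ_iff] using hk
      have e1 : n + 1 - 1 - k = n - k := by omega
      have e2 : n - (n - k) = k := by omega
      rw [e1, e2]
      have e3 : ((n - k : ℕ) : ℚ) = (n : ℚ) - k := by
        rw [Nat.cast_sub hk']
      rw [e3]
      ring
    rw [Finset.sum_congr rfl hcon, ← Finset.mul_sum, rothe a ha n 1 1]
  linarith [key]

lemma keysum (a : ℕ) (ha : 2 ≤ a) (n : ℕ) :
    ∑ k ∈ Finset.range (n + 1),
        ((((a : ℚ) - 1) * k + 1) * fc a 1 k) * fc a 1 (n - k)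
      = (1 + ((a : ℚ) - 1) * n / 2) * fc a 2 n := by
  have e : ∀ k, ((((a : ℚ) - 1) * k + 1) * fc a 1 k) * fc a 1 (n - k)
      = ((a : ℚ) - 1) * ((k : ℚ) * (fc a 1 k * fc a 1 (n - k)))
        + fc a 1 k * fc a 1 (n - k) := by
    intro k; ring
  simp only [e]
  rw [Finset.sum_add_distrib, ← Finset.mul_sum, twist a ha n, rothe a ha n 1 1]
  ring

-- identification with factorial formula for A
lemma fc_one_eq (a : ℕ) (ha : 2 ≤ a) (m : ℕ) (hm : 1 ≤ m) :
    fc a 1 m = ((a * m).factorial : ℚ) /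
      ((m.factorial : ℚ) * (((a - 1) * m + 1).factorial : ℚ)) := by
  obtain ⟨b, rfl⟩ : ∃ b, a = b + 2 := ⟨a - 2, by omega⟩
  rw [fc_eq _ _ _ (Or.inl one_ne_zero)]
  have exp1 : (b + 2) * m = (b + 1) * m + m := by ring
  have hle : m ≤ 1 + (b + 2) * m := by omega
  rw [Nat.cast_choose ℚ hle]
  have e1 : 1 + (b + 2) * m - m = (b + 1) * m + 1 := by omega
  have e2 : (b + 2 - 1) = b + 1 := by omega
  rw [e1, e2]
  have e3 : 1 + (b + 2) * m = ((b + 2) * m) + 1 := by omega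
  rw [e3, Nat.factorial_succ]
  have h1 : (0 : ℚ) < ((b + 2) * m : ℕ) + 1 := by positivity
  have hf1 : ((m.factorial : ℚ)) ≠ 0 := Nat.cast_ne_zero.mpr (Nat.factorial_ne_zero _)
  have hf2 : ((((b + 1) * m + 1).factorial : ℚ)) ≠ 0 := Nat.cast_ne_zero.mpr (Nat.factorial_ne_zero _)
  push_cast
  field_simp
  ring

-- B_m in terms of C(am, m)
lemma bcoef_eq (a : ℕ) (ha : 2 ≤ a) (m : ℕ) (hm : 1 ≤ m) :
    ((a * m - 1).choose (m - 1) : ℚ) = ((a * m).choose m : ℚ) / a := by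
  obtain ⟨j, rfl⟩ : ∃ j, m = j + 1 := ⟨m - 1, by omega⟩
  have h1 : a * (j + 1) - 1 + 1 = a * (j + 1) := by
    have := Nat.mul_le_mul (show 1 ≤ a by omega) (show 1 ≤ j + 1 by omega)
    omega
  have key := Nat.add_one_mul_choose_eq (a * (j + 1) - 1) j
  rw [h1] at key
  have key2 : a * ((a * (j + 1) - 1).choose j) = (a * (j + 1)).choose (j + 1) := by
    apply Nat.eq_of_mul_eq_mul_right (show 0 < j + 1 by omega)
    rw [mul_right_comm] at key
    exact key
  have ha0 : ((a : ℚ)) ≠ 0 := by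
    have : 0 < a := by omega
    exact_mod_cast this.ne'
  have ej : j + 1 - 1 = j := by omega
  rw [ej, ← key2]
  push_cast
  field_simp

-- C(am, m) = ((a-1)m+1) * fc a 1 m
lemma cc_eq (a : ℕ) (ha : 2 ≤ a) (m : ℕ) :
    (((a * m).choose m : ℕ) : ℚ) = (((a : ℚ) - 1) * m + 1) * fc a 1 m := by
  rcases m with _ | j
  · simp [fc_zero]
  · obtain ⟨b, rfl⟩ : ∃ b, a = b + 2 := ⟨a - 2, by omega⟩
    rw [fc_one_eq _ ha _ (by omega)]
    have exp1 : (b + 2) * (j + 1) = (b + 1) * (j + 1) + (j + 1) := by ring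
    have hle : j + 1 ≤ (b + 2) * (j + 1) := by omega
    rw [Nat.cast_choose ℚ hle]
    have e1 : (b + 2) * (j + 1) - (j + 1) = (b + 1) * (j + 1) := by omega
    have e2 : b + 2 - 1 = b + 1 := by omega
    rw [e1, e2, Nat.factorial_succ ((b + 1) * (j + 1))]
    have hf1 : (((j + 1).factorial : ℕ) : ℚ) ≠ 0 := Nat.cast_ne_zero.mpr (Nat.factorial_ne_zero _)
    have hf2 : ((((b + 1) * (j + 1)).factorial : ℕ) : ℚ) ≠ 0 := Nat.cast_ne_zero.mpr (Nat.factorial_ne_zero _)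
    push_cast
    field_simp
    ring

-- final arithmetic identity
lemma final_id (a : ℕ) (ha : 2 ≤ a) (n : ℕ) (hn : 1 ≤ n) :
    (a : ℚ) * ((a * n).choose n : ℚ)
      = fc a 1 n + ((a : ℚ) - 1) * ((1 + ((a : ℚ) - 1) * n / 2) * fc a 2 n) := by
  obtain ⟨b, rfl⟩ : ∃ b, a = b + 2 := ⟨a - 2, by omega⟩
  rw [fc_eq _ _ _ (Or.inl one_ne_zero), fc_eq _ _ _ (Or.inl two_ne_zero)]
  have exp1 : (b + 2) * n = (b + 1) * n + n := by ring
  have hle1 : n ≤ (b + 2) * n := by omega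
  have hle2 : n ≤ 1 + (b + 2) * n := by omega
  have hle3 : n ≤ 2 + (b + 2) * n := by omega
  rw [Nat.cast_choose ℚ hle1, Nat.cast_choose ℚ hle2, Nat.cast_choose ℚ hle3]
  have e1 : (b + 2) * n - n = (b + 1) * n := by omega
  have e2 : 1 + (b + 2) * n - n = (b + 1) * n + 1 := by omega
  have e3 : 2 + (b + 2) * n - n = (b + 1) * n + 1 + 1 := by omega
  have e4 : 1 + (b + 2) * n = (b + 2) * n + 1 := by omega
  have e5 : 2 + (b + 2) * n = (b + 2) * n + 1 + 1 := by omega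
  rw [e1, e2, e3, e4, e5, Nat.factorial_succ ((b + 2) * n + 1), Nat.factorial_succ ((b + 2) * n),
      Nat.factorial_succ ((b + 1) * n + 1), Nat.factorial_succ ((b + 1) * n)]
  have hf1 : ((n.factorial : ℕ) : ℚ) ≠ 0 := Nat.cast_ne_zero.mpr (Nat.factorial_ne_zero _)
  have hf2 : ((((b + 1) * n).factorial : ℕ) : ℚ) ≠ 0 := Nat.cast_ne_zero.mpr (Nat.factorial_ne_zero _)
  have hf3 : ((((b + 2) * n).factorial : ℕ) : ℚ) ≠ 0 := Nat.cast_ne_zero.mpr (Nat.factorial_ne_zero _)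
  have ne1 : ((b : ℚ) + 2) * n + 1 ≠ 0 := by positivity
  have ne2 : ((b : ℚ) + 2) * n + 2 ≠ 0 := by positivity
  have ne3 : ((b : ℚ) + 1) * n + 1 ≠ 0 := by positivity
  have ne4 : ((b : ℚ) + 1) * n + 2 ≠ 0 := by positivity
  push_cast
  field_simp
  ring

/-- With `A(t) = Σ_{m≥1} A_m t^m` the generating function of the Fuss–Catalan
numbers `A_m = (a·m)! / (m! · ((a−1)·m + 1)!)` and `B(t) = Σ_{m≥1} C(a·m−1, m−1) t^m`
the generating function of pyramid counts, one has `B·(1 − (a−1)·A) = A`. -/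
theorem pyramid_genfun_relation (a : ℕ) (ha : 2 ≤ a)
    (A B : PowerSeries ℚ)
    (hA0 : PowerSeries.coeff 0 A = 0)
    (hA : ∀ m, 1 ≤ m → PowerSeries.coeff m A =
      ((a * m).factorial : ℚ) /
        ((m.factorial : ℚ) * (((a - 1) * m + 1).factorial : ℚ)))
    (hB0 : PowerSeries.coeff 0 B = 0)
    (hB : ∀ m, 1 ≤ m → PowerSeries.coeff m B = ((a * m - 1).choose (m - 1) : ℚ)) :
    B * (1 - PowerSeries.C ((a : ℚ) - 1) * A) = A := by
  have hAfc : ∀ m, 1 ≤ m → PowerSeries.coeff m A = fc a 1 m := by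
    intro m hm; rw [hA m hm, fc_one_eq a ha m hm]
  have ha0 : ((a : ℚ)) ≠ 0 := by
    have : 0 < a := by omega
    exact_mod_cast this.ne'
  apply PowerSeries.ext
  intro n
  rw [mul_sub, mul_one, map_sub, mul_left_comm, PowerSeries.coeff_C_mul]
  rcases n with _ | N
  · rw [PowerSeries.coeff_mul]
    simp [hA0, hB0]
  · set n := N + 1 with hn
    rw [PowerSeries.coeff_mul, Finset.Nat.sum_antidiagonal_eq_sum_range_succ_mk]
    simp only [Nat.succ_eq_add_one]
    -- the key sum
    have hK : ∑ k ∈ Finset.range (n + 1), (((a * k).choose k : ℕ) : ℚ) * fc a 1 (n - k)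
        = (1 + ((a : ℚ) - 1) * n / 2) * fc a 2 n := by
      rw [← keysum a ha n]
      exact Finset.sum_congr rfl (fun k _ => by rw [cc_eq a ha k])
    -- peel the key sum
    have hKsplit : ∑ k ∈ Finset.range (n + 1), (((a * k).choose k : ℕ) : ℚ) * fc a 1 (n - k)
        = (∑ k ∈ Finset.range N, (((a * (k + 1)).choose (k + 1) : ℕ) : ℚ) * fc a 1 (N - k))
          + fc a 1 n + (((a * n).choose n : ℕ) : ℚ) := by
      rw [Finset.sum_range_succ (fun k => (((a * k).choose k : ℕ) : ℚ) * fc a 1 (n - k)) n]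
      rw [Finset.sum_range_succ' (fun k => (((a * k).choose k : ℕ) : ℚ) * fc a 1 (n - k)) N]
      have hlast : (((a * n).choose n : ℕ) : ℚ) * fc a 1 (n - n) = (((a * n).choose n : ℕ) : ℚ) := by
        rw [Nat.sub_self, fc_zero, mul_one]
      have hfirst : (((a * 0).choose 0 : ℕ) : ℚ) * fc a 1 (n - 0) = fc a 1 n := by
        simp
      have hmid : ∀ k, n - (k + 1) = N - k := fun k => by omega
      simp only [hmid, hfirst]
      rw [Nat.sub_self, fc_zero, mul_one]
    -- peel the coefficient sum
    have hSsplit : (a : ℚ) * ∑ k ∈ Finset.range (n + 1),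
          PowerSeries.coeff k B * PowerSeries.coeff (n - k) A
        = ∑ k ∈ Finset.range N, (((a * (k + 1)).choose (k + 1) : ℕ) : ℚ) * fc a 1 (N - k) := by
      rw [Finset.sum_range_succ (fun k => PowerSeries.coeff k B * PowerSeries.coeff (n - k) A) n]
      rw [Finset.sum_range_succ' (fun k => PowerSeries.coeff k B * PowerSeries.coeff (n - k) A) N]
      simp only [Nat.sub_self, hA0, hB0, zero_mul, mul_zero, add_zero]
      rw [Finset.mul_sum]
      apply Finset.sum_congr rfl
      intro k hk
      have hkN : k < N := Finset.mem_range.mp hk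
      have hmid : n - (k + 1) = N - k := by omega
      rw [hmid, hB (k + 1) (by omega), hAfc (N - k) (by omega),
          bcoef_eq a ha (k + 1) (by omega)]
      field_simp
    have hF := final_id a ha n (by omega)
    rw [hB n (by omega), bcoef_eq a ha n (by omega), hAfc n (by omega)]
    rw [hKsplit] at hK
    field_simp
    linear_combination (-((a : ℚ) - 1)) * hSsplit + (-((a : ℚ) - 1)) * hK + hF
end

section
/- Fix an integer b ≥ 2 and let 𝒜 be the 2b × 2b matrix over ℤ with rows and columns indexed by pairs (i,R), i ∈ {0, …, b−1}, R ∈ {P,N}, whose entry 𝒜_{(i,R),(j,S)} equals 1 if (i = j and R ≠ S), or (i > j), or (i < j and R = P and S = N), and equals 0 otherwise. Then for every integer r ≥ 1, the sum over all columns (j,S) of the (0,P)-row of 𝒜^{r−1}, i.e. the quantity (1,0,0,…,0) · 𝒜^{r−1} · (1,1,…,1)^T, equals b^{r−1}. -/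
/-- The adjacency matrix `𝒜 = ℰ + 𝒯 + 𝒰` of admissible compositions, with rows
and columns indexed by pairs `(i, R)`, `i ∈ Fin b`, `R ∈ {P, N}` (here `P` is
modelled by `true` and `N` by `false`): the entry at `((i,R), (j,S))` is `1` iff
`(i = j ∧ R ≠ S) ∨ i > j ∨ (i < j ∧ R = P ∧ S = N)`, and `0` otherwise. -/
def calA (b : ℕ) : Matrix (Fin b × Bool) (Fin b × Bool) ℤ :=
  fun p q =>
    if (p.1 = q.1 ∧ p.2 ≠ q.2) ∨ q.1 < p.1 ∨
        (p.1 < q.1 ∧ p.2 = true ∧ q.2 = false) then 1 else 0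

namespace CalARowSum

variable {b : ℕ}

/-- Partial sum of the `R`-entries of `z` with index `< m`. -/
def S (z : Fin b × Bool → ℤ) (R : Bool) (m : ℕ) : ℤ :=
  ∑ k : Fin b, if (k : ℕ) < m then z (k, R) else 0

lemma S_zero (z : Fin b × Bool → ℤ) (R : Bool) : S z R 0 = 0 := by
  simp [S]

lemma S_succ (z : Fin b × Bool → ℤ) (R : Bool) {m : ℕ} (hm : m < b) :
    S z R (m + 1) = S z R m + z (⟨m, hm⟩, R) := by
  unfold S
  rw [show z (⟨m, hm⟩, R) = ∑ k : Fin b, if k = (⟨m, hm⟩ : Fin b) then z (k, R) else 0 from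
    (Fintype.sum_ite_eq' (⟨m, hm⟩ : Fin b) (fun k => z (k, R))).symm, ← Finset.sum_add_distrib]
  apply Finset.sum_congr rfl
  intro k _
  by_cases h2 : (k : ℕ) < m
  · rw [if_pos (by omega), if_pos h2, if_neg (by simp [Fin.ext_iff]; omega), add_zero]
  by_cases h3 : (k : ℕ) = m
  · rw [if_pos (by omega), if_neg h2, if_pos (Fin.ext h3), zero_add]
  · rw [if_neg (by omega), if_neg h2, if_neg (by simp [Fin.ext_iff]; omega), add_zero]

lemma S_top (z : Fin b × Bool → ℤ) (R : Bool) :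
    S z R b = ∑ k : Fin b, z (k, R) := by
  unfold S
  apply Finset.sum_congr rfl
  intro k _
  rw [if_pos k.isLt]

lemma rowsum_true (z : Fin b × Bool → ℤ) (j : Fin b) :
    (∑ q : Fin b × Bool, calA b (j, true) q * z q) = S z false b + S z true (j : ℕ) := by
  rw [Fintype.sum_prod_type]
  unfold S
  rw [← Finset.sum_add_distrib]
  apply Finset.sum_congr rfl
  intro k _
  rw [Fintype.sum_bool]
  have h1 : calA b (j, true) (k, false) = 1 := by
    simp only [calA]
    rw [if_pos]
    rcases lt_trichotomy j k with h | h | h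
    · exact Or.inr (Or.inr ⟨h, by trivial, by trivial⟩)
    · exact Or.inl ⟨h, by simp⟩
    · exact Or.inr (Or.inl h)
  have h2 : calA b (j, true) (k, true) = if (k : ℕ) < (j : ℕ) then 1 else 0 := by
    simp only [calA]
    by_cases h : (k : ℕ) < (j : ℕ)
    · rw [if_pos h, if_pos (Or.inr (Or.inl (Fin.lt_def.mpr h)))]
    · rw [if_neg h, if_neg]
      rintro (⟨_, hne⟩ | hlt | ⟨_, _, hf⟩)
      · exact hne rfl
      · exact h (Fin.lt_def.mp hlt)
      · exact Bool.noConfusion hf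
  rw [h1, h2, if_pos k.isLt]
  split_ifs <;> ring

lemma rowsum_false (z : Fin b × Bool → ℤ) (j : Fin b) :
    (∑ q : Fin b × Bool, calA b (j, false) q * z q)
      = S z true ((j : ℕ) + 1) + S z false (j : ℕ) := by
  rw [Fintype.sum_prod_type]
  unfold S
  rw [← Finset.sum_add_distrib]
  apply Finset.sum_congr rfl
  intro k _
  rw [Fintype.sum_bool]
  have h1 : calA b (j, false) (k, true) = if (k : ℕ) < (j : ℕ) + 1 then 1 else 0 := by
    simp only [calA]
    by_cases h : (k : ℕ) < (j : ℕ) + 1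
    · rw [if_pos h]
      rcases Nat.lt_or_ge (k : ℕ) (j : ℕ) with h' | h'
      · exact if_pos (Or.inr (Or.inl (Fin.lt_def.mpr h')))
      · have : j = k := Fin.ext (by omega)
        exact if_pos (Or.inl ⟨this, by simp⟩)
    · rw [if_neg h, if_neg]
      rintro (⟨he, _⟩ | hlt | ⟨_, hf, _⟩)
      · exact h (by rw [Fin.ext_iff] at he; omega)
      · exact h (by have := Fin.lt_def.mp hlt; omega)
      · exact Bool.noConfusion hf
  have h2 : calA b (j, false) (k, false) = if (k : ℕ) < (j : ℕ) then 1 else 0 := by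
    simp only [calA]
    by_cases h : (k : ℕ) < (j : ℕ)
    · rw [if_pos h, if_pos (Or.inr (Or.inl (Fin.lt_def.mpr h)))]
    · rw [if_neg h, if_neg]
      rintro (⟨_, hne⟩ | hlt | ⟨_, hf, _⟩)
      · exact hne rfl
      · exact h (Fin.lt_def.mp hlt)
      · exact Bool.noConfusion hf
  rw [h1, h2]
  split_ifs <;> ring

lemma S_one {m : ℕ} (hm : m ≤ b) (R : Bool) :
    S (b := b) (fun _ => (1 : ℤ)) R m = m := by
  unfold S
  rw [← Finset.sum_filter, Finset.sum_const, nsmul_eq_mul, mul_one]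
  rcases eq_or_lt_of_le hm with rfl | hm'
  · rw [Finset.filter_true_of_mem (fun k _ => k.isLt), Finset.card_univ, Fintype.card_fin]
  · have he : (Finset.univ.filter fun k : Fin b => (k : ℕ) < m) = Finset.Iio ⟨m, hm'⟩ := by
      ext k
      simp only [Finset.mem_filter, Finset.mem_univ, true_and, Finset.mem_Iio, Fin.lt_def]
    rw [he, Fin.card_Iio]

lemma sum_S (z : Fin b × Bool → ℤ) (R : Bool) :
    ∑ j : Fin b, S z R (j : ℕ) = ∑ k : Fin b, ((b : ℤ) - 1 - (k : ℕ)) * z (k, R) := by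
  unfold S
  rw [Finset.sum_comm]
  apply Finset.sum_congr rfl
  intro k _
  rw [← Finset.sum_filter, Finset.sum_const, nsmul_eq_mul]
  have he : (Finset.univ.filter fun j : Fin b => (k : ℕ) < (j : ℕ)) = Finset.Ioi k := by
    ext j
    simp only [Finset.mem_filter, Finset.mem_univ, true_and, Finset.mem_Ioi, Fin.lt_def]
  rw [he, Fin.card_Ioi]
  have hk := k.isLt
  congr 1
  omega

lemma sum_S_succ (z : Fin b × Bool → ℤ) (R : Bool) :
    ∑ j : Fin b, S z R ((j : ℕ) + 1) = ∑ k : Fin b, ((b : ℤ) - (k : ℕ)) * z (k, R) := by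
  unfold S
  rw [Finset.sum_comm]
  apply Finset.sum_congr rfl
  intro k _
  rw [← Finset.sum_filter, Finset.sum_const, nsmul_eq_mul]
  have he : (Finset.univ.filter fun j : Fin b => (k : ℕ) < (j : ℕ) + 1) = Finset.Ici k := by
    ext j
    simp only [Finset.mem_filter, Finset.mem_univ, true_and, Finset.mem_Ici, Fin.le_def]
    omega
  rw [he, Fin.card_Ici]
  have hk := k.isLt
  congr 1
  omega

/-- The invariant preserved by multiplication by `calA`. -/
def Inv (h0 : 0 < b) (z : Fin b × Bool → ℤ) : Prop :=
  (∀ j : Fin b, ((b : ℤ) - (j : ℕ)) * z (j, true) + S z false (j : ℕ)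
      = b * z (⟨0, h0⟩, true))
  ∧ S z false b = b * z (⟨0, h0⟩, true)

lemma inv_one (h0 : 0 < b) : Inv (b := b) h0 (fun _ => (1 : ℤ)) := by
  constructor
  · intro j
    rw [S_one (le_of_lt j.isLt)]
    ring
  · rw [S_one le_rfl]
    ring

lemma inv_step (h0 : 0 < b) (z : Fin b × Bool → ℤ) (hz : Inv h0 z) :
    Inv h0 (fun p => ∑ q : Fin b × Bool, calA b p q * z q) := by
  obtain ⟨h1, h2⟩ := hz
  set w : Fin b × Bool → ℤ := fun p => ∑ q : Fin b × Bool, calA b p q * z q with hwdef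
  have hwt : ∀ j : Fin b, w (j, true) = S z false b + S z true (j : ℕ) :=
    fun j => rowsum_true z j
  have hwf : ∀ j : Fin b, w (j, false) = S z true ((j : ℕ) + 1) + S z false (j : ℕ) :=
    fun j => rowsum_false z j
  have hw0 : w (⟨0, h0⟩, true) = S z false b := by
    rw [hwt ⟨0, h0⟩]
    show S z false b + S z true 0 = S z false b
    rw [S_zero, add_zero]
  have key : ∀ m, (hm : m < b) →
      ((b : ℤ) - m) * w (⟨m, hm⟩, true) + S w false m = b * w (⟨0, h0⟩, true) := by
    intro m
    induction m with
    | zero =>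
      intro hm
      have h00 : (⟨0, hm⟩ : Fin b) = ⟨0, h0⟩ := rfl
      rw [h00, S_zero]
      push_cast
      ring
    | succ m ih =>
      intro hm
      have hm' : m < b := Nat.lt_of_succ_lt hm
      have IH := ih hm'
      have e1 : w (⟨m + 1, hm⟩, true) = S z false b + (S z true m + z (⟨m, hm'⟩, true)) := by
        rw [hwt ⟨m + 1, hm⟩]
        show S z false b + S z true (m + 1) = _
        rw [S_succ z true hm']
      have e2 : S w false (m + 1) = S w false m + w (⟨m, hm'⟩, false) := S_succ w false hm'
      have e3 : w (⟨m, hm'⟩, false) = (S z true m + z (⟨m, hm'⟩, true)) + S z false m := by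
        rw [hwf ⟨m, hm'⟩]
        show S z true (m + 1) + S z false m = _
        rw [S_succ z true hm']
      have e4 : w (⟨m, hm'⟩, true) = S z false b + S z true m := hwt _
      have i1 := h1 ⟨m, hm'⟩
      rw [e1, e2, e3, hw0]
      rw [e4, hw0] at IH
      show ((b : ℤ) - ((m : ℤ) + 1)) * _ + _ = _
      push_cast at IH i1 ⊢
      linear_combination IH + i1 - h2
  constructor
  · intro j
    have hk := key (j : ℕ) j.isLt
    rwa [Fin.eta] at hk
  · rw [S_top, hw0]
    have hsum : ∑ k : Fin b, w (k, false)
        = ∑ k : Fin b, ((b : ℤ) - (k : ℕ)) * z (k, true)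
          + ∑ k : Fin b, ((b : ℤ) - 1 - (k : ℕ)) * z (k, false) := by
      rw [← sum_S_succ z true, ← sum_S z false, ← Finset.sum_add_distrib]
      exact Finset.sum_congr rfl fun k _ => hwf k
    have ht : ∑ k : Fin b, ((b : ℤ) - (k : ℕ)) * z (k, true)
        = (b : ℤ) * ((b : ℤ) * z (⟨0, h0⟩, true))
          - ∑ k : Fin b, ((b : ℤ) - 1 - (k : ℕ)) * z (k, false) := by
      rw [← sum_S z false]
      have hpt : ∀ k ∈ (Finset.univ : Finset (Fin b)), ((b : ℤ) - (k : ℕ)) * z (k, true)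
          = (b : ℤ) * z (⟨0, h0⟩, true) - S z false (k : ℕ) := fun k _ => by
        linarith [h1 k]
      rw [Finset.sum_congr rfl hpt, Finset.sum_sub_distrib, Finset.sum_const,
        Finset.card_univ, Fintype.card_fin, nsmul_eq_mul]
    rw [hsum, ht, h2]
    ring

end CalARowSum

/-- The sum of the `(0, P)`-row of `𝒜^{r−1}`, i.e. `(1,0,…,0)·𝒜^{r−1}·(1,…,1)ᵀ`,
equals `b^{r−1}` for every `r ≥ 1`. -/
theorem calA_row_sum (b : ℕ) (hb : 2 ≤ b) (r : ℕ) (hr : 1 ≤ r) :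
    ∑ q : Fin b × Bool, ((calA b) ^ (r - 1)) (⟨0, by omega⟩, true) q
      = (b : ℤ) ^ (r - 1) := by
  have h0 : 0 < b := by omega
  suffices h : ∀ n : ℕ,
      (∑ q : Fin b × Bool, ((calA b) ^ n) (⟨0, h0⟩, true) q = (b : ℤ) ^ n) ∧
      CalARowSum.Inv h0 (fun p => ∑ q : Fin b × Bool, ((calA b) ^ n) p q) by
    exact (h (r - 1)).1
  intro n
  induction n with
  | zero =>
    have hone : (fun p => ∑ q : Fin b × Bool, ((calA b) ^ 0) p q)
        = (fun _ => (1 : ℤ)) := by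
      funext p
      rw [pow_zero]
      simp [Matrix.one_apply]
    constructor
    · have := congrFun hone (⟨0, h0⟩, true)
      simpa using this
    · rw [hone]
      exact CalARowSum.inv_one h0
  | succ n ih =>
    obtain ⟨hv, hinv⟩ := ih
    have hstep : (fun p => ∑ q : Fin b × Bool, ((calA b) ^ (n + 1)) p q)
        = (fun p => ∑ q : Fin b × Bool,
            calA b p q * (∑ q' : Fin b × Bool, ((calA b) ^ n) q q')) := by
      funext p
      rw [pow_succ']
      simp only [Matrix.mul_apply]
      rw [Finset.sum_comm]
      apply Finset.sum_congr rfl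
      intro k _
      rw [← Finset.mul_sum]
    constructor
    · have hc := congrFun hstep (⟨0, h0⟩, true)
      rw [hc, CalARowSum.rowsum_true (fun q => ∑ q' : Fin b × Bool, ((calA b) ^ n) q q')
        ⟨0, h0⟩]
      have h2 := hinv.2
      show CalARowSum.S _ false b + CalARowSum.S _ true 0 = _
      rw [CalARowSum.S_zero, add_zero]
      rw [h2]
      show (b : ℤ) * (∑ q : Fin b × Bool, ((calA b) ^ n) (⟨0, h0⟩, true) q) = _
      rw [hv, pow_succ]
      ring
    · rw [hstep]
      exact CalARowSum.inv_step h0 _ hinv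
end
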